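/- arXiv:1511.07279 — 9 statements merged into one kernel-verified Lean document; each statement's English description precedes it below -/
import Mathlib

section
/- For every t > 0, every z₁ > 0 and every z₂ ≥ 0, ∫₀ᵗ (z₁/s)·G(s,z₁)·G(t−s, z₂) ds = G(t, z₁ + z₂). -/
open MeasureTheory Real Filter Set Topology

noncomputable def myPhi (x : ℝ) : ℝ := ∫ y in (0:ℝ)..x, Real.exp (-y^2)

lemma myPhi_hasDerivAt (x : ℝ) : HasDerivAt myPhi (Real.exp (-x^2)) x := by
  have hc : Continuous (fun y : ℝ => Real.exp (-y^2)) := by continuity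
  exact intervalIntegral.integral_hasDerivAt_right (hc.intervalIntegrable _ _)
    (hc.stronglyMeasurable.stronglyMeasurableAtFilter) hc.continuousAt

lemma myPhi_tendsto_atTop : Tendsto myPhi atTop (𝓝 (Real.sqrt π / 2)) := by
  have h : IntegrableOn (fun y : ℝ => Real.exp (-y^2)) (Ioi 0) := by
    simpa using integrableOn_Ioi_exp_neg_mul_sq_iff.mpr (one_pos (α := ℝ))
  have h1 := intervalIntegral_tendsto_integral_Ioi (μ := volume) 0 h tendsto_id
  have h2 : ∫ y in Ioi (0:ℝ), Real.exp (-y^2) = Real.sqrt π / 2 := by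
    simpa using integral_gaussian_Ioi 1
  rw [h2] at h1
  exact h1

lemma myPhi_neg (x : ℝ) : myPhi (-x) = - myPhi x := by
  unfold myPhi
  have h := intervalIntegral.integral_comp_neg (a := (0:ℝ)) (b := -x)
    (fun y => Real.exp (-y^2))
  simp only [even_two, Even.neg_pow, neg_zero, neg_neg] at h
  rw [h, intervalIntegral.integral_symm]

lemma myPhi_zero : myPhi 0 = 0 := by simp [myPhi]

lemma myPhi_tendsto_atBot : Tendsto myPhi atBot (𝓝 (-(Real.sqrt π / 2))) := by
  have h := (myPhi_tendsto_atTop.comp tendsto_neg_atBot_atTop).neg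
  simp only [Function.comp] at h
  have : ∀ x : ℝ, -myPhi (-x) = myPhi x := by intro x; rw [myPhi_neg, neg_neg]
  simpa [this] using h

lemma exp_arg_id (A B T z₁ z₂ : ℝ) (hA : A ≠ 0) (hB : B ≠ 0) (hT : T ≠ 0)
    (hTT : T^2 = A^2 + B^2) :
    -((z₁+z₂)^2/(4*T^2)) - ((z₁ * (B/A) - z₂ * (A/B))/(2*T))^2
      = -(z₁^2/(4*A^2)) - z₂^2/(4*B^2) := by
  field_simp
  linear_combination (4*z₁^2*B^2 + 4*z₂^2*A^2) * hTT

/-- The one-dimensional heat kernel `G(t,z) = (4πt)^{-1/2} exp(-z²/(4t))`. -/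
noncomputable def heatKernel (t z : ℝ) : ℝ :=
  (4 * Real.pi * t) ^ (-(1:ℝ)/2) * Real.exp (-z ^ 2 / (4 * t))

lemma rpow_neg_half_eq {x : ℝ} (hx : 0 < x) :
    (4 * Real.pi * x) ^ (-(1:ℝ)/2) = (2 * Real.sqrt π * Real.sqrt x)⁻¹ := by
  have h4x : (0:ℝ) < 4 * π * x := by positivity
  rw [show (-(1:ℝ)/2) = -(1/2 : ℝ) by ring, Real.rpow_neg h4x.le,
    ← Real.sqrt_eq_rpow]
  congr 1
  rw [show (4 * π * x) = (2*Real.sqrt π)^2 * x by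
      rw [mul_pow, Real.sq_sqrt Real.pi_pos.le]; ring,
    Real.sqrt_mul (by positivity), Real.sqrt_sq (by positivity)]

lemma integrand_intervalIntegrable (t z₁ z₂ : ℝ) (ht : 0 < t) (hz₁ : 0 < z₁) (hz₂ : 0 ≤ z₂) :
    IntervalIntegrable
      (fun s => (z₁ / s) * heatKernel s z₁ * heatKernel (t - s) z₂) volume 0 t := by
  rw [intervalIntegrable_iff_integrableOn_Ioc_of_le ht.le,
    integrableOn_Ioc_iff_integrableOn_Ioo]
  set M : ℝ := 64 * Real.sqrt t / z₁^3 with hM_def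
  have hg : IntegrableOn (fun s => M * (t - s) ^ (-(1:ℝ)/2)) (Ioo 0 t) := by
    have h1 : IntervalIntegrable (fun x : ℝ => x ^ (-(1:ℝ)/2)) volume 0 t :=
      intervalIntegral.intervalIntegrable_rpow' (by norm_num)
    have h2 := (h1.comp_sub_left t).symm.const_mul M
    simp only [sub_zero, sub_self] at h2
    rw [intervalIntegrable_iff_integrableOn_Ioc_of_le ht.le,
      integrableOn_Ioc_iff_integrableOn_Ioo] at h2
    exact h2
  apply Integrable.mono' hg
  · -- measurability
    apply Measurable.aestronglyMeasurable
    unfold heatKernel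
    fun_prop
  · rw [ae_restrict_iff' measurableSet_Ioo]
    filter_upwards with s hs
    have hs0 : 0 < s := hs.1
    have hst : 0 < t - s := sub_pos.mpr hs.2
    have key1 : heatKernel (t - s) z₂ ≤ (t - s) ^ (-(1:ℝ)/2) := by
      rw [heatKernel]
      have e1 : (4*π*(t-s)) ^ (-(1:ℝ)/2) = (4*π)^(-(1:ℝ)/2) * (t-s)^(-(1:ℝ)/2) := by
        rw [← Real.mul_rpow (by positivity) hst.le]
      calc (4*π*(t-s)) ^ (-(1:ℝ)/2) * Real.exp (-z₂^2/(4*(t-s)))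
          ≤ (4*π*(t-s)) ^ (-(1:ℝ)/2) * 1 := by
            apply mul_le_mul_of_nonneg_left _ (by positivity)
            apply Real.exp_le_one_iff.mpr
            apply div_nonpos_of_nonpos_of_nonneg (neg_nonpos.mpr (by positivity)) (by positivity)
        _ = (4*π)^(-(1:ℝ)/2) * (t-s)^(-(1:ℝ)/2) := by rw [mul_one, e1]
        _ ≤ 1 * (t-s)^(-(1:ℝ)/2) := by
            apply mul_le_mul_of_nonneg_right _ (by positivity)
            exact Real.rpow_le_one_of_one_le_of_nonpos
              (by nlinarith [Real.pi_gt_three]) (by norm_num)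
        _ = (t-s)^(-(1:ℝ)/2) := one_mul _
    have key2 : z₁ / s * heatKernel s z₁ ≤ M := by
      rw [heatKernel]
      have hexp : Real.exp (-z₁^2 / (4*s)) ≤ 64 * s^2 / z₁^4 := by
        have hsq : Real.exp (z₁^2/(4*s)) = (Real.exp (z₁^2/(8*s)))^2 := by
          rw [show z₁^2/(4*s) = z₁^2/(8*s) + z₁^2/(8*s) by ring, Real.exp_add]
          exact (sq (Real.exp (z₁^2/(8*s)))).symm
        have hlow : z₁^4/(64*s^2) ≤ Real.exp (z₁^2/(4*s)) := by
          have h := Real.add_one_le_exp (z₁^2/(8*s))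
          have hx : 0 < z₁^2/(8*s) := by positivity
          have hxeq : z₁^4/(64*s^2) = (z₁^2/(8*s))^2 := by field_simp; ring
          have hmul := mul_self_le_mul_self (by positivity : (0:ℝ) ≤ z₁^2/(8*s) + 1) h
          rw [hsq, hxeq]
          nlinarith [hmul, hx]
        calc Real.exp (-z₁^2 / (4*s)) = (Real.exp (z₁^2/(4*s)))⁻¹ := by
              rw [← Real.exp_neg]; congr 1; ring
          _ ≤ (z₁^4/(64*s^2))⁻¹ := inv_anti₀ (by positivity) hlow
          _ = 64 * s^2 / z₁^4 := by rw [inv_div]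
      have hbase : (4*π*s) ^ (-(1:ℝ)/2) ≤ s ^ (-(1:ℝ)/2) := by
        have e1 : (4*π*s) ^ (-(1:ℝ)/2) = (4*π)^(-(1:ℝ)/2) * s^(-(1:ℝ)/2) := by
          rw [← Real.mul_rpow (by positivity) hs0.le]
        rw [e1]
        calc (4*π)^(-(1:ℝ)/2) * s^(-(1:ℝ)/2) ≤ 1 * s^(-(1:ℝ)/2) := by
              apply mul_le_mul_of_nonneg_right _ (by positivity)
              exact Real.rpow_le_one_of_one_le_of_nonpos
                (by nlinarith [Real.pi_gt_three]) (by norm_num)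
          _ = s^(-(1:ℝ)/2) := one_mul _
      have hsr : (s:ℝ) ^ (-(1:ℝ)/2) = (Real.sqrt s)⁻¹ := by
        rw [show (-(1:ℝ)/2) = -(1/2:ℝ) by ring, Real.rpow_neg hs0.le, Real.sqrt_eq_rpow]
      have hA : 0 < Real.sqrt s := Real.sqrt_pos.mpr hs0
      have hA2 : Real.sqrt s ^ 2 = s := Real.sq_sqrt hs0.le
      calc z₁ / s * ((4*π*s) ^ (-(1:ℝ)/2) * Real.exp (-z₁^2 / (4*s)))
          ≤ z₁ / s * (s ^ (-(1:ℝ)/2) * (64 * s^2 / z₁^4)) := by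
            apply mul_le_mul_of_nonneg_left _ (by positivity)
            apply mul_le_mul hbase hexp (Real.exp_pos _).le (by positivity)
        _ = 64 * Real.sqrt s / z₁^3 := by
            rw [hsr]
            field_simp
            linear_combination (-1) * hA2
        _ ≤ M := by
            rw [hM_def]
            gcongr
            exact hs.2.le
    have hnn : 0 ≤ z₁ / s * heatKernel s z₁ * heatKernel (t - s) z₂ := by
      unfold heatKernel; positivity
    rw [Real.norm_eq_abs, abs_of_nonneg hnn]
    have hnn2 : (0:ℝ) ≤ heatKernel (t-s) z₂ := by unfold heatKernel; positivity
    calc z₁ / s * heatKernel s z₁ * heatKernel (t - s) z₂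
        ≤ M * ((t-s) ^ (-(1:ℝ)/2)) := by
          apply mul_le_mul key2 key1 hnn2 (by positivity)
      _ = M * (t - s) ^ (-(1:ℝ)/2) := rfl

/-- For `t > 0`, `z₁ > 0`, `z₂ ≥ 0`:
`∫₀ᵗ (z₁/s)·G(s,z₁)·G(t−s,z₂) ds = G(t, z₁+z₂)`. -/
theorem stmt_1 (t z₁ z₂ : ℝ) (ht : 0 < t) (hz₁ : 0 < z₁) (hz₂ : 0 ≤ z₂) :
    ∫ s in (0:ℝ)..t, (z₁ / s) * heatKernel s z₁ * heatKernel (t - s) z₂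
      = heatKernel t (z₁ + z₂) := by
  set T := Real.sqrt t with hT_def
  have hT : 0 < T := Real.sqrt_pos.mpr ht
  have hT2 : T ^ 2 = t := Real.sq_sqrt ht.le
  set P := Real.sqrt π with hP_def
  have hP : 0 < P := Real.sqrt_pos.mpr Real.pi_pos
  have hP2 : P ^ 2 = π := Real.sq_sqrt Real.pi_pos.le
  set a := (z₁ + z₂)^2 / (4*t) with ha_def
  set b := (z₁ - z₂)^2 / (4*t) with hb_def
  set p : ℝ → ℝ := fun s => Real.sqrt (t - s) / Real.sqrt s with hp_def
  set q : ℝ → ℝ := fun s => Real.sqrt s / Real.sqrt (t - s) with hq_def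
  set u : ℝ → ℝ := fun s => (z₁ * p s - z₂ * q s) / (2 * T) with hu_def
  set v : ℝ → ℝ := fun s => (z₁ * p s + z₂ * q s) / (2 * T) with hv_def
  set k : ℝ := 1 / (2 * π * T) with hk_def
  set F : ℝ → ℝ := fun s =>
    -k * (Real.exp (-a) * myPhi (u s) + Real.exp (-b) * myPhi (v s)) with hF_def
  -- derivatives of p and q
  have hp' : ∀ s ∈ Ioo (0:ℝ) t, HasDerivAt p
      (-(t / (2 * s * Real.sqrt s * Real.sqrt (t - s)))) s := by
    intro s hs
    have hs0 : 0 < s := hs.1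
    have hst : 0 < t - s := sub_pos.mpr hs.2
    have hA : 0 < Real.sqrt s := Real.sqrt_pos.mpr hs0
    have hB : 0 < Real.sqrt (t - s) := Real.sqrt_pos.mpr hst
    have hA2 : Real.sqrt s ^ 2 = s := Real.sq_sqrt hs0.le
    have hB2 : Real.sqrt (t - s) ^ 2 = t - s := Real.sq_sqrt hst.le
    have h1 : HasDerivAt (fun x : ℝ => Real.sqrt (t - x))
        (1 / (2 * Real.sqrt (t - s)) * (-1)) s :=
      (Real.hasDerivAt_sqrt hst.ne').comp s (((hasDerivAt_id s).const_sub t))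
    have h2 : HasDerivAt Real.sqrt (1 / (2 * Real.sqrt s)) s := Real.hasDerivAt_sqrt hs0.ne'
    have h3 := h1.div h2 hA.ne'
    refine h3.congr_deriv (Eq.symm ?_)
    rw [Real.sq_sqrt hs0.le]
    field_simp
    linear_combination (1:ℝ)*hA2
      + (1:ℝ)*hB2
  have hq' : ∀ s ∈ Ioo (0:ℝ) t, HasDerivAt q
      (t / (2 * (t - s) * Real.sqrt (t - s) * Real.sqrt s)) s := by
    intro s hs
    have hs0 : 0 < s := hs.1
    have hst : 0 < t - s := sub_pos.mpr hs.2
    have hA : 0 < Real.sqrt s := Real.sqrt_pos.mpr hs0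
    have hB : 0 < Real.sqrt (t - s) := Real.sqrt_pos.mpr hst
    have hA2 : Real.sqrt s ^ 2 = s := Real.sq_sqrt hs0.le
    have hB2 : Real.sqrt (t - s) ^ 2 = t - s := Real.sq_sqrt hst.le
    have h1 : HasDerivAt (fun x : ℝ => Real.sqrt (t - x))
        (1 / (2 * Real.sqrt (t - s)) * (-1)) s :=
      (Real.hasDerivAt_sqrt hst.ne').comp s (((hasDerivAt_id s).const_sub t))
    have h2 : HasDerivAt Real.sqrt (1 / (2 * Real.sqrt s)) s := Real.hasDerivAt_sqrt hs0.ne'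
    have h3 := h2.div h1 hB.ne'
    refine h3.congr_deriv (Eq.symm ?_)
    rw [Real.sq_sqrt hst.le]
    field_simp
    linear_combination (-1:ℝ)*hA2
      + (-1:ℝ)*hB2
  -- derivative of F equals the integrand
  have hFderiv : ∀ s ∈ Ioo (0:ℝ) t, HasDerivAt F
      ((z₁ / s) * heatKernel s z₁ * heatKernel (t - s) z₂) s := by
    intro s hs
    have hs0 : 0 < s := hs.1
    have hst : 0 < t - s := sub_pos.mpr hs.2
    set A := Real.sqrt s with hA_def
    set B := Real.sqrt (t - s) with hB_def
    have hA : 0 < A := Real.sqrt_pos.mpr hs0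
    have hB : 0 < B := Real.sqrt_pos.mpr hst
    have hA2 : A ^ 2 = s := Real.sq_sqrt hs0.le
    have hB2 : B ^ 2 = t - s := Real.sq_sqrt hst.le
    have hTT : T^2 = A^2 + B^2 := by rw [hA2, hB2, hT2]; ring
    have hus : HasDerivAt u
        ((z₁ * (-(t / (2 * s * A * B))) - z₂ * (t / (2 * (t-s) * B * A))) / (2*T)) s :=
      (((hp' s hs).const_mul z₁).sub ((hq' s hs).const_mul z₂)).div_const (2*T)
    have hvs : HasDerivAt v
        ((z₁ * (-(t / (2 * s * A * B))) + z₂ * (t / (2 * (t-s) * B * A))) / (2*T)) s :=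
      (((hp' s hs).const_mul z₁).add ((hq' s hs).const_mul z₂)).div_const (2*T)
    have hPhiu := (myPhi_hasDerivAt (u s)).comp s hus
    have hPhiv := (myPhi_hasDerivAt (v s)).comp s hvs
    have hFd := ((hPhiu.const_mul (Real.exp (-a))).add
      (hPhiv.const_mul (Real.exp (-b)))).const_mul (-k)
    simp only [Function.comp] at hFd
    refine hFd.congr_deriv (Eq.symm ?_)
    have e1 : -a - (u s)^2 = -(z₁^2/(4*s)) - z₂^2/(4*(t-s)) := by
      have h := exp_arg_id A B T z₁ z₂ hA.ne' hB.ne' hT.ne' hTT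
      rw [hA2, hB2, hT2] at h
      simp only [hu_def, hp_def, hq_def, ha_def]
      linear_combination h
    have e2 : -b - (v s)^2 = -(z₁^2/(4*s)) - z₂^2/(4*(t-s)) := by
      have h := exp_arg_id A B T z₁ (-z₂) hA.ne' hB.ne' hT.ne' hTT
      rw [hA2, hB2, hT2] at h
      simp only [hv_def, hp_def, hq_def, hb_def]
      linear_combination h
    have hexpu : Real.exp (-a) * Real.exp (-(u s)^2)
        = Real.exp (-(z₁^2/(4*s)) - z₂^2/(4*(t-s))) := by
      rw [← Real.exp_add]
      exact congrArg Real.exp (by linarith [e1])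
    have hexpv : Real.exp (-b) * Real.exp (-(v s)^2)
        = Real.exp (-(z₁^2/(4*s)) - z₂^2/(4*(t-s))) := by
      rw [← Real.exp_add]
      exact congrArg Real.exp (by linarith [e2])
    rw [heatKernel, heatKernel, rpow_neg_half_eq hs0, rpow_neg_half_eq hst]
    rw [← hP_def, ← hA_def, ← hB_def]
    rw [← mul_assoc (Real.exp (-a)), ← mul_assoc (Real.exp (-b)), hexpu, hexpv]
    rw [show Real.exp (-(z₁^2/(4*s)) - z₂^2/(4*(t-s)))
        = Real.exp (-z₁ ^ 2 / (4 * s)) * Real.exp (-z₂ ^ 2 / (4 * (t - s))) by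
      rw [← Real.exp_add]; congr 1; ring]
    set E1 := Real.exp (-z₁ ^ 2 / (4 * s)) with hE1_def
    set E2 := Real.exp (-z₂ ^ 2 / (4 * (t - s))) with hE2_def
    rw [hk_def, ← hT2, ← hP2]
    field_simp
    ring
  -- interval integrability of the integrand
  have hint := integrand_intervalIntegrable t z₁ z₂ ht hz₁ hz₂
  -- limit at 0⁺
  have hsqrtpos : Tendsto Real.sqrt (𝓝[>] (0:ℝ)) (𝓝[>] (0:ℝ)) := by
    apply tendsto_nhdsWithin_of_tendsto_nhds_of_eventually_within
    · exact ((Real.continuous_sqrt.tendsto' 0 0 (by simp))).mono_left nhdsWithin_le_nhds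
    · filter_upwards [self_mem_nhdsWithin] with x hx using Real.sqrt_pos.mpr hx
  have hlim0 : Tendsto F (𝓝[>] (0:ℝ))
      (𝓝 (-k * (Real.exp (-a) * (P/2) + Real.exp (-b) * (P/2)))) := by
    have hA0 : Tendsto (fun s : ℝ => Real.sqrt s) (𝓝[>] (0:ℝ)) (𝓝[>] (0:ℝ)) := hsqrtpos
    have hB0 : Tendsto (fun s : ℝ => Real.sqrt (t - s)) (𝓝[>] (0:ℝ)) (𝓝 T) := by
      have : Tendsto (fun s : ℝ => Real.sqrt (t - s)) (𝓝 (0:ℝ)) (𝓝 T) := by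
        apply (Real.continuous_sqrt.comp (continuous_const.sub continuous_id)).tendsto' 0 T
        simp [hT_def]
      exact this.mono_left nhdsWithin_le_nhds
    have hp0 : Tendsto p (𝓝[>] (0:ℝ)) atTop := by
      have h := Filter.Tendsto.pos_mul_atTop hT hB0 hA0.inv_tendsto_nhdsGT_zero
      exact h.congr (fun s => by simp [hp_def, div_eq_mul_inv])
    have hq0 : Tendsto q (𝓝[>] (0:ℝ)) (𝓝 0) := by
      have h := Filter.Tendsto.div (hA0.mono_right nhdsWithin_le_nhds) hB0 hT.ne'
      simpa [hq_def, zero_div, Pi.div_def] using h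
    have hu0 : Tendsto u (𝓝[>] (0:ℝ)) atTop := by
      have h1 : Tendsto (fun s : ℝ => z₁ * p s) (𝓝[>] (0:ℝ)) atTop :=
        hp0.const_mul_atTop hz₁
      have h2 : Tendsto (fun s : ℝ => -(z₂ * q s)) (𝓝[>] (0:ℝ)) (𝓝 0) := by
        simpa using ((hq0.const_mul z₂).neg)
      have h3 := tendsto_atTop_add_right_of_le' (𝓝[>] (0:ℝ)) (-1 : ℝ) h1
        (h2.eventually (eventually_ge_nhds (by norm_num)))
      have h4 := h3.atTop_div_const (show (0:ℝ) < 2*T by positivity)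
      exact h4.congr (fun s => by rw [hu_def]; ring_nf)
    have hv0 : Tendsto v (𝓝[>] (0:ℝ)) atTop := by
      have h1 : Tendsto (fun s : ℝ => z₁ * p s) (𝓝[>] (0:ℝ)) atTop :=
        hp0.const_mul_atTop hz₁
      have h2 : Tendsto (fun s : ℝ => z₂ * q s) (𝓝[>] (0:ℝ)) (𝓝 0) := by
        simpa using (hq0.const_mul z₂)
      have h3 := tendsto_atTop_add_right_of_le' (𝓝[>] (0:ℝ)) (-1 : ℝ) h1
        (h2.eventually (eventually_ge_nhds (by norm_num)))
      have h4 := h3.atTop_div_const (show (0:ℝ) < 2*T by positivity)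
      exact h4.congr (fun s => by rw [hv_def])
    have hPu := myPhi_tendsto_atTop.comp hu0
    have hPv := myPhi_tendsto_atTop.comp hv0
    rw [hF_def]
    exact ((hPu.const_mul (Real.exp (-a))).add
      (hPv.const_mul (Real.exp (-b)))).const_mul (-k)
  -- limit at t⁻
  have hlimt : Tendsto F (𝓝[<] t)
      (𝓝 (-k * (Real.exp (-a) * (-(P/2)) + Real.exp (-b) * (P/2)))) := by
    have hts : Tendsto (fun s : ℝ => t - s) (𝓝[<] t) (𝓝[>] (0:ℝ)) := by
      apply tendsto_nhdsWithin_of_tendsto_nhds_of_eventually_within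
      · exact ((continuous_const.sub continuous_id).tendsto' t 0 (by simp)).mono_left
          nhdsWithin_le_nhds
      · filter_upwards [self_mem_nhdsWithin] with x hx using sub_pos.mpr hx.out
    have hBt : Tendsto (fun s : ℝ => Real.sqrt (t - s)) (𝓝[<] t) (𝓝[>] (0:ℝ)) :=
      hsqrtpos.comp hts
    have hAt : Tendsto (fun s : ℝ => Real.sqrt s) (𝓝[<] t) (𝓝 T) :=
      ((Real.continuous_sqrt.tendsto' t T (by simp [hT_def]))).mono_left nhdsWithin_le_nhds
    have hpt : Tendsto p (𝓝[<] t) (𝓝 0) := by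
      have h := Filter.Tendsto.div (hBt.mono_right nhdsWithin_le_nhds) hAt hT.ne'
      simpa [hp_def, zero_div, Pi.div_def] using h
    have hqt : Tendsto q (𝓝[<] t) atTop := by
      have h := Filter.Tendsto.pos_mul_atTop hT hAt hBt.inv_tendsto_nhdsGT_zero
      exact h.congr (fun s => by simp [hq_def, div_eq_mul_inv])
    rcases hz₂.eq_or_lt with heq | hpos
    · -- z₂ = 0
      have hab : a = b := by rw [ha_def, hb_def, ← heq]; ring_nf
      have hut : Tendsto u (𝓝[<] t) (𝓝 0) := by
        have h := ((hpt.const_mul z₁).sub (tendsto_const_nhds (x := (0:ℝ)))).div_const (2*T)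
        have h' : Tendsto (fun s : ℝ => (z₁ * p s - 0) / (2*T)) (𝓝[<] t) (𝓝 0) := by
          simpa using h
        exact h'.congr (fun s => by rw [hu_def, ← heq]; ring_nf)
      have hvt : Tendsto v (𝓝[<] t) (𝓝 0) := by
        have h := ((hpt.const_mul z₁).add (tendsto_const_nhds (x := (0:ℝ)))).div_const (2*T)
        have h' : Tendsto (fun s : ℝ => (z₁ * p s + 0) / (2*T)) (𝓝[<] t) (𝓝 0) := by
          simpa using h
        exact h'.congr (fun s => by rw [hv_def, ← heq]; ring_nf)
      have hPc : ContinuousAt myPhi 0 := (myPhi_hasDerivAt 0).continuousAt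
      have hPu : Tendsto (fun s => myPhi (u s)) (𝓝[<] t) (𝓝 (myPhi 0)) :=
        (hPc.tendsto).comp hut
      have hPv : Tendsto (fun s => myPhi (v s)) (𝓝[<] t) (𝓝 (myPhi 0)) :=
        (hPc.tendsto).comp hvt
      have hmain := ((hPu.const_mul (Real.exp (-a))).add
        (hPv.const_mul (Real.exp (-b)))).const_mul (-k)
      have h0 : (-k * (Real.exp (-a) * (-(P/2)) + Real.exp (-b) * (P/2)))
          = -k * (Real.exp (-a) * myPhi 0 + Real.exp (-b) * myPhi 0) := by
        rw [myPhi_zero, hab]; ring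
      rw [hF_def, h0]
      exact hmain
    · -- 0 < z₂
      have hut : Tendsto u (𝓝[<] t) atBot := by
        have h1 : Tendsto (fun s : ℝ => z₂ * q s) (𝓝[<] t) atTop :=
          hqt.const_mul_atTop hpos
        have h2 : Tendsto (fun s : ℝ => -(z₁ * p s)) (𝓝[<] t) (𝓝 0) := by
          simpa using ((hpt.const_mul z₁).neg)
        have h3 := tendsto_atTop_add_right_of_le' (𝓝[<] t) (-1 : ℝ) h1
          (h2.eventually (eventually_ge_nhds (by norm_num)))
        have h4 := h3.atTop_div_const (show (0:ℝ) < 2*T by positivity)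
        have h5 := tendsto_neg_atTop_atBot.comp h4
        exact h5.congr (fun s => by rw [hu_def]; simp only [Function.comp]; ring_nf)
      have hvt : Tendsto v (𝓝[<] t) atTop := by
        have h1 : Tendsto (fun s : ℝ => z₂ * q s) (𝓝[<] t) atTop :=
          hqt.const_mul_atTop hpos
        have h2 : Tendsto (fun s : ℝ => z₁ * p s) (𝓝[<] t) (𝓝 0) := by
          simpa using (hpt.const_mul z₁)
        have h3 := tendsto_atTop_add_right_of_le' (𝓝[<] t) (-1 : ℝ) h1
          (h2.eventually (eventually_ge_nhds (by norm_num)))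
        have h4 := h3.atTop_div_const (show (0:ℝ) < 2*T by positivity)
        exact h4.congr (fun s => by rw [hv_def]; ring_nf)
      have hPu := myPhi_tendsto_atBot.comp hut
      have hPv := myPhi_tendsto_atTop.comp hvt
      rw [hF_def]
      exact ((hPu.const_mul (Real.exp (-a))).add
        (hPv.const_mul (Real.exp (-b)))).const_mul (-k)
  rw [intervalIntegral.integral_eq_sub_of_hasDerivAt_of_tendsto ht hFderiv hint hlim0 hlimt]
  rw [heatKernel, rpow_neg_half_eq ht]
  rw [show -(z₁+z₂)^2/(4*t) = -a by rw [ha_def]; ring]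
  rw [hk_def, ← hP_def, ← hT_def]
  field_simp
  ring_nf
  rw [hP2]
  ring
end

section
/- For every t > 0 and all z₁, z₂ > 0, ∫₀ᵗ (z₁/s)·G(s,z₁)·(z₂/(t−s))·G(t−s,z₂) ds = ((z₁+z₂)/t)·G(t, z₁+z₂). -/
open MeasureTheory Real

open Set

noncomputable def myU (t a b s : ℝ) : ℝ := (a*(t-s) - b*s) / Real.sqrt (t*s*(t-s))
noncomputable def myU' (t a b s : ℝ) : ℝ :=
  -(t^2*(a*(t-s)+b*s)) / (2 * Real.sqrt (t*s*(t-s))^3)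
noncomputable def myG (t a b v : ℝ) : ℝ :=
  (Real.exp (-(a+b)^2/(4*t)) / (4*Real.pi)) *
    ((a+b)/(t*Real.sqrt t) + (b-a)*v/(t*Real.sqrt (t*v^2+4*(a*b)))) * Real.exp (-v^2/4)

lemma myU_hasDeriv (t a b : ℝ) (ht : 0 < t) {s : ℝ} (hs : s ∈ Ioo 0 t) :
    HasDerivAt (myU t a b) (myU' t a b s) s := by
  obtain ⟨hs0, hst⟩ := hs
  have hts : 0 < t - s := by linarith
  have hP : (0:ℝ) < t*s*(t-s) := by positivity
  have hq : (0:ℝ) < Real.sqrt (t*s*(t-s)) := Real.sqrt_pos.2 hP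
  have hq2 : (Real.sqrt (t*s*(t-s)))^2 = t*s*(t-s) := Real.sq_sqrt hP.le
  have hPd : HasDerivAt (fun x => t*x*(t-x)) (t*(t-2*s)) s := by
    have h1 := (((hasDerivAt_id s).const_mul t).mul ((hasDerivAt_const s t).sub (hasDerivAt_id s)))
    simp only [id] at h1
    refine h1.congr_deriv ?_
    simp only [Pi.sub_apply, id]; ring
  have hsq : HasDerivAt (fun x => Real.sqrt (t*x*(t-x)))
      (t*(t-2*s) / (2 * Real.sqrt (t*s*(t-s)))) s := by
    have h2 := (Real.hasDerivAt_sqrt hP.ne').comp s hPd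
    refine h2.congr_deriv ?_
    ring
  have hnum : HasDerivAt (fun x => a*(t-x) - b*x) (-(a+b)) s := by
    have h3 := (((hasDerivAt_const s t).sub (hasDerivAt_id s)).const_mul a).sub
        ((hasDerivAt_id s).const_mul b)
    simp only [id] at h3
    refine h3.congr_deriv ?_
    ring
  have hdiv := hnum.div hsq hq.ne'
  refine hdiv.congr_deriv ?_
  rw [myU']
  set q := Real.sqrt (t*s*(t-s)) with hqdef
  rw [div_eq_div_iff (by positivity) (by positivity)]
  have key : (-(a+b)*q - (a*(t-s)-b*s)*(t*(t-2*s)/(2*q)))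
      = (-2*(a+b)*q^2 - (a*(t-s)-b*s)*(t*(t-2*s)))/(2*q) := by
    field_simp
  rw [key]
  have key2 : (-2*(a+b)*q^2 - (a*(t-s)-b*s)*(t*(t-2*s)))/(2*q) * (2*q^3)
      = (-2*(a+b)*q^2 - (a*(t-s)-b*s)*(t*(t-2*s)))*q^2 := by
    field_simp
  rw [key2]
  linear_combination (-2*(a+b)*q^2) * hq2

lemma myU'_neg (t a b : ℝ) (ht : 0 < t) (ha : 0 < a) (hb : 0 < b) {s : ℝ} (hs : s ∈ Ioo 0 t) :
    myU' t a b s < 0 := by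
  obtain ⟨hs0, hst⟩ := hs
  have hts : 0 < t - s := by linarith
  have hP : (0:ℝ) < t*s*(t-s) := by positivity
  have hq : (0:ℝ) < Real.sqrt (t*s*(t-s)) := Real.sqrt_pos.2 hP
  rw [myU']
  apply div_neg_of_neg_of_pos
  · have : 0 < t ^ 2 * (a * (t - s) + b * s) := by positivity
    linarith
  · positivity

-- √(t * (U s)^2 + 4ab) = (a(t-s)+bs)/√(s(t-s))
lemma myU_sqrt (t a b : ℝ) (ht : 0 < t) (ha : 0 < a) (hb : 0 < b) {s : ℝ} (hs : s ∈ Ioo 0 t) :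
    Real.sqrt (t * (myU t a b s)^2 + 4*(a*b))
      = (a*(t-s)+b*s) / Real.sqrt (s*(t-s)) := by
  obtain ⟨hs0, hst⟩ := hs
  have hts : 0 < t - s := by linarith
  have hP : (0:ℝ) < t*s*(t-s) := by positivity
  have hq : (0:ℝ) < Real.sqrt (t*s*(t-s)) := Real.sqrt_pos.2 hP
  have hq2 : (Real.sqrt (t*s*(t-s)))^2 = t*s*(t-s) := Real.sq_sqrt hP.le
  have hR : (0:ℝ) < s*(t-s) := by positivity
  have hr : (0:ℝ) < Real.sqrt (s*(t-s)) := Real.sqrt_pos.2 hR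
  have hr2 : (Real.sqrt (s*(t-s)))^2 = s*(t-s) := Real.sq_sqrt hR.le
  have harg : t * (myU t a b s)^2 + 4*(a*b) = ((a*(t-s)+b*s) / Real.sqrt (s*(t-s)))^2 := by
    rw [myU]
    rw [div_pow, div_pow]
    rw [hq2, hr2]
    field_simp
    ring
  rw [harg, Real.sqrt_sq (by positivity)]

lemma myU_injOn (t a b : ℝ) (ht : 0 < t) (ha : 0 < a) (hb : 0 < b) :
    InjOn (myU t a b) (Ioo 0 t) := by
  have hanti : StrictAntiOn (myU t a b) (Ioo 0 t) := by
    apply strictAntiOn_of_deriv_neg (convex_Ioo 0 t)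
    · exact fun s hs => ((myU_hasDeriv t a b ht hs).continuousAt).continuousWithinAt
    · intro s hs
      rw [interior_Ioo] at hs
      rw [(myU_hasDeriv t a b ht hs).deriv]
      exact myU'_neg t a b ht ha hb hs
  exact hanti.injOn

lemma myU_surj (t a b : ℝ) (ht : 0 < t) (ha : 0 < a) (hb : 0 < b) :
    myU t a b '' (Ioo 0 t) = univ := by
  apply eq_univ_of_forall
  intro v
  have ht' : (0:ℝ) < Real.sqrt t := Real.sqrt_pos.2 ht
  have ht2 : (Real.sqrt t)^2 = t := Real.sq_sqrt ht.le
  obtain ⟨D, hDpos, hD2⟩ : ∃ D : ℝ, 0 < D ∧ D^2 = t*v^2 + 4*(a*b) :=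
    ⟨Real.sqrt (t*v^2 + 4*(a*b)), Real.sqrt_pos.2 (by positivity),
      Real.sq_sqrt (by positivity)⟩
  have hDv : v * Real.sqrt t < D := by
    rcases le_or_gt v 0 with hv | hv
    · have : v * Real.sqrt t ≤ 0 := mul_nonpos_of_nonpos_of_nonneg hv ht'.le
      linarith
    · by_contra hcon
      push_neg at hcon
      have h1 : 0 < v * Real.sqrt t := by positivity
      nlinarith
  obtain ⟨σ, hσpos, h2bσ⟩ : ∃ σ : ℝ, 0 < σ ∧ 2*b*σ = D - v*Real.sqrt t :=
    ⟨(D - v*Real.sqrt t)/(2*b), by apply div_pos (by linarith) (by positivity), by field_simp⟩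
  have h4 : 4*b*(b*σ^2 + v*Real.sqrt t*σ - a) = 0 := by
    linear_combination (2*b*σ + (D - v*Real.sqrt t) + 2*v*Real.sqrt t) * h2bσ
      + hD2 + (-(v^2)) * ht2
  have hquad : b*σ^2 + v*Real.sqrt t*σ - a = 0 := by
    rcases mul_eq_zero.mp h4 with h | h
    · norm_num at h; linarith
    · exact h
  have hσ2 : (0:ℝ) < 1 + σ^2 := by positivity
  refine ⟨t*σ^2/(1+σ^2), ⟨by positivity, ?_⟩, ?_⟩
  · rw [div_lt_iff₀ hσ2]
    nlinarith
  · have hts : t - t*σ^2/(1+σ^2) = t/(1+σ^2) := by field_simp; ring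
    have hprod : t*(t*σ^2/(1+σ^2))*(t - t*σ^2/(1+σ^2))
        = (t*Real.sqrt t*σ/(1+σ^2))^2 := by
      rw [hts]
      field_simp
      linear_combination (-1) * ht2
    have hsqrt : Real.sqrt (t*(t*σ^2/(1+σ^2))*(t - t*σ^2/(1+σ^2)))
        = t*Real.sqrt t*σ/(1+σ^2) := by
      rw [hprod, Real.sqrt_sq (by positivity)]
    rw [myU, hsqrt, hts]
    rw [div_eq_iff (by positivity)]
    field_simp
    linear_combination (-1) * hquad

lemma hk_sqrt (τ : ℝ) (hτ : 0 < τ) :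
    (4 * Real.pi * τ) ^ (-(1:ℝ)/2) = (2 * Real.sqrt Real.pi * Real.sqrt τ)⁻¹ := by
  have hpi := Real.pi_pos
  rw [neg_div, Real.rpow_neg (by positivity), ← Real.sqrt_eq_rpow]
  congr 1
  rw [show 4*Real.pi*τ = 4*(Real.pi*τ) by ring, Real.sqrt_mul (by norm_num),
    Real.sqrt_mul hpi.le, show (4:ℝ) = 2^2 by norm_num, Real.sqrt_sq (by norm_num)]
  ring

lemma pointwise_eq (t a b : ℝ) (ht : 0 < t) (ha : 0 < a) (hb : 0 < b) {s : ℝ}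
    (hs : s ∈ Ioo 0 t) :
    |myU' t a b s| • myG t a b (myU t a b s)
      = (a/s) * heatKernel s a * ((b/(t-s)) * heatKernel (t-s) b) := by
  obtain ⟨hs0, hst⟩ := hs
  have hts : 0 < t - s := by linarith
  have hpi := Real.pi_pos
  have hsplit : Real.sqrt (t*s*(t-s)) = Real.sqrt t * Real.sqrt (s*(t-s)) := by
    rw [show t*s*(t-s) = t*(s*(t-s)) by ring, Real.sqrt_mul ht.le]
  rw [smul_eq_mul, myG, myU_sqrt t a b ht ha hb ⟨hs0, hst⟩,
    abs_of_neg (myU'_neg t a b ht ha hb ⟨hs0, hst⟩), myU', myU,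
    heatKernel, heatKernel, hk_sqrt s hs0, hk_sqrt (t-s) hts, hsplit]
  set rt := Real.sqrt t with hrt
  set rs := Real.sqrt s with hrs
  set rts := Real.sqrt (t-s) with hrts
  set r := Real.sqrt (s*(t-s)) with hr
  set rpi := Real.sqrt Real.pi with hrpi
  have hrt0 : 0 < rt := Real.sqrt_pos.2 ht
  have hrs0 : 0 < rs := Real.sqrt_pos.2 hs0
  have hrts0 : 0 < rts := Real.sqrt_pos.2 hts
  have hr0 : 0 < r := Real.sqrt_pos.2 (by positivity)
  have hrpi0 : 0 < rpi := Real.sqrt_pos.2 hpi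
  have hr_split : r = rs * rts := Real.sqrt_mul hs0.le _
  have hts2 : t - s = rts^2 := (Real.sq_sqrt hts.le).symm
  have ht2 : t = rt^2 := (Real.sq_sqrt ht.le).symm
  have hs2 : s = rs^2 := (Real.sq_sqrt hs0.le).symm
  have hpi2 : Real.pi = rpi^2 := (Real.sq_sqrt hpi.le).symm
  rw [hr_split, hts2, ht2, hs2, hpi2]
  have hrel : rt^2 = rs^2 + rts^2 := by rw [← hts2, ← ht2, ← hs2]; ring
  have hM : (0:ℝ) < a * rts ^ 2 + b * rs ^ 2 := by positivity
  have hexp : rexp (-(a + b) ^ 2 / (4 * rt ^ 2))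
        * rexp (-((a * rts ^ 2 - b * rs ^ 2) / (rt * (rs * rts))) ^ 2 / 4)
      = rexp (-a ^ 2 / (4 * rs ^ 2)) * rexp (-b ^ 2 / (4 * rts ^ 2)) := by
    rw [← Real.exp_add, ← Real.exp_add]
    congr 1
    field_simp
    linear_combination (a^2*rts^2+b^2*rs^2) * hrel
  have hT : (a + b) / (rt ^ 2 * rt)
        + (b - a) * ((a * rts ^ 2 - b * rs ^ 2) / (rt * (rs * rts)))
            / (rt ^ 2 * ((a * rts ^ 2 + b * rs ^ 2) / (rs * rts)))
      = 2*a*b*(rs^2+rts^2) / (rt^3*(a*rts^2+b*rs^2)) := by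
    field_simp
    ring
  rw [hT]
  have hco : rt^4*(a*rts^2+b*rs^2) / (2*(rt*(rs*rts))^3)
        * (2*a*b*(rs^2+rts^2) / (rt^3*(a*rts^2+b*rs^2))) / (4*rpi^2)
      = a / rs^2 * (2*rpi*rs)⁻¹ * ((b/rts^2) * (2*rpi*rts)⁻¹) := by
    field_simp
    linear_combination (-4) * hrel
  calc -(-((rt ^ 2) ^ 2 * (a * rts ^ 2 + b * rs ^ 2)) / (2 * (rt * (rs * rts)) ^ 3)) *
      (rexp (-(a + b) ^ 2 / (4 * rt ^ 2)) / (4 * rpi ^ 2) *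
          (2*a*b*(rs^2+rts^2) / (rt^3*(a*rts^2+b*rs^2))) *
        rexp (-((a * rts ^ 2 - b * rs ^ 2) / (rt * (rs * rts))) ^ 2 / 4))
      = (rt^4*(a*rts^2+b*rs^2) / (2*(rt*(rs*rts))^3)
          * (2*a*b*(rs^2+rts^2) / (rt^3*(a*rts^2+b*rs^2))) / (4*rpi^2))
        * (rexp (-(a + b) ^ 2 / (4 * rt ^ 2))
          * rexp (-((a * rts ^ 2 - b * rs ^ 2) / (rt * (rs * rts))) ^ 2 / 4)) := by
        ring
    _ = (a / rs^2 * (2*rpi*rs)⁻¹ * ((b/rts^2) * (2*rpi*rts)⁻¹))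
        * (rexp (-a ^ 2 / (4 * rs ^ 2)) * rexp (-b ^ 2 / (4 * rts ^ 2))) := by
        rw [hexp, hco]
    _ = a / rs ^ 2 * ((2 * rpi * rs)⁻¹ * rexp (-a ^ 2 / (4 * rs ^ 2))) *
      (b / rts ^ 2 * ((2 * rpi * rts)⁻¹ * rexp (-b ^ 2 / (4 * rts ^ 2)))) := by
        ring

lemma gauss_int : ∫ v : ℝ, Real.exp (-v^2/4) = 2 * Real.sqrt Real.pi := by
  have h0 : (fun v : ℝ => Real.exp (-v^2/4)) = fun v => Real.exp (-(1/4:ℝ)*v^2) := by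
    funext v; congr 1; ring
  rw [h0, integral_gaussian]
  rw [show Real.pi/(1/4:ℝ) = 4*Real.pi by ring]
  rw [show (4:ℝ)*Real.pi = 2^2*Real.pi by norm_num, Real.sqrt_mul (by positivity),
    Real.sqrt_sq (by norm_num)]

lemma gauss_integrable : Integrable (fun v : ℝ => Real.exp (-v^2/4)) := by
  have h0 : (fun v : ℝ => Real.exp (-v^2/4)) = fun v => Real.exp (-(1/4:ℝ)*v^2) := by
    funext v; congr 1; ring
  rw [h0]
  exact integrable_exp_neg_mul_sq (by norm_num)

lemma myG_integral (t a b : ℝ) (ht : 0 < t) (ha : 0 < a) (hb : 0 < b) :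
    (∫ v : ℝ, myG t a b v) = ((a+b)/t) * heatKernel t (a+b) := by
  have hpi := Real.pi_pos
  set C : ℝ := Real.exp (-(a+b)^2/(4*t)) / (4*Real.pi) with hC
  set A : ℝ := (a+b)/(t*Real.sqrt t) with hA
  set h : ℝ → ℝ := fun v => (b-a)*v/(t*Real.sqrt (t*v^2+4*(a*b))) * Real.exp (-v^2/4)
    with hh
  have hfun : ∀ v, myG t a b v = (C*A) * Real.exp (-v^2/4) + C * h v := by
    intro v; rw [myG, hh]; ring
  have hden : ∀ v : ℝ, 0 < Real.sqrt (t*v^2+4*(a*b)) := fun v =>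
    Real.sqrt_pos.2 (by positivity)
  have hcont : Continuous h := by
    apply Continuous.mul
    · apply Continuous.div (by continuity)
      · exact continuous_const.mul (Real.continuous_sqrt.comp (by continuity))
      · intro v
        have := hden v
        positivity
    · exact Real.continuous_exp.comp (by continuity)
  have hbound : ∀ v : ℝ, ‖h v‖ ≤ (|b-a|/(t*Real.sqrt t)) * Real.exp (-v^2/4) := by
    intro v
    rw [hh]
    simp only [norm_mul, norm_div, Real.norm_eq_abs, abs_mul]
    rw [Real.abs_exp]
    apply mul_le_mul_of_nonneg_right _ (Real.exp_pos _).le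
    rw [abs_of_pos (show (0:ℝ) < t from ht),
      abs_of_pos (show (0:ℝ) < Real.sqrt (t*v^2+4*(a*b)) from hden v)]
    rw [div_le_div_iff₀ (by positivity) (by positivity)]
    have hkey : |v| * Real.sqrt t ≤ Real.sqrt (t*v^2+4*(a*b)) := by
      rw [show |v| * Real.sqrt t = Real.sqrt (v^2) * Real.sqrt t by rw [Real.sqrt_sq_eq_abs],
        ← Real.sqrt_mul (sq_nonneg v)]
      apply Real.sqrt_le_sqrt
      nlinarith
    calc |b-a| * |v| * (t * Real.sqrt t) = (|v| * Real.sqrt t) * (|b-a| * t) := by ring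
      _ ≤ Real.sqrt (t*v^2+4*(a*b)) * (|b-a| * t) := by
          apply mul_le_mul_of_nonneg_right hkey (by positivity)
      _ = |b-a| * (t * Real.sqrt (t*v^2+4*(a*b))) := by ring
  have hh_int : Integrable h := by
    apply Integrable.mono' ((gauss_integrable.const_mul (|b-a|/(t*Real.sqrt t))))
      hcont.aestronglyMeasurable
    exact Filter.Eventually.of_forall hbound
  have hodd : ∀ v, h (-v) = - h v := by
    intro v
    rw [hh]
    simp only [neg_sq]
    ring
  have hzero : (∫ v, h v) = 0 := by
    have h1 : (∫ v : ℝ, h (-v)) = ∫ v, h v := integral_neg_eq_self h volume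
    have h2 : (∫ v : ℝ, h (-v)) = - ∫ v, h v := by
      rw [show (fun v : ℝ => h (-v)) = fun v => -(h v) from funext hodd, integral_neg]
    linarith
  calc (∫ v : ℝ, myG t a b v)
      = ∫ v : ℝ, ((C*A) * Real.exp (-v^2/4) + C * h v) := by
        congr 1; funext v; exact hfun v
    _ = (C*A) * (∫ v : ℝ, Real.exp (-v^2/4)) + C * ∫ v, h v := by
        rw [integral_add (gauss_integrable.const_mul _) (hh_int.const_mul _),
          MeasureTheory.integral_const_mul, MeasureTheory.integral_const_mul]
    _ = (C*A) * (2*Real.sqrt Real.pi) := by rw [gauss_int, hzero]; ring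
    _ = ((a+b)/t) * heatKernel t (a+b) := by
        rw [heatKernel, hk_sqrt t ht, hC, hA]
        have hrpi2 : Real.sqrt Real.pi ^ 2 = Real.pi := Real.sq_sqrt hpi.le
        have hrt0 : 0 < Real.sqrt t := Real.sqrt_pos.2 ht
        have hrpi0 : 0 < Real.sqrt Real.pi := Real.sqrt_pos.2 hpi
        field_simp
        linear_combination 4 * hrpi2


/-- For `t > 0` and `z₁, z₂ > 0`:
`∫₀ᵗ (z₁/s)·G(s,z₁)·(z₂/(t−s))·G(t−s,z₂) ds = ((z₁+z₂)/t)·G(t,z₁+z₂)`. -/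
theorem stmt_2 (t z₁ z₂ : ℝ) (ht : 0 < t) (hz₁ : 0 < z₁) (hz₂ : 0 < z₂) :
    ∫ s in (0:ℝ)..t, (z₁ / s) * heatKernel s z₁ * ((z₂ / (t - s)) * heatKernel (t - s) z₂)
      = ((z₁ + z₂) / t) * heatKernel t (z₁ + z₂) := by
  rw [intervalIntegral.integral_of_le ht.le, MeasureTheory.integral_Ioc_eq_integral_Ioo]
  have hcongr : (∫ s in Ioo (0:ℝ) t,
        (z₁ / s) * heatKernel s z₁ * ((z₂ / (t - s)) * heatKernel (t - s) z₂))
      = ∫ s in Ioo (0:ℝ) t, |myU' t z₁ z₂ s| • myG t z₁ z₂ (myU t z₁ z₂ s) := by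
    apply setIntegral_congr_fun measurableSet_Ioo
    intro s hs
    exact (pointwise_eq t z₁ z₂ ht hz₁ hz₂ hs).symm
  rw [hcongr]
  rw [← MeasureTheory.integral_image_eq_integral_abs_deriv_smul measurableSet_Ioo
    (fun s hs => (myU_hasDeriv t z₁ z₂ ht hs).hasDerivWithinAt)
    (myU_injOn t z₁ z₂ ht hz₁ hz₂) (myG t z₁ z₂)]
  rw [myU_surj t z₁ z₂ ht hz₁ hz₂, MeasureTheory.Measure.restrict_univ]
  exact myG_integral t z₁ z₂ ht hz₁ hz₂
end

section
/- Let T > 0 and let u, c be time-dependent functions on a finite weighted network such that for each edge j the maps (t,x) ↦ u j t x and (t,x) ↦ c j t x are continuous on [0,T]×[0,1], u is continuously differentiable in t, u and c are twice continuously differentiable in x with all these derivatives continuous on [0,T]×[0,1], and ∂_t u j = ∂_xx u j − ∂_x(u j · ∂_x c j) on [0,T]×[0,1]. Assume that for every t ∈ [0,T] the function u(t) is continuous at the vertices and both u(t) and c(t) satisfy the Kirchhoff condition at every vertex. Then the total mass t ↦ ∑_j κ j · ∫₀¹ u j t x dx is constant on [0,T]. -/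
open Finset MeasureTheory

/-- FTC helper: integral of the derivative over `[a,b]` with one-sided data. -/
lemma ftc_aux {a b : ℝ} (hab : a ≤ b) {f f' : ℝ → ℝ}
    (hcont : ContinuousOn f (Set.Icc a b))
    (hderiv : ∀ x ∈ Set.Icc a b, HasDerivWithinAt f (f' x) (Set.Icc a b) x)
    (hcont' : ContinuousOn f' (Set.Icc a b)) :
    ∫ x in a..b, f' x = f b - f a := by
  apply intervalIntegral.integral_eq_sub_of_hasDeriv_right_of_le hab hcont
  · intro x hx
    exact ((hderiv x (Set.mem_Icc_of_Ioo hx)).hasDerivAt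
      (Icc_mem_nhds hx.1 hx.2)).hasDerivWithinAt
  · have : ContinuousOn f' (Set.uIcc a b) := by rwa [Set.uIcc_of_le hab]
    exact this.intervalIntegrable

/-- Fubini for continuous functions on a rectangle, interval-integral form. -/
lemma swap_aux {t : ℝ} (ht : 0 ≤ t) {f : ℝ → ℝ → ℝ}
    (hf : ContinuousOn (fun p : ℝ × ℝ => f p.1 p.2) (Set.Icc 0 t ×ˢ Set.Icc 0 1)) :
    ∫ x in (0:ℝ)..1, ∫ s in (0:ℝ)..t, f s x = ∫ s in (0:ℝ)..t, ∫ x in (0:ℝ)..1, f s x := by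
  have h01 : (0:ℝ) ≤ 1 := by norm_num
  have hint : Integrable (Function.uncurry f)
      ((volume.restrict (Set.Ioc (0:ℝ) t)).prod (volume.restrict (Set.Ioc (0:ℝ) 1))) := by
    rw [Measure.prod_restrict]
    have hcpt : IsCompact (Set.Icc (0:ℝ) t ×ˢ Set.Icc (0:ℝ) 1) :=
      isCompact_Icc.prod isCompact_Icc
    have : IntegrableOn (Function.uncurry f) (Set.Icc 0 t ×ˢ Set.Icc 0 1)
        (volume.prod volume) := by
      rw [← Measure.volume_eq_prod]
      exact hf.integrableOn_compact hcpt
    exact this.mono_set (Set.prod_mono Set.Ioc_subset_Icc_self Set.Ioc_subset_Icc_self)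
  simp only [intervalIntegral.integral_of_le ht, intervalIntegral.integral_of_le h01]
  exact (MeasureTheory.integral_integral_swap hint).symm

/-- **Conservation of mass for the Keller–Segel system on a network.**
On a finite weighted network (edges `j : Fin m` identified with `[0,1]`, initial vertex
`eI j`, terminal vertex `eT j`, weights `κ j > 0`), let `u, c` be time-dependent functions
on the network, continuous on `[0,T]×[0,1]` together with `∂_t u`, `∂_x u`, `∂_xx u`,
`∂_x c`, `∂_xx c`, solving `∂_t u_j = ∂_xx u_j − ∂_x(u_j ∂_x c_j)`, with `u(t)` continuous
at the vertices and `u(t)`, `c(t)` satisfying the Kirchhoff condition at every vertex.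
Then the total mass `t ↦ ∑_j κ_j ∫₀¹ u_j(t,x) dx` is constant on `[0,T]`. -/
theorem stmt_6 (n m : ℕ) (hm : 1 ≤ m) (eI eT : Fin m → Fin n) (hIT : ∀ j, eI j ≠ eT j)
    (κ : Fin m → ℝ) (hκ : ∀ j, 0 < κ j) (T : ℝ) (hT : 0 < T)
    (u c ut ux uxx cx cxx : Fin m → ℝ → ℝ → ℝ)
    -- continuity of u, c and of all the derivatives on [0,T]×[0,1]
    (hucont : ∀ j, ContinuousOn (fun p : ℝ × ℝ => u j p.1 p.2) (Set.Icc 0 T ×ˢ Set.Icc 0 1))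
    (hccont : ∀ j, ContinuousOn (fun p : ℝ × ℝ => c j p.1 p.2) (Set.Icc 0 T ×ˢ Set.Icc 0 1))
    (hutcont : ∀ j, ContinuousOn (fun p : ℝ × ℝ => ut j p.1 p.2) (Set.Icc 0 T ×ˢ Set.Icc 0 1))
    (huxcont : ∀ j, ContinuousOn (fun p : ℝ × ℝ => ux j p.1 p.2) (Set.Icc 0 T ×ˢ Set.Icc 0 1))
    (huxxcont : ∀ j, ContinuousOn (fun p : ℝ × ℝ => uxx j p.1 p.2) (Set.Icc 0 T ×ˢ Set.Icc 0 1))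
    (hcxcont : ∀ j, ContinuousOn (fun p : ℝ × ℝ => cx j p.1 p.2) (Set.Icc 0 T ×ˢ Set.Icc 0 1))
    (hcxxcont : ∀ j, ContinuousOn (fun p : ℝ × ℝ => cxx j p.1 p.2) (Set.Icc 0 T ×ˢ Set.Icc 0 1))
    -- ut = ∂_t u, ux = ∂_x u, uxx = ∂_xx u, cx = ∂_x c, cxx = ∂_xx c
    (hut : ∀ j, ∀ t ∈ Set.Icc (0:ℝ) T, ∀ x ∈ Set.Icc (0:ℝ) 1,
      HasDerivWithinAt (fun s => u j s x) (ut j t x) (Set.Icc 0 T) t)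
    (hux : ∀ j, ∀ t ∈ Set.Icc (0:ℝ) T, ∀ x ∈ Set.Icc (0:ℝ) 1,
      HasDerivWithinAt (fun y => u j t y) (ux j t x) (Set.Icc 0 1) x)
    (huxx : ∀ j, ∀ t ∈ Set.Icc (0:ℝ) T, ∀ x ∈ Set.Icc (0:ℝ) 1,
      HasDerivWithinAt (fun y => ux j t y) (uxx j t x) (Set.Icc 0 1) x)
    (hcx : ∀ j, ∀ t ∈ Set.Icc (0:ℝ) T, ∀ x ∈ Set.Icc (0:ℝ) 1,
      HasDerivWithinAt (fun y => c j t y) (cx j t x) (Set.Icc 0 1) x)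
    (hcxx : ∀ j, ∀ t ∈ Set.Icc (0:ℝ) T, ∀ x ∈ Set.Icc (0:ℝ) 1,
      HasDerivWithinAt (fun y => cx j t y) (cxx j t x) (Set.Icc 0 1) x)
    -- the PDE ∂_t u = ∂_xx u − ∂_x(u ∂_x c)
    (hpde : ∀ j, ∀ t ∈ Set.Icc (0:ℝ) T, ∀ x ∈ Set.Icc (0:ℝ) 1,
      ut j t x = uxx j t x - (ux j t x * cx j t x + u j t x * cxx j t x))
    -- u(t) is continuous at the vertices
    (hucontv : ∀ t ∈ Set.Icc (0:ℝ) T, ∃ b : Fin n → ℝ,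
      ∀ j, u j t 0 = b (eI j) ∧ u j t 1 = b (eT j))
    -- Kirchhoff conditions for u(t) and c(t) at every vertex
    (hKu : ∀ t ∈ Set.Icc (0:ℝ) T, ∀ v : Fin n,
      ∑ j ∈ univ.filter (fun j => eT j = v), κ j * ux j t 1
        - ∑ j ∈ univ.filter (fun j => eI j = v), κ j * ux j t 0 = 0)
    (hKc : ∀ t ∈ Set.Icc (0:ℝ) T, ∀ v : Fin n,
      ∑ j ∈ univ.filter (fun j => eT j = v), κ j * cx j t 1
        - ∑ j ∈ univ.filter (fun j => eI j = v), κ j * cx j t 0 = 0) :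
    ∀ t ∈ Set.Icc (0:ℝ) T,
      ∑ j, κ j * ∫ x in (0:ℝ)..1, u j t x = ∑ j, κ j * ∫ x in (0:ℝ)..1, u j 0 x := by
  intro t ht
  obtain ⟨ht0, htT⟩ := ht
  have h01 : (0:ℝ) ≤ 1 := by norm_num
  have hsubT : Set.Icc (0:ℝ) t ⊆ Set.Icc 0 T := Set.Icc_subset_Icc le_rfl htT
  -- slice continuity helpers
  have cont_t : ∀ (f : Fin m → ℝ → ℝ → ℝ),
      (∀ j, ContinuousOn (fun p : ℝ × ℝ => f j p.1 p.2) (Set.Icc 0 T ×ˢ Set.Icc 0 1)) →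
      ∀ j, ∀ x ∈ Set.Icc (0:ℝ) 1, ContinuousOn (fun s => f j s x) (Set.Icc 0 T) := by
    intro f hf j x hx
    exact (hf j).comp ((continuous_id.prodMk continuous_const).continuousOn)
      (fun s hs => ⟨hs, hx⟩)
  have cont_x : ∀ (f : Fin m → ℝ → ℝ → ℝ),
      (∀ j, ContinuousOn (fun p : ℝ × ℝ => f j p.1 p.2) (Set.Icc 0 T ×ˢ Set.Icc 0 1)) →
      ∀ j, ∀ s ∈ Set.Icc (0:ℝ) T, ContinuousOn (fun x => f j s x) (Set.Icc 0 1) := by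
    intro f hf j s hs
    exact (hf j).comp ((continuous_const.prodMk continuous_id).continuousOn)
      (fun x hx => ⟨hs, hx⟩)
  -- boundary flux
  set H : Fin m → ℝ → ℝ := fun j s =>
    (ux j s 1 - u j s 1 * cx j s 1) - (ux j s 0 - u j s 0 * cx j s 0) with hH
  -- Step A: FTC in time
  have stepA : ∀ j, ∀ x ∈ Set.Icc (0:ℝ) 1,
      ∫ s in (0:ℝ)..t, ut j s x = u j t x - u j 0 x := by
    intro j x hx
    apply ftc_aux ht0 ((cont_t u hucont j x hx).mono hsubT)
    · intro s hs
      exact (hut j s (hsubT hs) x hx).mono hsubT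
    · exact (cont_t ut hutcont j x hx).mono hsubT
  -- Step B: FTC in space, via the PDE
  have stepB : ∀ j, ∀ s ∈ Set.Icc (0:ℝ) T,
      ∫ x in (0:ℝ)..1, ut j s x = H j s := by
    intro j s hs
    have hFc : ContinuousOn (fun y => ux j s y - u j s y * cx j s y) (Set.Icc 0 1) :=
      (cont_x ux huxcont j s hs).sub ((cont_x u hucont j s hs).mul (cont_x cx hcxcont j s hs))
    have hFd : ∀ x ∈ Set.Icc (0:ℝ) 1,
        HasDerivWithinAt (fun y => ux j s y - u j s y * cx j s y) (ut j s x)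
          (Set.Icc 0 1) x := by
      intro x hx
      rw [hpde j s hs x hx]
      exact (huxx j s hs x hx).sub ((hux j s hs x hx).mul (hcxx j s hs x hx))
    exact ftc_aux h01 hFc hFd (cont_x ut hutcont j s hs)
  -- Kirchhoff: the total flux vanishes
  have hH0 : ∀ s ∈ Set.Icc (0:ℝ) T, ∑ j, κ j * H j s = 0 := by
    intro s hs
    obtain ⟨b, hb⟩ := hucontv s hs
    have h1 : ∀ j, κ j * H j s =
        (κ j * ux j s 1 - b (eT j) * (κ j * cx j s 1))
          - (κ j * ux j s 0 - b (eI j) * (κ j * cx j s 0)) := by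
      intro j
      rw [hH]
      simp only
      rw [(hb j).1, (hb j).2]
      ring
    rw [Finset.sum_congr rfl (fun j _ => h1 j), Finset.sum_sub_distrib,
      Finset.sum_sub_distrib, Finset.sum_sub_distrib]
    have fT : ∀ f : Fin m → ℝ, ∑ j, f j
        = ∑ v, ∑ j ∈ univ.filter (fun j => eT j = v), f j :=
      fun f => (Finset.sum_fiberwise univ eT f).symm
    have fI : ∀ f : Fin m → ℝ, ∑ j, f j
        = ∑ v, ∑ j ∈ univ.filter (fun j => eI j = v), f j :=
      fun f => (Finset.sum_fiberwise univ eI f).symm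
    rw [fT (fun j => κ j * ux j s 1), fI (fun j => κ j * ux j s 0),
      fT (fun j => b (eT j) * (κ j * cx j s 1)), fI (fun j => b (eI j) * (κ j * cx j s 0))]
    have e2 : ∀ v, ∑ j ∈ univ.filter (fun j => eT j = v), b (eT j) * (κ j * cx j s 1)
        = b v * ∑ j ∈ univ.filter (fun j => eT j = v), κ j * cx j s 1 := by
      intro v
      rw [Finset.mul_sum]
      exact Finset.sum_congr rfl (fun j hj => by rw [(Finset.mem_filter.1 hj).2])
    have e4 : ∀ v, ∑ j ∈ univ.filter (fun j => eI j = v), b (eI j) * (κ j * cx j s 0)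
        = b v * ∑ j ∈ univ.filter (fun j => eI j = v), κ j * cx j s 0 := by
      intro v
      rw [Finset.mul_sum]
      exact Finset.sum_congr rfl (fun j hj => by rw [(Finset.mem_filter.1 hj).2])
    simp only [e2, e4]
    rw [← Finset.sum_sub_distrib, ← Finset.sum_sub_distrib, ← Finset.sum_sub_distrib]
    apply Finset.sum_eq_zero
    intro v _
    linear_combination (hKu s hs v) - b v * (hKc s hs v)
  -- continuity of H in time
  have hHc : ∀ j, ContinuousOn (H j) (Set.Icc 0 T) := by
    intro j
    exact ((cont_t ux huxcont j 1 (by norm_num)).sub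
        ((cont_t u hucont j 1 (by norm_num)).mul (cont_t cx hcxcont j 1 (by norm_num)))).sub
      ((cont_t ux huxcont j 0 (by norm_num)).sub
        ((cont_t u hucont j 0 (by norm_num)).mul (cont_t cx hcxcont j 0 (by norm_num))))
  -- Step D: per-edge mass change equals time integral of the flux
  have stepD : ∀ j, (∫ x in (0:ℝ)..1, u j t x) - (∫ x in (0:ℝ)..1, u j 0 x)
      = ∫ s in (0:ℝ)..t, H j s := by
    intro j
    have hint : ∀ r ∈ Set.Icc (0:ℝ) T, IntervalIntegrable (fun x => u j r x) volume 0 1 := by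
      intro r hr
      have : ContinuousOn (fun x => u j r x) (Set.uIcc 0 1) := by
        rw [Set.uIcc_of_le h01]; exact cont_x u hucont j r hr
      exact this.intervalIntegrable
    rw [← intervalIntegral.integral_sub (hint t ⟨ht0, htT⟩)
        (hint 0 ⟨le_rfl, le_of_lt hT⟩)]
    have e1 : ∫ x in (0:ℝ)..1, (u j t x - u j 0 x)
        = ∫ x in (0:ℝ)..1, ∫ s in (0:ℝ)..t, ut j s x := by
      apply intervalIntegral.integral_congr
      intro x hx
      rw [Set.uIcc_of_le h01] at hx
      exact (stepA j x hx).symm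
    rw [e1]
    have hswap := swap_aux ht0 (f := fun s x => ut j s x)
      ((hutcont j).mono (Set.prod_mono hsubT subset_rfl))
    rw [hswap]
    apply intervalIntegral.integral_congr
    intro s hs
    rw [Set.uIcc_of_le ht0] at hs
    exact stepB j s (hsubT hs)
  -- put everything together
  have key : ∑ j : Fin m, (κ j * (∫ x in (0:ℝ)..1, u j t x)
      - κ j * (∫ x in (0:ℝ)..1, u j 0 x)) = 0 := by
    have e : ∀ j : Fin m, κ j * (∫ x in (0:ℝ)..1, u j t x)
        - κ j * (∫ x in (0:ℝ)..1, u j 0 x) = ∫ s in (0:ℝ)..t, κ j * H j s := by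
      intro j
      rw [← mul_sub, stepD j, ← intervalIntegral.integral_const_mul]
    rw [Finset.sum_congr rfl (fun j _ => e j)]
    have hHint : ∀ j : Fin m, IntervalIntegrable (fun s => κ j * H j s) volume 0 t := by
      intro j
      have : ContinuousOn (fun s => κ j * H j s) (Set.uIcc 0 t) := by
        rw [Set.uIcc_of_le ht0]
        exact (continuousOn_const.mul (hHc j)).mono hsubT
      exact this.intervalIntegrable
    rw [← intervalIntegral.integral_finset_sum (fun j _ => hHint j)]
    have : ∫ s in (0:ℝ)..t, ∑ j, κ j * H j s = ∫ s in (0:ℝ)..t, (0:ℝ) := by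
      apply intervalIntegral.integral_congr
      intro s hs
      rw [Set.uIcc_of_le ht0] at hs
      exact hH0 s (hsubT hs)
    rw [this, intervalIntegral.integral_zero]
  rw [Finset.sum_sub_distrib] at key
  linarith
end

section
/- Let T > 0 and let u, c be time-dependent functions on a finite weighted network such that for each edge j the maps (t,x) ↦ u j t x and (t,x) ↦ c j t x are continuous on [0,T]×[0,1], u is continuously differentiable in t, u and c are twice continuously differentiable in x with all these derivatives continuous on [0,T]×[0,1] (in particular ∂_x c is bounded on [0,T]×[0,1]), and ∂_t u j = ∂_xx u j − ∂_x(u j · ∂_x c j) on [0,T]×[0,1]. Assume that for every t ∈ [0,T] the function u(t) is continuous at the vertices and both u(t) and c(t) satisfy the Kirchhoff condition at every vertex. If u j 0 x ≥ 0 for every edge j and every x ∈ [0,1], then u j t x ≥ 0 for every j, every x ∈ [0,1] and every t ∈ [0,T]. -/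
open Set

/-- Fermat-type: at a min of `f` on `Icc a b` at `p`, derivative times (y - p) is nonneg. -/
lemma aux_min_deriv {f : ℝ → ℝ} {f' : ℝ} {a b p y : ℝ}
    (hmin : IsMinOn f (Set.Icc a b) p) (hp : p ∈ Set.Icc a b) (hy : y ∈ Set.Icc a b)
    (hf : HasDerivWithinAt f f' (Set.Icc a b) p) : 0 ≤ f' * (y - p) := by
  have hcone : y - p ∈ posTangentConeAt (Set.Icc a b) p :=
    sub_mem_posTangentConeAt_of_segment_subset ((convex_Icc a b).segment_subset hp hy)
  have := hmin.localize.hasFDerivWithinAt_nonneg hf.hasFDerivWithinAt hcone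
  simpa [mul_comm] using this

lemma aux_second_deriv_nonneg {f f' : ℝ → ℝ} {a b p : ℝ} {D : ℝ}
    (hp : p ∈ Set.Ioo a b)
    (hmin : IsMinOn f (Set.Icc a b) p)
    (hf : ∀ y ∈ Set.Icc a b, HasDerivWithinAt f (f' y) (Set.Icc a b) y)
    (hf' : HasDerivWithinAt f' D (Set.Icc a b) p)
    (hf'p : f' p = 0) : 0 ≤ D := by
  by_contra hD
  push_neg at hD
  have hIcc : Set.Icc a b ∈ nhds p := Icc_mem_nhds hp.1 hp.2
  have hD' : HasDerivAt f' D p := hf'.hasDerivAt hIcc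
  have hslope : Filter.Tendsto (slope f' p) (nhdsWithin p (Set.Ioi p)) (nhds D) :=
    (hasDerivAt_iff_tendsto_slope.1 hD').mono_left
      (nhdsWithin_mono p (fun x hx => ne_of_gt hx))
  have hev : ∀ᶠ y in nhdsWithin p (Set.Ioi p), slope f' p y < 0 :=
    hslope.eventually_lt_const hD
  have hev2 : ∀ᶠ y in nhdsWithin p (Set.Ioi p), f' y < 0 := by
    filter_upwards [hev, self_mem_nhdsWithin] with y hy hy'
    have : (f' y - f' p) / (y - p) < 0 := by simpa [slope_def_field, div_eq_inv_mul] using hy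
    rw [hf'p, sub_zero] at this
    have hyp : 0 < y - p := sub_pos.2 hy'
    rcases div_neg_iff.1 this with h | h
    · linarith [h.2]
    · exact h.1
  obtain ⟨uu, huu, hIoo⟩ := mem_nhdsGT_iff_exists_Ioo_subset.1 hev2
  set r := min uu b with hr
  have hpr : p < r := lt_min huu hp.2
  set x2 := (p + r) / 2 with hx2
  have hpx2 : p < x2 := by simp [hx2]; linarith
  have hx2r : x2 < r := by simp [hx2]; linarith
  have hx2b : x2 < b := lt_of_lt_of_le hx2r (min_le_right _ _)
  have hsub : Set.Icc p x2 ⊆ Set.Icc a b :=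
    Set.Icc_subset_Icc (le_of_lt hp.1) (le_of_lt hx2b)
  have hanti : StrictAntiOn f (Set.Icc p x2) := by
    apply strictAntiOn_of_hasDerivWithinAt_neg (f' := f') (convex_Icc p x2)
    · exact fun y hy => ((hf y (hsub hy)).continuousWithinAt).mono hsub
    · intro y hy
      rw [interior_Icc] at hy
      have hyab : y ∈ Set.Ioo a b := ⟨lt_trans hp.1 hy.1, lt_trans hy.2 hx2b⟩
      exact ((hf y (hsub ⟨le_of_lt hy.1, le_of_lt hy.2⟩)).hasDerivAt
        (Icc_mem_nhds hyab.1 hyab.2)).hasDerivWithinAt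
    · intro y hy
      rw [interior_Icc] at hy
      exact hIoo ⟨hy.1, lt_of_lt_of_le (lt_of_lt_of_le hy.2 (le_of_lt hx2r)) (min_le_left _ _)⟩
  have h1 : f x2 < f p := hanti (Set.left_mem_Icc.2 (le_of_lt hpx2))
    (Set.right_mem_Icc.2 (le_of_lt hpx2)) hpx2
  have h2 : f p ≤ f x2 := hmin (hsub (Set.right_mem_Icc.2 (le_of_lt hpx2)))
  linarith



open Finset MeasureTheory

set_option maxHeartbeats 2000000 in
/-- **Positivity for the Keller–Segel system on a network.**
With the same setting and hypotheses as for mass conservation (in particular `∂_x c` is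
continuous on the compact set `[0,T]×[0,1]`, hence bounded), if the initial datum satisfies
`u_j(0,x) ≥ 0` for every edge `j` and every `x ∈ [0,1]`, then `u_j(t,x) ≥ 0` for every edge
`j`, every `x ∈ [0,1]` and every `t ∈ [0,T]`. -/
theorem stmt_7 (n m : ℕ) (hm : 1 ≤ m) (eI eT : Fin m → Fin n) (hIT : ∀ j, eI j ≠ eT j)
    (κ : Fin m → ℝ) (hκ : ∀ j, 0 < κ j) (T : ℝ) (hT : 0 < T)
    (u c ut ux uxx cx cxx : Fin m → ℝ → ℝ → ℝ)
    -- continuity of u, c and of all the derivatives on [0,T]×[0,1]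
    (hucont : ∀ j, ContinuousOn (fun p : ℝ × ℝ => u j p.1 p.2) (Set.Icc 0 T ×ˢ Set.Icc 0 1))
    (hccont : ∀ j, ContinuousOn (fun p : ℝ × ℝ => c j p.1 p.2) (Set.Icc 0 T ×ˢ Set.Icc 0 1))
    (hutcont : ∀ j, ContinuousOn (fun p : ℝ × ℝ => ut j p.1 p.2) (Set.Icc 0 T ×ˢ Set.Icc 0 1))
    (huxcont : ∀ j, ContinuousOn (fun p : ℝ × ℝ => ux j p.1 p.2) (Set.Icc 0 T ×ˢ Set.Icc 0 1))
    (huxxcont : ∀ j, ContinuousOn (fun p : ℝ × ℝ => uxx j p.1 p.2) (Set.Icc 0 T ×ˢ Set.Icc 0 1))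
    (hcxcont : ∀ j, ContinuousOn (fun p : ℝ × ℝ => cx j p.1 p.2) (Set.Icc 0 T ×ˢ Set.Icc 0 1))
    (hcxxcont : ∀ j, ContinuousOn (fun p : ℝ × ℝ => cxx j p.1 p.2) (Set.Icc 0 T ×ˢ Set.Icc 0 1))
    -- ut = ∂_t u, ux = ∂_x u, uxx = ∂_xx u, cx = ∂_x c, cxx = ∂_xx c
    (hut : ∀ j, ∀ t ∈ Set.Icc (0:ℝ) T, ∀ x ∈ Set.Icc (0:ℝ) 1,
      HasDerivWithinAt (fun s => u j s x) (ut j t x) (Set.Icc 0 T) t)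
    (hux : ∀ j, ∀ t ∈ Set.Icc (0:ℝ) T, ∀ x ∈ Set.Icc (0:ℝ) 1,
      HasDerivWithinAt (fun y => u j t y) (ux j t x) (Set.Icc 0 1) x)
    (huxx : ∀ j, ∀ t ∈ Set.Icc (0:ℝ) T, ∀ x ∈ Set.Icc (0:ℝ) 1,
      HasDerivWithinAt (fun y => ux j t y) (uxx j t x) (Set.Icc 0 1) x)
    (hcx : ∀ j, ∀ t ∈ Set.Icc (0:ℝ) T, ∀ x ∈ Set.Icc (0:ℝ) 1,
      HasDerivWithinAt (fun y => c j t y) (cx j t x) (Set.Icc 0 1) x)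
    (hcxx : ∀ j, ∀ t ∈ Set.Icc (0:ℝ) T, ∀ x ∈ Set.Icc (0:ℝ) 1,
      HasDerivWithinAt (fun y => cx j t y) (cxx j t x) (Set.Icc 0 1) x)
    -- the PDE ∂_t u = ∂_xx u − ∂_x(u ∂_x c)
    (hpde : ∀ j, ∀ t ∈ Set.Icc (0:ℝ) T, ∀ x ∈ Set.Icc (0:ℝ) 1,
      ut j t x = uxx j t x - (ux j t x * cx j t x + u j t x * cxx j t x))
    -- u(t) is continuous at the vertices
    (hucontv : ∀ t ∈ Set.Icc (0:ℝ) T, ∃ b : Fin n → ℝ,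
      ∀ j, u j t 0 = b (eI j) ∧ u j t 1 = b (eT j))
    -- Kirchhoff conditions for u(t) and c(t) at every vertex
    (hKu : ∀ t ∈ Set.Icc (0:ℝ) T, ∀ v : Fin n,
      ∑ j ∈ univ.filter (fun j => eT j = v), κ j * ux j t 1
        - ∑ j ∈ univ.filter (fun j => eI j = v), κ j * ux j t 0 = 0)
    (hKc : ∀ t ∈ Set.Icc (0:ℝ) T, ∀ v : Fin n,
      ∑ j ∈ univ.filter (fun j => eT j = v), κ j * cx j t 1
        - ∑ j ∈ univ.filter (fun j => eI j = v), κ j * cx j t 0 = 0)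
    -- nonnegative initial datum
    (hupos0 : ∀ j, ∀ x ∈ Set.Icc (0:ℝ) 1, 0 ≤ u j 0 x) :
    ∀ j, ∀ t ∈ Set.Icc (0:ℝ) T, ∀ x ∈ Set.Icc (0:ℝ) 1, 0 ≤ u j t x := by
  
  by_contra hcon
  push_neg at hcon
  obtain ⟨j0, t0, ht0, x0, hx0, hneg⟩ := hcon
  have hmne : Nonempty (Fin m) := ⟨⟨0, hm⟩⟩
  set K : Set (ℝ × ℝ) := Set.Icc 0 T ×ˢ Set.Icc 0 1 with hKdef
  have hKcomp : IsCompact K := isCompact_Icc.prod isCompact_Icc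
  have hKne : K.Nonempty := ⟨(0,0), ⟨⟨le_refl _, hT.le⟩, ⟨le_refl _, zero_le_one⟩⟩⟩
  -- uniform bounds on cx and cxx
  choose C1 hC1 using fun j => hKcomp.exists_bound_of_continuousOn (hcxcont j)
  choose C2 hC2 using fun j => hKcomp.exists_bound_of_continuousOn (hcxxcont j)
  obtain ⟨M1, hM1⟩ : ∃ M1, ∀ j, ∀ t ∈ Set.Icc (0:ℝ) T, ∀ x ∈ Set.Icc (0:ℝ) 1,
      |cx j t x| ≤ M1 := by
    refine ⟨Finset.univ.sup' Finset.univ_nonempty C1, fun j t ht x hx => ?_⟩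
    calc |cx j t x| = ‖cx j t x‖ := (Real.norm_eq_abs _).symm
    _ ≤ C1 j := hC1 j (t,x) ⟨ht, hx⟩
    _ ≤ _ := Finset.le_sup' C1 (Finset.mem_univ j)
  obtain ⟨M2, hM2⟩ : ∃ M2, ∀ j, ∀ t ∈ Set.Icc (0:ℝ) T, ∀ x ∈ Set.Icc (0:ℝ) 1,
      |cxx j t x| ≤ M2 := by
    refine ⟨Finset.univ.sup' Finset.univ_nonempty C2, fun j t ht x hx => ?_⟩
    calc |cxx j t x| = ‖cxx j t x‖ := (Real.norm_eq_abs _).symm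
    _ ≤ C2 j := hC2 j (t,x) ⟨ht, hx⟩
    _ ≤ _ := Finset.le_sup' C2 (Finset.mem_univ j)
  have hM1nn : 0 ≤ M1 := le_trans (abs_nonneg _)
    (hM1 j0 0 ⟨le_refl _, hT.le⟩ 0 ⟨le_refl _, zero_le_one⟩)
  have hM2nn : 0 ≤ M2 := le_trans (abs_nonneg _)
    (hM2 j0 0 ⟨le_refl _, hT.le⟩ 0 ⟨le_refl _, zero_le_one⟩)
  set lam : ℝ := M2 + 1 with hlam
  set E : ℝ → ℝ := fun t => Real.exp (-(lam * t)) with hE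
  have hEpos : ∀ t, 0 < E t := fun t => Real.exp_pos _
  have hEderiv : ∀ t, HasDerivAt E (-lam * E t) t := by
    intro t
    have h1 : HasDerivAt (fun s : ℝ => -(lam * s)) (-lam) t := by
      simpa using ((hasDerivAt_id t).const_mul lam).fun_neg
    simpa [hE, mul_comm] using h1.exp
  set a : ℝ := E t0 * u j0 t0 x0 with hadef
  have ha : a < 0 := mul_neg_of_pos_of_neg (hEpos t0) hneg
  have hden : (0:ℝ) < 8 + 4 * M1 := by linarith
  set ε : ℝ := -a / (8 + 4 * M1) with hεdef
  have hε : 0 < ε := div_pos (by linarith) hden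
  have hεprod : ε * (8 + 4 * M1) = -a := div_mul_cancel₀ _ hden.ne'
  clear_value a ε
  set w : Fin m → ℝ → ℝ → ℝ := fun j t x => E t * u j t x + ε * (x^2 - x) with hwdef
  -- derivatives of w
  have hwt : ∀ j, ∀ t ∈ Set.Icc (0:ℝ) T, ∀ x ∈ Set.Icc (0:ℝ) 1,
      HasDerivWithinAt (fun s => w j s x)
        (E t * ut j t x - lam * (E t * u j t x)) (Set.Icc 0 T) t := by
    intro j t ht x hx
    have h1 : HasDerivWithinAt (fun s => w j s x) _ (Set.Icc 0 T) t := ((hEderiv t).hasDerivWithinAt.mul (hut j t ht x hx)).add_const (ε * (x^2 - x))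
    convert h1 using 1
    ring
  have hwx : ∀ j, ∀ t ∈ Set.Icc (0:ℝ) T, ∀ x ∈ Set.Icc (0:ℝ) 1,
      HasDerivWithinAt (fun y => w j t y)
        (E t * ux j t x + ε * (2*x - 1)) (Set.Icc 0 1) x := by
    intro j t ht x hx
    have h2 : HasDerivAt (fun y : ℝ => ε * (y^2 - y)) (ε * (2*x - 1)) x := by
      have h3 : HasDerivAt (fun y : ℝ => ε * (y^2 - y)) _ x := ((hasDerivAt_pow 2 x).sub (hasDerivAt_id x)).const_mul ε
      convert h3 using 1
      norm_num
    exact ((hux j t ht x hx).const_mul (E t)).add h2.hasDerivWithinAt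
  have hwxx : ∀ j, ∀ t ∈ Set.Icc (0:ℝ) T, ∀ x ∈ Set.Icc (0:ℝ) 1,
      HasDerivWithinAt (fun y => E t * ux j t y + ε * (2*y - 1))
        (E t * uxx j t x + ε * 2) (Set.Icc 0 1) x := by
    intro j t ht x hx
    have h2 : HasDerivAt (fun y : ℝ => ε * (2*y - 1)) (ε * 2) x := by
      simpa using (((hasDerivAt_id x).const_mul 2).sub_const 1).const_mul ε
    exact ((huxx j t ht x hx).const_mul (E t)).add h2.hasDerivWithinAt
  -- continuity of w on K
  have hwcont : ∀ j, ContinuousOn (fun p : ℝ × ℝ => w j p.1 p.2) K := by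
    intro j
    apply ContinuousOn.add
    · exact ((Real.continuous_exp.comp
        ((continuous_const.mul continuous_fst).neg)).continuousOn).mul (hucont j)
    · exact (continuous_const.mul ((continuous_snd.pow 2).sub continuous_snd)).continuousOn
  -- minimum
  choose p hpK hpmin using fun j => hKcomp.exists_isMinOn hKne (hwcont j)
  obtain ⟨j1, -, hj1⟩ := Finset.exists_min_image Finset.univ
    (fun j => w j (p j).1 (p j).2) ⟨j0, Finset.mem_univ j0⟩
  set t1 : ℝ := (p j1).1 with ht1def
  set x1 : ℝ := (p j1).2 with hx1def
  set W : ℝ := w j1 t1 x1 with hWdef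
  have ht1 : t1 ∈ Set.Icc (0:ℝ) T := (hpK j1).1
  have hx1 : x1 ∈ Set.Icc (0:ℝ) 1 := (hpK j1).2
  have hglob : ∀ j, ∀ t ∈ Set.Icc (0:ℝ) T, ∀ x ∈ Set.Icc (0:ℝ) 1, W ≤ w j t x := by
    intro j t ht x hx
    exact le_trans (hj1 j (Finset.mem_univ j)) (isMinOn_iff.1 (hpmin j) (t,x) ⟨ht, hx⟩)
  clear_value w
  clear_value W
  clear_value t1
  clear_value x1
  have hWa : W ≤ a := by
    have h := hglob j0 t0 ht0 x0 hx0
    have h2 : w j0 t0 x0 ≤ a := by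
      have h3 : 0 ≤ ε * x0 * (1 - x0) :=
        mul_nonneg (mul_nonneg hε.le hx0.1) (by linarith [hx0.2])
      simp only [hwdef, hadef]
      nlinarith
    linarith
  have ht1pos : 0 < t1 := by
    rcases lt_or_eq_of_le ht1.1 with h | h
    · exact h
    exfalso
    have hu0 : 0 ≤ u j1 0 x1 := hupos0 j1 x1 hx1
    have hE0 : E 0 = 1 := by simp [hE]
    have hW0 : -(ε/4) ≤ W := by
      rw [hWdef, ← h]
      simp only [hwdef, hE0, one_mul]
      nlinarith [mul_nonneg hε.le (sq_nonneg (x1 - 1/2))]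
    nlinarith [mul_nonneg hM1nn hε.le, hεprod, hW0, hWa, hε]
  have hx1cases : x1 = 0 ∨ x1 = 1 ∨ x1 ∈ Set.Ioo (0:ℝ) 1 := by
    rcases eq_or_lt_of_le hx1.1 with h | h
    · exact Or.inl h.symm
    rcases eq_or_lt_of_le hx1.2 with h' | h'
    · exact Or.inr (Or.inl h')
    · exact Or.inr (Or.inr ⟨h, h'⟩)
  have h01 : (0:ℝ) ∈ Set.Icc (0:ℝ) 1 := ⟨le_refl _, zero_le_one⟩
  have h11 : (1:ℝ) ∈ Set.Icc (0:ℝ) 1 := ⟨zero_le_one, le_refl _⟩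
  have h0T : (0:ℝ) ∈ Set.Icc (0:ℝ) T := ⟨le_refl _, hT.le⟩
  rcases hx1cases with hx10 | hx11 | hio
  · -- vertex case x1 = 0
    obtain ⟨b, hb⟩ := hucontv t1 ht1
    have hWv : W = E t1 * b (eI j1) := by
      rw [hWdef, hx10]
      simp [hwdef, (hb j1).1]
    have hminI : ∀ j, eI j = eI j1 → IsMinOn (fun x => w j t1 x) (Set.Icc 0 1) 0 := by
      intro j hj
      refine isMinOn_iff.2 fun x hx => ?_
      have h0 : w j t1 0 = W := by
        simp [hwdef, (hb j).1, hj, ← hWv]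
      simp only [h0]
      exact hglob j t1 ht1 x hx
    have hminT : ∀ j, eT j = eI j1 → IsMinOn (fun x => w j t1 x) (Set.Icc 0 1) 1 := by
      intro j hj
      refine isMinOn_iff.2 fun x hx => ?_
      have h0 : w j t1 1 = W := by
        simp [hwdef, (hb j).2, hj, ← hWv]
      simp only [h0]
      exact hglob j t1 ht1 x hx
    have hIneq : ∀ j, eI j = eI j1 → ε ≤ E t1 * ux j t1 0 := by
      intro j hj
      have := aux_min_deriv (hminI j hj) h01 h11 (hwx j t1 ht1 0 h01)
      nlinarith
    have hTneq : ∀ j, eT j = eI j1 → E t1 * ux j t1 1 ≤ -ε := by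
      intro j hj
      have := aux_min_deriv (hminT j hj) h11 h01 (hwx j t1 ht1 1 h11)
      nlinarith
    have hK1 := hKu t1 ht1 (eI j1)
    have hsum : ∑ j ∈ univ.filter (fun j => eT j = eI j1), κ j * (E t1 * ux j t1 1)
        = ∑ j ∈ univ.filter (fun j => eI j = eI j1), κ j * (E t1 * ux j t1 0) := by
      have h4 : ∑ j ∈ univ.filter (fun j => eT j = eI j1), κ j * ux j t1 1
          = ∑ j ∈ univ.filter (fun j => eI j = eI j1), κ j * ux j t1 0 := by linarith
      calc ∑ j ∈ univ.filter (fun j => eT j = eI j1), κ j * (E t1 * ux j t1 1)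
          = E t1 * ∑ j ∈ univ.filter (fun j => eT j = eI j1), κ j * ux j t1 1 := by
            rw [Finset.mul_sum]; exact Finset.sum_congr rfl fun j _ => by ring
        _ = E t1 * ∑ j ∈ univ.filter (fun j => eI j = eI j1), κ j * ux j t1 0 := by rw [h4]
        _ = _ := by rw [Finset.mul_sum]; exact Finset.sum_congr rfl fun j _ => by ring
    have hle1 : ∑ j ∈ univ.filter (fun j => eT j = eI j1), κ j * (E t1 * ux j t1 1)
        ≤ ∑ j ∈ univ.filter (fun j => eT j = eI j1), κ j * (-ε) :=
      Finset.sum_le_sum fun j hj =>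
        mul_le_mul_of_nonneg_left (hTneq j (Finset.mem_filter.1 hj).2) (hκ j).le
    have hge1 : ∑ j ∈ univ.filter (fun j => eI j = eI j1), κ j * ε
        ≤ ∑ j ∈ univ.filter (fun j => eI j = eI j1), κ j * (E t1 * ux j t1 0) :=
      Finset.sum_le_sum fun j hj =>
        mul_le_mul_of_nonneg_left (hIneq j (Finset.mem_filter.1 hj).2) (hκ j).le
    have hsingle : κ j1 * ε ≤ ∑ j ∈ univ.filter (fun j => eI j = eI j1), κ j * ε :=
      Finset.single_le_sum (f := fun j => κ j * ε)
        (fun i _ => (mul_pos (hκ i) hε).le)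
        (Finset.mem_filter.2 ⟨Finset.mem_univ _, rfl⟩)
    have hnp : ∑ j ∈ univ.filter (fun j => eT j = eI j1), κ j * (-ε) ≤ 0 :=
      Finset.sum_nonpos fun j _ => by nlinarith [hκ j]
    nlinarith [mul_pos (hκ j1) hε]
  · -- vertex case x1 = 1
    obtain ⟨b, hb⟩ := hucontv t1 ht1
    have hWv : W = E t1 * b (eT j1) := by
      rw [hWdef, hx11]
      simp [hwdef, (hb j1).2]
    have hminI : ∀ j, eI j = eT j1 → IsMinOn (fun x => w j t1 x) (Set.Icc 0 1) 0 := by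
      intro j hj
      refine isMinOn_iff.2 fun x hx => ?_
      have h0 : w j t1 0 = W := by
        simp [hwdef, (hb j).1, hj, ← hWv]
      simp only [h0]
      exact hglob j t1 ht1 x hx
    have hminT : ∀ j, eT j = eT j1 → IsMinOn (fun x => w j t1 x) (Set.Icc 0 1) 1 := by
      intro j hj
      refine isMinOn_iff.2 fun x hx => ?_
      have h0 : w j t1 1 = W := by
        simp [hwdef, (hb j).2, hj, ← hWv]
      simp only [h0]
      exact hglob j t1 ht1 x hx
    have hIneq : ∀ j, eI j = eT j1 → ε ≤ E t1 * ux j t1 0 := by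
      intro j hj
      have := aux_min_deriv (hminI j hj) h01 h11 (hwx j t1 ht1 0 h01)
      nlinarith
    have hTneq : ∀ j, eT j = eT j1 → E t1 * ux j t1 1 ≤ -ε := by
      intro j hj
      have := aux_min_deriv (hminT j hj) h11 h01 (hwx j t1 ht1 1 h11)
      nlinarith
    have hK1 := hKu t1 ht1 (eT j1)
    have hsum : ∑ j ∈ univ.filter (fun j => eT j = eT j1), κ j * (E t1 * ux j t1 1)
        = ∑ j ∈ univ.filter (fun j => eI j = eT j1), κ j * (E t1 * ux j t1 0) := by
      have h4 : ∑ j ∈ univ.filter (fun j => eT j = eT j1), κ j * ux j t1 1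
          = ∑ j ∈ univ.filter (fun j => eI j = eT j1), κ j * ux j t1 0 := by linarith
      calc ∑ j ∈ univ.filter (fun j => eT j = eT j1), κ j * (E t1 * ux j t1 1)
          = E t1 * ∑ j ∈ univ.filter (fun j => eT j = eT j1), κ j * ux j t1 1 := by
            rw [Finset.mul_sum]; exact Finset.sum_congr rfl fun j _ => by ring
        _ = E t1 * ∑ j ∈ univ.filter (fun j => eI j = eT j1), κ j * ux j t1 0 := by rw [h4]
        _ = _ := by rw [Finset.mul_sum]; exact Finset.sum_congr rfl fun j _ => by ring
    have hle1 : ∑ j ∈ univ.filter (fun j => eT j = eT j1), κ j * (E t1 * ux j t1 1)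
        ≤ ∑ j ∈ univ.filter (fun j => eT j = eT j1), κ j * (-ε) :=
      Finset.sum_le_sum fun j hj =>
        mul_le_mul_of_nonneg_left (hTneq j (Finset.mem_filter.1 hj).2) (hκ j).le
    have hge1 : ∑ j ∈ univ.filter (fun j => eI j = eT j1), κ j * ε
        ≤ ∑ j ∈ univ.filter (fun j => eI j = eT j1), κ j * (E t1 * ux j t1 0) :=
      Finset.sum_le_sum fun j hj =>
        mul_le_mul_of_nonneg_left (hIneq j (Finset.mem_filter.1 hj).2) (hκ j).le
    have hsingle : κ j1 * ε ≤ ∑ j ∈ univ.filter (fun j => eT j = eT j1), κ j * ε :=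
      Finset.single_le_sum (f := fun j => κ j * ε)
        (fun i _ => (mul_pos (hκ i) hε).le)
        (Finset.mem_filter.2 ⟨Finset.mem_univ _, rfl⟩)
    have hneg2 : ∑ j ∈ univ.filter (fun j => eT j = eT j1), κ j * (-ε)
        = -∑ j ∈ univ.filter (fun j => eT j = eT j1), κ j * ε := by
      rw [← Finset.sum_neg_distrib]
      exact Finset.sum_congr rfl fun j _ => by ring
    have hnn : 0 ≤ ∑ j ∈ univ.filter (fun j => eI j = eT j1), κ j * ε :=
      Finset.sum_nonneg fun j _ => (mul_pos (hκ j) hε).le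
    nlinarith [mul_pos (hκ j1) hε]
  · -- interior case
    obtain ⟨hx1a, hx1b⟩ := hio
    have hminx : IsMinOn (fun x => w j1 t1 x) (Set.Icc 0 1) x1 :=
      isMinOn_iff.2 fun x hx => hWdef ▸ hglob j1 t1 ht1 x hx
    have hd0 := aux_min_deriv hminx hx1 h01 (hwx j1 t1 ht1 x1 hx1)
    have hd1 := aux_min_deriv hminx hx1 h11 (hwx j1 t1 ht1 x1 hx1)
    have hwx0 : E t1 * ux j1 t1 x1 + ε * (2*x1 - 1) = 0 := by
      have hle : E t1 * ux j1 t1 x1 + ε * (2*x1 - 1) ≤ 0 := by nlinarith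
      have hge : 0 ≤ E t1 * ux j1 t1 x1 + ε * (2*x1 - 1) := by nlinarith
      linarith
    have hxx := aux_second_deriv_nonneg (f := fun x => w j1 t1 x)
      (f' := fun y => E t1 * ux j1 t1 y + ε * (2*y - 1)) ⟨hx1a, hx1b⟩ hminx
      (fun y hy => hwx j1 t1 ht1 y hy) (hwxx j1 t1 ht1 x1 hx1) hwx0
    have hmint : IsMinOn (fun s => w j1 s x1) (Set.Icc 0 T) t1 :=
      isMinOn_iff.2 fun s hs => hWdef ▸ hglob j1 s hs x1 hx1
    have hdt := aux_min_deriv hmint ht1 h0T (hwt j1 t1 ht1 x1 hx1)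
    have hwT : E t1 * ut j1 t1 x1 - lam * (E t1 * u j1 t1 x1) ≤ 0 := by nlinarith
    have hpde1 := hpde j1 t1 ht1 x1 hx1
    have hcxb := abs_le.1 (hM1 j1 t1 ht1 x1 hx1)
    have hcxxb := abs_le.1 (hM2 j1 t1 ht1 x1 hx1)
    have hvW : E t1 * u j1 t1 x1 ≤ a/2 := by
      have h1 : E t1 * u j1 t1 x1 + ε * (x1^2 - x1) = W := by rw [hWdef]; simp [hwdef]
      nlinarith [mul_nonneg hε.le (sq_nonneg (x1 - 1/2)), mul_nonneg hM1nn hε.le]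
    -- final contradiction
    have hsubst : E t1 * (ux j1 t1 x1 * cx j1 t1 x1)
        = -(ε * (2*x1 - 1)) * cx j1 t1 x1 := by
      have h' : E t1 * ux j1 t1 x1 = -(ε * (2*x1 - 1)) := by linarith
      rw [← mul_assoc, h']
    have hterm1 : -(ε * M1) ≤ ε * (2*x1 - 1) * cx j1 t1 x1 := by
      nlinarith [mul_nonneg (mul_nonneg hε.le (by linarith : (0:ℝ) ≤ 2 - 2*x1))
          (by linarith [hcxb.2] : 0 ≤ M1 - cx j1 t1 x1),
        mul_nonneg (mul_nonneg hε.le (by linarith : (0:ℝ) ≤ 2*x1))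
          (by linarith [hcxb.1] : 0 ≤ M1 + cx j1 t1 x1)]
    have hX : 0 < -(E t1 * u j1 t1 x1) := by nlinarith
    have hterm2 : -a/2 ≤ -(E t1 * u j1 t1 x1) * (cxx j1 t1 x1 + M2 + 1) := by
      nlinarith [mul_nonneg hX.le (by linarith [hcxxb.1] : 0 ≤ cxx j1 t1 x1 + M2)]
    have hfinal : 0 < E t1 * ut j1 t1 x1 - lam * (E t1 * u j1 t1 x1) := by
      rw [hpde1, hlam]
      nlinarith [hxx, hterm1, hterm2, hsubst, hεprod, mul_nonneg hM1nn hε.le]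
    linarith
end

section
/- Let α ≥ 0, let c : [0,1] → ℝ be twice continuously differentiable and u : [0,1] → ℝ continuous, with c'' = α·c − u on [0,1], c ≥ 0 and u ≥ 0 on [0,1]. Then c'(0) ≤ 2·∫₀¹ c(x) dx + ∫₀¹ u(x) dx. -/
open MeasureTheory

/-- **Edge-wise upper bound on `c'(0)`.**
Let `c : [0,1] → ℝ` be twice continuously differentiable (with `c1 = c'`, `c2 = c''`) and
`u : [0,1] → ℝ` continuous, with `c'' = α c − u`, `c ≥ 0`, `u ≥ 0` on `[0,1]`, `α ≥ 0`.
Then `c'(0) ≤ 2 ∫₀¹ c + ∫₀¹ u`. -/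
theorem stmt_12 (α : ℝ) (hα : 0 ≤ α) (c u c1 c2 : ℝ → ℝ)
    (hc1 : ∀ x ∈ Set.Icc (0:ℝ) 1, HasDerivWithinAt c (c1 x) (Set.Icc 0 1) x)
    (hc2 : ∀ x ∈ Set.Icc (0:ℝ) 1, HasDerivWithinAt c1 (c2 x) (Set.Icc 0 1) x)
    (hc2cont : ContinuousOn c2 (Set.Icc 0 1))
    (hucont : ContinuousOn u (Set.Icc 0 1))
    (heq : ∀ x ∈ Set.Icc (0:ℝ) 1, c2 x = α * c x - u x)
    (hcpos : ∀ x ∈ Set.Icc (0:ℝ) 1, 0 ≤ c x)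
    (hupos : ∀ x ∈ Set.Icc (0:ℝ) 1, 0 ≤ u x) :
    c1 0 ≤ 2 * (∫ x in (0:ℝ)..1, c x) + ∫ x in (0:ℝ)..1, u x := by
  set U := ∫ x in (0:ℝ)..1, u x with hU
  have hc1cont : ContinuousOn c1 (Set.Icc 0 1) := fun x hx =>
    (hc2 x hx).continuousWithinAt
  have hccont : ContinuousOn c (Set.Icc 0 1) := fun x hx =>
    (hc1 x hx).continuousWithinAt
  have hu_int : IntervalIntegrable u volume 0 1 := by
    apply ContinuousOn.intervalIntegrable
    rwa [Set.uIcc_of_le (by norm_num : (0:ℝ) ≤ 1)]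
  -- Step 1 : c1 η ≥ c1 0 - U for η ∈ [0,1]
  have step1 : ∀ η ∈ Set.Icc (0:ℝ) 1, c1 0 - U ≤ c1 η := by
    intro η hη
    obtain ⟨hη0, hη1⟩ := hη
    have hsub : Set.Icc (0:ℝ) η ⊆ Set.Icc 0 1 :=
      Set.Icc_subset_Icc le_rfl hη1
    have hftc : ∫ y in (0:ℝ)..η, c2 y = c1 η - c1 0 := by
      apply intervalIntegral.integral_eq_sub_of_hasDeriv_right_of_le hη0
        (hc1cont.mono hsub)
      · intro x hx
        have hx' : x ∈ Set.Icc (0:ℝ) 1 := hsub (Set.Ioo_subset_Icc_self hx)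
        exact ((hc2 x hx').hasDerivAt
          (Icc_mem_nhds (lt_of_lt_of_le hx.1 le_rfl) (lt_of_lt_of_le hx.2 hη1))).hasDerivWithinAt
      · apply ContinuousOn.intervalIntegrable
        rw [Set.uIcc_of_le hη0]
        exact hc2cont.mono hsub
    have hmono : ∫ y in (0:ℝ)..η, (-u y) ≤ ∫ y in (0:ℝ)..η, c2 y := by
      apply intervalIntegral.integral_mono_on hη0
      · apply ContinuousOn.intervalIntegrable
        rw [Set.uIcc_of_le hη0]
        exact (hucont.mono hsub).neg
      · apply ContinuousOn.intervalIntegrable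
        rw [Set.uIcc_of_le hη0]
        exact hc2cont.mono hsub
      · intro x hx
        have hx' : x ∈ Set.Icc (0:ℝ) 1 := hsub hx
        rw [heq x hx']
        nlinarith [hcpos x hx', mul_nonneg hα (hcpos x hx')]
    have htail : ∫ y in (0:ℝ)..η, u y ≤ U := by
      rw [hU]
      apply intervalIntegral.integral_mono_interval le_rfl hη0 hη1 _ hu_int
      filter_upwards [ae_restrict_mem measurableSet_Ioc] with x hx
      exact hupos x ⟨le_of_lt hx.1, hx.2⟩
    have hneg : ∫ y in (0:ℝ)..η, (-u y) = -∫ y in (0:ℝ)..η, u y := by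
      simp [intervalIntegral.integral_neg]
    linarith [hftc ▸ hmono, hneg ▸ hmono]
  -- Step 2 : c x ≥ x * (c1 0 - U) for x ∈ [0,1]
  have step2 : ∀ x ∈ Set.Icc (0:ℝ) 1, x * (c1 0 - U) ≤ c x := by
    intro x hx
    obtain ⟨hx0, hx1⟩ := hx
    have hsub : Set.Icc (0:ℝ) x ⊆ Set.Icc 0 1 :=
      Set.Icc_subset_Icc le_rfl hx1
    have hftc : ∫ y in (0:ℝ)..x, c1 y = c x - c 0 := by
      apply intervalIntegral.integral_eq_sub_of_hasDeriv_right_of_le hx0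
        (hccont.mono hsub)
      · intro y hy
        have hy' : y ∈ Set.Icc (0:ℝ) 1 := hsub (Set.Ioo_subset_Icc_self hy)
        exact ((hc1 y hy').hasDerivAt
          (Icc_mem_nhds hy.1 (lt_of_lt_of_le hy.2 hx1))).hasDerivWithinAt
      · apply ContinuousOn.intervalIntegrable
        rw [Set.uIcc_of_le hx0]
        exact hc1cont.mono hsub
    have hmono : ∫ y in (0:ℝ)..x, (c1 0 - U) ≤ ∫ y in (0:ℝ)..x, c1 y := by
      apply intervalIntegral.integral_mono_on hx0
      · exact intervalIntegrable_const
      · apply ContinuousOn.intervalIntegrable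
        rw [Set.uIcc_of_le hx0]
        exact hc1cont.mono hsub
      · intro y hy
        exact step1 y (hsub hy)
    rw [intervalIntegral.integral_const, smul_eq_mul, sub_zero] at hmono
    have := hcpos 0 (by norm_num)
    linarith [hftc ▸ hmono]
  -- Step 3 : integrate step2 over [0,1]
  have step3 : (1:ℝ)/2 * (c1 0 - U) ≤ ∫ x in (0:ℝ)..1, c x := by
    have hmono : ∫ x in (0:ℝ)..1, x * (c1 0 - U) ≤ ∫ x in (0:ℝ)..1, c x := by
      apply intervalIntegral.integral_mono_on (by norm_num)
      · exact (continuous_id.mul continuous_const).intervalIntegrable 0 1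
      · apply ContinuousOn.intervalIntegrable
        rwa [Set.uIcc_of_le (by norm_num : (0:ℝ) ≤ 1)]
      · exact step2
    have hval : ∫ x in (0:ℝ)..1, x * (c1 0 - U) = (1:ℝ)/2 * (c1 0 - U) := by
      rw [intervalIntegral.integral_mul_const, integral_id]
      norm_num
    linarith [hval ▸ hmono]
  linarith
end

section
/- For all α > 0 and κ₀ > 0 there exists a constant C > 0, depending only on α and κ₀, with the following property: for every finite weighted network whose weights satisfy κ j ≥ κ₀ for all edges j, and for all functions c, u on the network such that each c j is twice continuously differentiable on [0,1], each u j is continuous on [0,1], −(c j)'' = u j − α·c j on [0,1] for every j, c satisfies the Kirchhoff condition at every vertex, and c j ≥ 0, u j ≥ 0 on [0,1] for every j, one has max_j sup_{x∈[0,1]} (|c j(x)| + |(c j)'(x)|) ≤ C·M, where M := ∑_j κ j ∫₀¹ u j(x) dx. -/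
open Finset MeasureTheory

lemma edge_bound (A D : ℝ)
    (c c1 c2 : ℝ → ℝ)
    (hc : ∀ x ∈ Set.Icc (0:ℝ) 1, HasDerivWithinAt c (c1 x) (Set.Icc 0 1) x)
    (hc1 : ∀ x ∈ Set.Icc (0:ℝ) 1, HasDerivWithinAt c1 (c2 x) (Set.Icc 0 1) x)
    (hc2cont : ContinuousOn c2 (Set.Icc 0 1))
    (hcnn : ∀ x ∈ Set.Icc (0:ℝ) 1, 0 ≤ c x)
    (hintc : ∫ x in (0:ℝ)..1, c x ≤ A)
    (hintc2 : ∫ x in (0:ℝ)..1, |c2 x| ≤ D) :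
    ∀ x ∈ Set.Icc (0:ℝ) 1, |c x| + |c1 x| ≤ 39 * A + 2 * D := by
  have hccont : ContinuousOn c (Set.Icc 0 1) := fun x hx => (hc x hx).continuousWithinAt
  have hc1cont : ContinuousOn c1 (Set.Icc 0 1) := fun x hx => (hc1 x hx).continuousWithinAt
  have hderiv : ∀ x ∈ Set.Ioo (0:ℝ) 1, HasDerivAt c (c1 x) x := fun x hx =>
    (hc x (Set.Ioo_subset_Icc_self hx)).hasDerivAt (Icc_mem_nhds hx.1 hx.2)
  have hderiv1 : ∀ x ∈ Set.Ioo (0:ℝ) 1, HasDerivAt c1 (c2 x) x := fun x hx =>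
    (hc1 x (Set.Ioo_subset_Icc_self hx)).hasDerivAt (Icc_mem_nhds hx.1 hx.2)
  have huIcc : Set.uIcc (0:ℝ) 1 = Set.Icc 0 1 := Set.uIcc_of_le zero_le_one
  have hci : IntervalIntegrable c volume 0 1 :=
    (hccont.mono huIcc.le).intervalIntegrable
  have hc2i : IntervalIntegrable c2 volume 0 1 :=
    (hc2cont.mono huIcc.le).intervalIntegrable
  have hc2ai : IntervalIntegrable (fun x => |c2 x|) volume 0 1 := hc2i.abs
  have hA : 0 ≤ A := le_trans (intervalIntegral.integral_nonneg (by norm_num)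
    (fun x hx => hcnn x hx)) hintc
  have hD : 0 ≤ D := le_trans (intervalIntegral.integral_nonneg (by norm_num)
    (fun x _ => abs_nonneg _)) hintc2
  have hsub13 : Set.Icc (0:ℝ) (1/3) ⊆ Set.Icc 0 1 := Set.Icc_subset_Icc le_rfl (by norm_num)
  have hsub23 : Set.Icc (2/3:ℝ) 1 ⊆ Set.Icc 0 1 := Set.Icc_subset_Icc (by norm_num) le_rfl
  obtain ⟨a, ha, hamin⟩ := isCompact_Icc.exists_isMinOn (Set.nonempty_Icc.mpr (by norm_num))
    (hccont.mono hsub13)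
  obtain ⟨b, hb, hbmin⟩ := isCompact_Icc.exists_isMinOn (Set.nonempty_Icc.mpr (by norm_num))
    (hccont.mono hsub23)
  have ha' : a ∈ Set.Icc (0:ℝ) 1 := hsub13 ha
  have hb' : b ∈ Set.Icc (0:ℝ) 1 := hsub23 hb
  have hmono : ∀ p q : ℝ, p ∈ Set.Icc (0:ℝ) 1 → q ∈ Set.Icc (0:ℝ) 1 → p ≤ q →
      (∫ x in p..q, c x) ≤ A := by
    intro p q hp hq hpq
    refine le_trans (intervalIntegral.integral_mono_interval hp.1 hpq hq.2 ?_ hci) hintc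
    filter_upwards [ae_restrict_mem measurableSet_Ioc] with x hx
    exact hcnn x ⟨le_of_lt hx.1, hx.2⟩
  have hci13 : IntervalIntegrable c volume 0 (1/3) := by
    apply ContinuousOn.intervalIntegrable
    rw [Set.uIcc_of_le (by norm_num : (0:ℝ) ≤ 1/3)]
    exact hccont.mono hsub13
  have hci23 : IntervalIntegrable c volume (2/3) 1 := by
    apply ContinuousOn.intervalIntegrable
    rw [Set.uIcc_of_le (by norm_num : (2/3:ℝ) ≤ 1)]
    exact hccont.mono hsub23
  have hca : c a ≤ 3 * A := by
    have h1 : (∫ _ in (0:ℝ)..(1/3), c a) ≤ ∫ x in (0:ℝ)..(1/3), c x :=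
      intervalIntegral.integral_mono_on (by norm_num) intervalIntegrable_const hci13
        (fun x hx => hamin hx)
    rw [intervalIntegral.integral_const, smul_eq_mul] at h1
    have h2 : (∫ x in (0:ℝ)..(1/3), c x) ≤ A :=
      hmono 0 (1/3) (by norm_num) (by norm_num) (by norm_num)
    nlinarith
  have hcb : c b ≤ 3 * A := by
    have h1 : (∫ _ in (2/3:ℝ)..1, c b) ≤ ∫ x in (2/3:ℝ)..1, c x :=
      intervalIntegral.integral_mono_on (by norm_num) intervalIntegrable_const hci23
        (fun x hx => hbmin hx)
    rw [intervalIntegral.integral_const, smul_eq_mul] at h1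
    have h2 : (∫ x in (2/3:ℝ)..1, c x) ≤ A :=
      hmono (2/3) 1 (by norm_num) (by norm_num) (by norm_num)
    nlinarith
  have hab : a < b := lt_of_le_of_lt ha.2 (lt_of_lt_of_le (by norm_num) hb.1)
  obtain ⟨η, hη, hηslope⟩ := exists_hasDerivAt_eq_slope c c1 hab
    (hccont.mono (Set.Icc_subset_Icc ha'.1 hb'.2))
    (fun x hx => hderiv x ⟨lt_of_le_of_lt ha'.1 hx.1, lt_of_lt_of_le hx.2 hb'.2⟩)
  have hη' : η ∈ Set.Icc (0:ℝ) 1 := ⟨le_of_lt (lt_of_le_of_lt ha'.1 hη.1),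
    le_of_lt (lt_of_lt_of_le hη.2 hb'.2)⟩
  have hba : (1:ℝ)/3 ≤ b - a := by
    have := ha.2; have := hb.1; linarith
  have hc1η : |c1 η| ≤ 18 * A := by
    rw [hηslope, abs_div, div_le_iff₀ (by rw [abs_of_pos (by linarith : 0 < b - a)]; linarith)]
    have h1 : |c b - c a| ≤ 6 * A := by
      have := hcnn a ha'; have := hcnn b hb'
      rw [abs_sub_le_iff]; constructor <;> linarith
    have h2 : (1:ℝ)/3 ≤ |b - a| := by rw [abs_of_pos (by linarith)]; linarith
    nlinarith [abs_nonneg (b - a)]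
  have hftc1 : ∀ x ∈ Set.Icc (0:ℝ) 1, ∀ y ∈ Set.Icc (0:ℝ) 1,
      (∫ t in x..y, c2 t) = c1 y - c1 x := by
    intro x hx y hy
    apply intervalIntegral.integral_eq_sub_of_hasDeriv_right
    · exact hc1cont.mono (Set.uIcc_subset_Icc hx hy)
    · intro t ht
      have ht' : t ∈ Set.Ioo (0:ℝ) 1 := ⟨lt_of_le_of_lt (le_min hx.1 hy.1) ht.1,
        lt_of_lt_of_le ht.2 (max_le hx.2 hy.2)⟩
      exact (hderiv1 t ht').hasDerivWithinAt
    · exact hc2i.mono_set (Set.uIcc_subset_uIcc (huIcc.symm ▸ hx) (huIcc.symm ▸ hy))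
  have hc1bound : ∀ x ∈ Set.Icc (0:ℝ) 1, |c1 x| ≤ 18 * A + D := by
    intro x hx
    have hsub : (∫ t in η..x, c2 t) = c1 x - c1 η := hftc1 η hη' x hx
    have habs : |∫ t in η..x, c2 t| ≤ D := by
      have h1 : |∫ t in η..x, c2 t| ≤ abs (∫ t in η..x, |c2 t|) := by
        rcases le_total η x with h | h
        · rw [abs_of_nonneg (intervalIntegral.integral_nonneg h (fun t _ => abs_nonneg _))]
          exact intervalIntegral.abs_integral_le_integral_abs h
        · rw [intervalIntegral.integral_symm, intervalIntegral.integral_symm x η, abs_neg,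
            abs_neg, abs_of_nonneg (intervalIntegral.integral_nonneg h (fun t _ => abs_nonneg _))]
          exact intervalIntegral.abs_integral_le_integral_abs h
      have h2 : abs (∫ t in η..x, |c2 t|) ≤ abs (∫ t in (0:ℝ)..1, |c2 t|) := by
        apply intervalIntegral.abs_integral_mono_interval ?_ ?_ hc2ai
        · rw [Set.uIoc_of_le zero_le_one]
          rcases le_total η x with h | h
          · rw [Set.uIoc_of_le h]
            exact Set.Ioc_subset_Ioc hη'.1 hx.2
          · rw [Set.uIoc_of_ge h]
            exact Set.Ioc_subset_Ioc hx.1 hη'.2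
        · filter_upwards with t using abs_nonneg _
      have h3 : abs (∫ t in (0:ℝ)..1, |c2 t|) ≤ D := by
        rw [abs_of_nonneg (intervalIntegral.integral_nonneg (by norm_num)
          (fun t _ => abs_nonneg _))]
        exact hintc2
      linarith
    have : |c1 x| - |c1 η| ≤ |c1 x - c1 η| := abs_sub_abs_le_abs_sub _ _
    rw [← hsub] at this
    linarith
  intro x hx
  have hftc0 : (∫ t in a..x, c1 t) = c x - c a := by
    apply intervalIntegral.integral_eq_sub_of_hasDeriv_right
    · exact hccont.mono (Set.uIcc_subset_Icc ha' hx)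
    · intro t ht
      have ht' : t ∈ Set.Ioo (0:ℝ) 1 := ⟨lt_of_le_of_lt (le_min ha'.1 hx.1) ht.1,
        lt_of_lt_of_le ht.2 (max_le ha'.2 hx.2)⟩
      exact (hderiv t ht').hasDerivWithinAt
    · exact (hc1cont.mono (Set.uIcc_subset_Icc ha' hx)).intervalIntegrable
  have hcxa : |c x - c a| ≤ 18 * A + D := by
    rw [← hftc0]
    have h1 : ‖∫ t in a..x, c1 t‖ ≤ (18 * A + D) * |x - a| := by
      apply intervalIntegral.norm_integral_le_of_norm_le_const
      intro t ht
      apply hc1bound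
      exact ⟨le_trans (le_min ha'.1 hx.1) (le_of_lt ht.1),
        le_trans ht.2 (max_le ha'.2 hx.2)⟩
    have h2 : |x - a| ≤ 1 := by
      rw [abs_sub_le_iff]
      constructor
      · linarith [hx.2, ha'.1]
      · linarith [ha'.2, hx.1]
    have hADnn : 0 ≤ 18 * A + D := by linarith
    calc |∫ t in a..x, c1 t| ≤ (18 * A + D) * |x - a| := h1
      _ ≤ (18 * A + D) * 1 := by nlinarith
      _ = 18 * A + D := by ring
  have hcx : |c x| ≤ 3 * A + (18 * A + D) := by
    have h := abs_add_le (c a) (c x - c a)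
    have heq : c a + (c x - c a) = c x := by ring
    rw [heq] at h
    rw [abs_of_nonneg (hcnn a ha')] at h
    linarith
  have := hc1bound x hx
  linarith


/-- **Uniform `W^{1,∞}` bound for the chemical concentration.**
For all `α > 0`, `κ₀ > 0` there is `C > 0`, depending only on `α` and `κ₀`, such that on
any finite weighted network with weights `κ_j ≥ κ₀`, any nonnegative solution `(c,u)` of
`−c_j'' = u_j − α c_j` on each edge (with `c1 = c'`, `c2 = c''`, `u` continuous, `c`
satisfying the Kirchhoff condition at every vertex) satisfies
`max_j sup_{x∈[0,1]} (|c_j(x)| + |c_j'(x)|) ≤ C·M`, where `M = ∑_j κ_j ∫₀¹ u_j`. -/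
theorem stmt_13 (α κ₀ : ℝ) (hα : 0 < α) (hκ₀ : 0 < κ₀) :
    ∃ C > 0, ∀ (n m : ℕ) (_ : 1 ≤ m) (eI eT : Fin m → Fin n) (_ : ∀ j, eI j ≠ eT j)
      (κ : Fin m → ℝ) (_ : ∀ j, κ₀ ≤ κ j) (c u c1 c2 : Fin m → ℝ → ℝ),
      -- c is twice continuously differentiable on [0,1], with c1 = c', c2 = c''
      (∀ j, ∀ x ∈ Set.Icc (0:ℝ) 1, HasDerivWithinAt (c j) (c1 j x) (Set.Icc 0 1) x) →
      (∀ j, ∀ x ∈ Set.Icc (0:ℝ) 1, HasDerivWithinAt (c1 j) (c2 j x) (Set.Icc 0 1) x) →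
      (∀ j, ContinuousOn (c2 j) (Set.Icc 0 1)) →
      -- u is continuous on [0,1]
      (∀ j, ContinuousOn (u j) (Set.Icc 0 1)) →
      -- the elliptic equation −c'' = u − α c
      (∀ j, ∀ x ∈ Set.Icc (0:ℝ) 1, -(c2 j x) = u j x - α * c j x) →
      -- Kirchhoff condition for c at every vertex
      (∀ v : Fin n,
        ∑ j ∈ univ.filter (fun j => eT j = v), κ j * c1 j 1
          - ∑ j ∈ univ.filter (fun j => eI j = v), κ j * c1 j 0 = 0) →
      -- nonnegativity
      (∀ j, ∀ x ∈ Set.Icc (0:ℝ) 1, 0 ≤ c j x) →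
      (∀ j, ∀ x ∈ Set.Icc (0:ℝ) 1, 0 ≤ u j x) →
      ∀ j, ∀ x ∈ Set.Icc (0:ℝ) 1,
        |c j x| + |c1 j x| ≤ C * ∑ i, κ i * ∫ y in (0:ℝ)..1, u i y := by
  refine ⟨39 / (α * κ₀) + 4 / κ₀, by positivity, ?_⟩
  intro n m _ eI eT _ κ hκ c u c1 c2 hc hc1 hc2cont hucont heq hkir hcnn hunn j x hx
  set M := ∑ i, κ i * ∫ y in (0:ℝ)..1, u i y with hM
  have huIcc : Set.uIcc (0:ℝ) 1 = Set.Icc 0 1 := Set.uIcc_of_le zero_le_one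
  -- basic facts per edge
  have hccontOn : ∀ i, ContinuousOn (c i) (Set.Icc 0 1) :=
    fun i => fun y hy => (hc i y hy).continuousWithinAt
  have hc1contOn : ∀ i, ContinuousOn (c1 i) (Set.Icc 0 1) :=
    fun i => fun y hy => (hc1 i y hy).continuousWithinAt
  have hci : ∀ i, IntervalIntegrable (c i) volume 0 1 :=
    fun i => ((hccontOn i).mono huIcc.le).intervalIntegrable
  have hui : ∀ i, IntervalIntegrable (u i) volume 0 1 :=
    fun i => ((hucont i).mono huIcc.le).intervalIntegrable
  have hc2i : ∀ i, IntervalIntegrable (c2 i) volume 0 1 :=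
    fun i => ((hc2cont i).mono huIcc.le).intervalIntegrable
  have hintc_nn : ∀ i, 0 ≤ ∫ y in (0:ℝ)..1, c i y :=
    fun i => intervalIntegral.integral_nonneg zero_le_one (fun y hy => hcnn i y hy)
  have hintu_nn : ∀ i, 0 ≤ ∫ y in (0:ℝ)..1, u i y :=
    fun i => intervalIntegral.integral_nonneg zero_le_one (fun y hy => hunn i y hy)
  have hκpos : ∀ i, 0 < κ i := fun i => lt_of_lt_of_le hκ₀ (hκ i)
  have hMnn : 0 ≤ M := Finset.sum_nonneg
    (fun i _ => mul_nonneg (hκpos i).le (hintu_nn i))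
  -- FTC on each edge
  have hftc : ∀ i, (∫ y in (0:ℝ)..1, c2 i y) = c1 i 1 - c1 i 0 := by
    intro i
    apply intervalIntegral.integral_eq_sub_of_hasDeriv_right_of_le zero_le_one
      (hc1contOn i)
    · intro t ht
      exact ((hc1 i t (Set.Ioo_subset_Icc_self ht)).hasDerivAt
        (Icc_mem_nhds ht.1 ht.2)).hasDerivWithinAt
    · exact hc2i i
  -- the equation in integrated form
  have heqInt : ∀ i, (∫ y in (0:ℝ)..1, c2 i y)
      = α * (∫ y in (0:ℝ)..1, c i y) - ∫ y in (0:ℝ)..1, u i y := by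
    intro i
    have h1 : (∫ y in (0:ℝ)..1, c2 i y)
        = ∫ y in (0:ℝ)..1, (α * c i y - u i y) := by
      apply intervalIntegral.integral_congr
      intro y hy
      have := heq i y (huIcc ▸ hy)
      simp only []
      linarith
    rw [h1, intervalIntegral.integral_sub ((hci i).const_mul α) (hui i),
      intervalIntegral.integral_const_mul]
  -- Kirchhoff: total flux is zero
  have hflux : ∑ i, κ i * c1 i 1 = ∑ i, κ i * c1 i 0 := by
    have h0 : ∑ v : Fin n, (∑ j ∈ univ.filter (fun j => eT j = v), κ j * c1 j 1
        - ∑ j ∈ univ.filter (fun j => eI j = v), κ j * c1 j 0) = 0 :=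
      Finset.sum_eq_zero (fun v _ => hkir v)
    rw [Finset.sum_sub_distrib] at h0
    have h1 : ∑ v : Fin n, ∑ j ∈ univ.filter (fun j => eT j = v), κ j * c1 j 1
        = ∑ i, κ i * c1 i 1 := Finset.sum_fiberwise univ eT _
    have h2 : ∑ v : Fin n, ∑ j ∈ univ.filter (fun j => eI j = v), κ j * c1 j 0
        = ∑ i, κ i * c1 i 0 := Finset.sum_fiberwise univ eI _
    rw [h1, h2] at h0
    linarith
  -- hence α Σ κ ∫ c = M
  have hbalance : α * ∑ i, κ i * ∫ y in (0:ℝ)..1, c i y = M := by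
    have h0 : ∑ i, κ i * ((∫ y in (0:ℝ)..1, c2 i y)) = 0 := by
      have : ∑ i, κ i * (c1 i 1 - c1 i 0) = 0 := by
        simp only [mul_sub, Finset.sum_sub_distrib]
        linarith [hflux]
      calc ∑ i, κ i * ((∫ y in (0:ℝ)..1, c2 i y))
          = ∑ i, κ i * (c1 i 1 - c1 i 0) := by
            exact Finset.sum_congr rfl (fun i _ => by rw [hftc i])
        _ = 0 := this
    have h1 : ∑ i, κ i * ((∫ y in (0:ℝ)..1, c2 i y))
        = α * (∑ i, κ i * ∫ y in (0:ℝ)..1, c i y) - M := by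
      rw [hM, Finset.mul_sum, ← Finset.sum_sub_distrib]
      apply Finset.sum_congr rfl
      intro i _
      rw [heqInt i]
      ring
    rw [h1] at h0
    linarith
  -- single-edge integral bounds
  have hcj : (∫ y in (0:ℝ)..1, c j y) ≤ M / (α * κ₀) := by
    have h1 : κ j * (∫ y in (0:ℝ)..1, c j y)
        ≤ ∑ i, κ i * ∫ y in (0:ℝ)..1, c i y :=
      Finset.single_le_sum (fun i _ => mul_nonneg (hκpos i).le (hintc_nn i))
        (Finset.mem_univ j)
    rw [le_div_iff₀ (by positivity)]
    have h2 := mul_le_mul_of_nonneg_left h1 hα.le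
    have h3 := mul_le_mul_of_nonneg_right (hκ j) (mul_nonneg hα.le (hintc_nn j))
    nlinarith [hintc_nn j]
  have huj : (∫ y in (0:ℝ)..1, u j y) ≤ M / κ₀ := by
    have h1 : κ j * (∫ y in (0:ℝ)..1, u j y) ≤ M :=
      Finset.single_le_sum (fun i _ => mul_nonneg (hκpos i).le (hintu_nn i))
        (Finset.mem_univ j)
    rw [le_div_iff₀ hκ₀]
    nlinarith [hintu_nn j, hκ j]
  have hc2j : (∫ y in (0:ℝ)..1, |c2 j y|) ≤ 2 * M / κ₀ := by
    have hle : (∫ y in (0:ℝ)..1, |c2 j y|)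
        ≤ ∫ y in (0:ℝ)..1, (α * c j y + u j y) := by
      apply intervalIntegral.integral_mono_on zero_le_one (hc2i j).abs
        (((hci j).const_mul α).add (hui j))
      intro y hy
      have he := heq j y hy
      have h1 := hcnn j y hy
      have h2 := hunn j y hy
      rw [abs_le]
      constructor <;> nlinarith
    rw [intervalIntegral.integral_add ((hci j).const_mul α) (hui j),
      intervalIntegral.integral_const_mul] at hle
    have : α * (∫ y in (0:ℝ)..1, c j y) ≤ M / κ₀ := by
      calc α * (∫ y in (0:ℝ)..1, c j y) ≤ α * (M / (α * κ₀)) :=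
            mul_le_mul_of_nonneg_left hcj hα.le
        _ = M / κ₀ := by field_simp
    calc (∫ y in (0:ℝ)..1, |c2 j y|)
        ≤ α * (∫ y in (0:ℝ)..1, c j y) + ∫ y in (0:ℝ)..1, u j y := hle
      _ ≤ M / κ₀ + M / κ₀ := add_le_add this huj
      _ = 2 * M / κ₀ := by ring
  have hfinal := edge_bound (M / (α * κ₀)) (2 * M / κ₀) (c j) (c1 j) (c2 j)
    (hc j) (hc1 j) (hc2cont j) (hcnn j) hcj hc2j x hx
  calc |c j x| + |c1 j x| ≤ 39 * (M / (α * κ₀)) + 2 * (2 * M / κ₀) := hfinal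
    _ = (39 / (α * κ₀) + 4 / κ₀) * M := by field_simp; ring
end

section
/- Let α > 0 and let w, z be functions on a finite weighted network such that each w j is twice continuously differentiable on [0,1], each z j is continuous on [0,1], −(w j)'' = z j − α·w j on [0,1] for every j, w is continuous at the vertices, and w satisfies the Kirchhoff condition at every vertex. Then for every edge j and every x ∈ [0,1], inf_{i, y∈[0,1]} z i(y) ≤ α·w j(x) ≤ sup_{i, y∈[0,1]} z i(y). -/
open Finset Set Filter Topology

open Finset Set Filter Topology

private lemma left_slope_nonpos {f : ℝ → ℝ} {f' : ℝ}
    (hf : HasDerivWithinAt f f' (Set.Icc (0:ℝ) 1) 0)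
    (hmax : ∀ x ∈ Set.Icc (0:ℝ) 1, f x ≤ f 0) : f' ≤ 0 := by
  rw [hasDerivWithinAt_iff_tendsto_slope, Set.Icc_diff_left,
    nhdsWithin_Ioc_eq_nhdsGT one_pos] at hf
  refine le_of_tendsto hf ?_
  filter_upwards [Ioc_mem_nhdsGT_of_mem (Set.left_mem_Ico.2 one_pos)] with x hx
  have h1 : f x ≤ f 0 := hmax x ⟨hx.1.le, hx.2⟩
  rw [slope_def_field]
  apply div_nonpos_of_nonpos_of_nonneg (by linarith) (by linarith [hx.1])

private lemma right_slope_nonneg {f : ℝ → ℝ} {f' : ℝ}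
    (hf : HasDerivWithinAt f f' (Set.Icc (0:ℝ) 1) 1)
    (hmax : ∀ x ∈ Set.Icc (0:ℝ) 1, f x ≤ f 1) : 0 ≤ f' := by
  rw [hasDerivWithinAt_iff_tendsto_slope, Set.Icc_sdiff_right,
    nhdsWithin_Ico_eq_nhdsLT one_pos] at hf
  refine ge_of_tendsto hf ?_
  filter_upwards [Ico_mem_nhdsLT one_pos] with x hx
  have h1 : f x ≤ f 1 := hmax x ⟨hx.1, hx.2.le⟩
  rw [slope_def_field]
  exact div_nonneg_iff.2 (Or.inr ⟨by linarith, by linarith [hx.2]⟩)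

private lemma no_max_with (f f1 f2 : ℝ → ℝ)
    (hf1 : ∀ x ∈ Set.Icc (0:ℝ) 1, HasDerivWithinAt f (f1 x) (Set.Icc 0 1) x)
    (hf2 : ∀ x ∈ Set.Icc (0:ℝ) 1, HasDerivWithinAt f1 (f2 x) (Set.Icc 0 1) x)
    {x0 : ℝ} (hx0 : x0 ∈ Set.Icc (0:ℝ) 1)
    (hmax : ∀ x ∈ Set.Icc (0:ℝ) 1, f x ≤ f x0)
    (h1 : f1 x0 = 0) (h2 : 0 < f2 x0) : False := by
  have hcont : ContinuousOn f (Set.Icc 0 1) :=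
    fun x hx => (hf1 x hx).continuousWithinAt
  have hslope := hf2 x0 hx0
  rw [hasDerivWithinAt_iff_tendsto_slope] at hslope
  have hev : ∀ᶠ x in 𝓝[Set.Icc (0:ℝ) 1 \ {x0}] x0, 0 < slope f1 x0 x :=
    hslope.eventually (eventually_gt_nhds h2)
  obtain ⟨ε, hε, hball⟩ := Metric.mem_nhdsWithin_iff.1 hev
  rcases lt_or_eq_of_le hx0.2 with hlt | heq1
  · -- x0 < 1 : f1 > 0 on (x0, c]
    set c := min (x0 + ε/2) 1 with hc
    have hx0c : x0 < c := lt_min (by linarith) hlt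
    have hc1 : c ≤ 1 := min_le_right _ _
    have hpos : ∀ x ∈ Set.Ioo x0 c, 0 < f1 x := by
      intro x hx
      have hxI : x ∈ Set.Icc (0:ℝ) 1 := ⟨le_trans hx0.1 hx.1.le, le_trans hx.2.le hc1⟩
      have hball' : x ∈ Metric.ball x0 ε := by
        rw [Metric.mem_ball, Real.dist_eq, abs_of_pos (by linarith [hx.1])]
        have : x < x0 + ε/2 := lt_of_lt_of_le hx.2 (min_le_left _ _)
        linarith
      have := hball ⟨hball', hxI, fun h => absurd h (ne_of_gt hx.1)⟩
      rw [Set.mem_setOf_eq, slope_def_field, h1, sub_zero] at this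
      rcases div_pos_iff.1 this with ⟨h, _⟩ | ⟨_, h⟩
      · exact h
      · linarith [hx.1]
    have hmono : StrictMonoOn f (Set.Icc x0 c) := by
      apply strictMonoOn_of_deriv_pos (convex_Icc x0 c)
      · exact hcont.mono (Set.Icc_subset_Icc hx0.1 hc1)
      · intro x hx
        rw [interior_Icc] at hx
        have hxI : x ∈ Set.Ioo (0:ℝ) 1 := ⟨lt_of_le_of_lt hx0.1 hx.1, lt_of_lt_of_le hx.2 hc1⟩
        have hd : HasDerivAt f (f1 x) x :=
          (hf1 x (Set.mem_Icc_of_Ioo hxI)).hasDerivAt (Icc_mem_nhds hxI.1 hxI.2)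
        rw [hd.deriv]
        exact hpos x hx
    have h3 : f x0 < f c :=
      hmono (Set.left_mem_Icc.2 hx0c.le) (Set.right_mem_Icc.2 hx0c.le) hx0c
    have h4 : f c ≤ f x0 := hmax c ⟨le_trans hx0.1 hx0c.le, hc1⟩
    linarith
  · -- x0 = 1 : f1 < 0 on [c, 1)
    subst heq1
    set c := max (1 - ε/2) 0 with hc
    have hc1 : c < 1 := max_lt (by linarith) one_pos
    have hc0 : 0 ≤ c := le_max_right _ _
    have hneg : ∀ x ∈ Set.Ioo c 1, f1 x < 0 := by
      intro x hx
      have hxI : x ∈ Set.Icc (0:ℝ) 1 := ⟨le_trans hc0 hx.1.le, hx.2.le⟩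
      have hball' : x ∈ Metric.ball 1 ε := by
        rw [Metric.mem_ball, Real.dist_eq, abs_of_neg (by linarith [hx.2])]
        have : 1 - ε/2 < x := lt_of_le_of_lt (le_max_left _ _) hx.1
        linarith
      have := hball ⟨hball', hxI, fun h => absurd h (ne_of_lt hx.2)⟩
      rw [Set.mem_setOf_eq, slope_def_field, h1, sub_zero] at this
      rcases div_pos_iff.1 this with ⟨_, h⟩ | ⟨h, _⟩
      · linarith [hx.2]
      · exact h
    have hanti : StrictAntiOn f (Set.Icc c 1) := by
      apply strictAntiOn_of_deriv_neg (convex_Icc c 1)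
      · exact hcont.mono (Set.Icc_subset_Icc hc0 le_rfl)
      · intro x hx
        rw [interior_Icc] at hx
        have hxI : x ∈ Set.Ioo (0:ℝ) 1 := ⟨lt_of_le_of_lt hc0 hx.1, hx.2⟩
        have hd : HasDerivAt f (f1 x) x :=
          (hf1 x (Set.mem_Icc_of_Ioo hxI)).hasDerivAt (Icc_mem_nhds hxI.1 hxI.2)
        rw [hd.deriv]
        exact hneg x hx
    have h3 : f 1 < f c :=
      hanti (Set.left_mem_Icc.2 hc1.le) (Set.right_mem_Icc.2 hc1.le) hc1
    have h4 : f c ≤ f 1 := hmax c ⟨hc0, hc1.le⟩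
    linarith

private lemma network_key (n m : ℕ) (hm : 1 ≤ m) (eI eT : Fin m → Fin n)
    (κ : Fin m → ℝ) (hκ : ∀ j, 0 < κ j) (α : ℝ) (hα : 0 < α)
    (w z w1 w2 : Fin m → ℝ → ℝ)
    (hw1 : ∀ j, ∀ x ∈ Set.Icc (0:ℝ) 1, HasDerivWithinAt (w j) (w1 j x) (Set.Icc 0 1) x)
    (hw2 : ∀ j, ∀ x ∈ Set.Icc (0:ℝ) 1, HasDerivWithinAt (w1 j) (w2 j x) (Set.Icc 0 1) x)
    (heq : ∀ j, ∀ x ∈ Set.Icc (0:ℝ) 1, -(w2 j x) = z j x - α * w j x)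
    (b : Fin n → ℝ) (hwb : ∀ j, w j 0 = b (eI j) ∧ w j 1 = b (eT j))
    (hKw : ∀ v : Fin n,
      ∑ j ∈ univ.filter (fun j => eT j = v), κ j * w1 j 1
        - ∑ j ∈ univ.filter (fun j => eI j = v), κ j * w1 j 0 = 0) :
    ∃ i, ∃ y ∈ Set.Icc (0:ℝ) 1, ∀ j, ∀ x ∈ Set.Icc (0:ℝ) 1, α * w j x ≤ z i y := by
  haveI : Nonempty (Fin m) := ⟨⟨0, hm⟩⟩
  have hcont : ∀ j, ContinuousOn (w j) (Set.Icc 0 1) :=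
    fun j x hx => (hw1 j x hx).continuousWithinAt
  -- per-edge maximizers
  have hmaxj : ∀ j : Fin m, ∃ x ∈ Set.Icc (0:ℝ) 1, ∀ y ∈ Set.Icc (0:ℝ) 1, w j y ≤ w j x := by
    intro j
    obtain ⟨x, hx, hmax⟩ := isCompact_Icc.exists_isMaxOn
      (Set.nonempty_Icc.2 zero_le_one) (hcont j)
    exact ⟨x, hx, fun y hy => hmax hy⟩
  choose xm hxm hxmax using hmaxj
  obtain ⟨j0, _, hj0⟩ := Finset.exists_max_image univ (fun j => w j (xm j))
    ⟨⟨0, hm⟩, mem_univ _⟩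
  set x0 := xm j0 with hx0def
  have hx0 : x0 ∈ Set.Icc (0:ℝ) 1 := hxm j0
  set M := w j0 x0 with hM
  have hglob : ∀ i, ∀ y ∈ Set.Icc (0:ℝ) 1, w i y ≤ M :=
    fun i y hy => le_trans (hxmax i y hy) (hj0 i (mem_univ i))
  -- the derivative vanishes at the maximum point
  have h1 : w1 j0 x0 = 0 := by
    rcases eq_or_lt_of_le hx0.1 with h0 | h0
    · -- x0 = 0 : Kirchhoff at eI j0
      have h00 : x0 = 0 := h0.symm
      set v := eI j0 with hv
      have hbv : b v = M := by rw [← (hwb j0).1, hM, h00]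
      have htermT : ∀ j ∈ univ.filter (fun j => eT j = v), 0 ≤ κ j * w1 j 1 := by
        intro j hj
        rw [mem_filter] at hj
        have hw1max : ∀ x ∈ Set.Icc (0:ℝ) 1, w j x ≤ w j 1 := by
          intro x hx
          rw [(hwb j).2, hj.2, hbv]
          exact hglob j x hx
        exact mul_nonneg (hκ j).le (right_slope_nonneg (hw1 j 1 (Set.right_mem_Icc.2 zero_le_one)) hw1max)
      have htermI : ∀ j ∈ univ.filter (fun j => eI j = v), κ j * w1 j 0 ≤ 0 := by
        intro j hj
        rw [mem_filter] at hj
        have hw0max : ∀ x ∈ Set.Icc (0:ℝ) 1, w j x ≤ w j 0 := by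
          intro x hx
          rw [(hwb j).1, hj.2, hbv]
          exact hglob j x hx
        exact mul_nonpos_of_nonneg_of_nonpos (hκ j).le
          (left_slope_nonpos (hw1 j 0 (Set.left_mem_Icc.2 zero_le_one)) hw0max)
      have hK := hKw v
      have hS1 : 0 ≤ ∑ j ∈ univ.filter (fun j => eT j = v), κ j * w1 j 1 :=
        Finset.sum_nonneg htermT
      have hS2 : ∑ j ∈ univ.filter (fun j => eI j = v), κ j * w1 j 0 ≤ 0 :=
        Finset.sum_nonpos htermI
      have hS20 : ∑ j ∈ univ.filter (fun j => eI j = v), κ j * w1 j 0 = 0 := le_antisymm hS2 (by linarith)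
      have hj0mem : j0 ∈ univ.filter (fun j => eI j = v) := mem_filter.2 ⟨mem_univ _, rfl⟩
      have := (Finset.sum_eq_zero_iff_of_nonpos htermI).1 hS20 j0 hj0mem
      have hκ0 := (hκ j0).ne'
      rw [h00]
      exact (mul_eq_zero.1 this).resolve_left hκ0
    rcases eq_or_lt_of_le hx0.2 with h1' | h1'
    · -- x0 = 1 : Kirchhoff at eT j0
      set v := eT j0 with hv
      have hbv : b v = M := by rw [← (hwb j0).2, hM, h1']
      have htermT : ∀ j ∈ univ.filter (fun j => eT j = v), 0 ≤ κ j * w1 j 1 := by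
        intro j hj
        rw [mem_filter] at hj
        have hw1max : ∀ x ∈ Set.Icc (0:ℝ) 1, w j x ≤ w j 1 := by
          intro x hx
          rw [(hwb j).2, hj.2, hbv]
          exact hglob j x hx
        exact mul_nonneg (hκ j).le (right_slope_nonneg (hw1 j 1 (Set.right_mem_Icc.2 zero_le_one)) hw1max)
      have htermI : ∀ j ∈ univ.filter (fun j => eI j = v), κ j * w1 j 0 ≤ 0 := by
        intro j hj
        rw [mem_filter] at hj
        have hw0max : ∀ x ∈ Set.Icc (0:ℝ) 1, w j x ≤ w j 0 := by
          intro x hx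
          rw [(hwb j).1, hj.2, hbv]
          exact hglob j x hx
        exact mul_nonpos_of_nonneg_of_nonpos (hκ j).le
          (left_slope_nonpos (hw1 j 0 (Set.left_mem_Icc.2 zero_le_one)) hw0max)
      have hK := hKw v
      have hS1 : 0 ≤ ∑ j ∈ univ.filter (fun j => eT j = v), κ j * w1 j 1 :=
        Finset.sum_nonneg htermT
      have hS2 : ∑ j ∈ univ.filter (fun j => eI j = v), κ j * w1 j 0 ≤ 0 :=
        Finset.sum_nonpos htermI
      have hS10 : ∑ j ∈ univ.filter (fun j => eT j = v), κ j * w1 j 1 = 0 := le_antisymm (by linarith) hS1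
      have hj0mem : j0 ∈ univ.filter (fun j => eT j = v) := mem_filter.2 ⟨mem_univ _, rfl⟩
      have := (Finset.sum_eq_zero_iff_of_nonneg htermT).1 hS10 j0 hj0mem
      have hκ0 := (hκ j0).ne'
      rw [h1']
      exact (mul_eq_zero.1 this).resolve_left hκ0
    · -- interior maximum
      have hmem : Set.Icc (0:ℝ) 1 ∈ 𝓝 x0 := Icc_mem_nhds h0 h1'
      have hlm : IsLocalMax (w j0) x0 := by
        filter_upwards [hmem] with x hx
        exact hglob j0 x hx
      exact hlm.hasDerivAt_eq_zero ((hw1 j0 x0 hx0).hasDerivAt hmem)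
  -- main estimate
  have hkey : α * M ≤ z j0 x0 := by
    by_contra h
    push_neg at h
    have h2 : 0 < w2 j0 x0 := by
      have := heq j0 x0 hx0
      rw [hM] at *
      linarith
    exact no_max_with (w j0) (w1 j0) (w2 j0) (hw1 j0) (hw2 j0) hx0 (hglob j0) h1 h2
  exact ⟨j0, x0, hx0, fun j x hx =>
    le_trans (mul_le_mul_of_nonneg_left (hglob j x hx) hα.le) hkey⟩

/-- **Elliptic maximum principle on a network.**
On a finite weighted network, if `−w_j'' = z_j − α w_j` on each edge (with `w1 = w'`,
`w2 = w''`, `z` continuous edge by edge), `w` is continuous at the vertices and satisfies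
the Kirchhoff condition at every vertex, then for every edge `j` and every `x ∈ [0,1]`,
`inf_{i,y} z_i(y) ≤ α w_j(x) ≤ sup_{i,y} z_i(y)`. -/
theorem stmt_14 (n m : ℕ) (hm : 1 ≤ m) (eI eT : Fin m → Fin n) (hIT : ∀ j, eI j ≠ eT j)
    (κ : Fin m → ℝ) (hκ : ∀ j, 0 < κ j) (α : ℝ) (hα : 0 < α)
    (w z w1 w2 : Fin m → ℝ → ℝ)
    -- w is twice continuously differentiable on [0,1], with w1 = w', w2 = w''
    (hw1 : ∀ j, ∀ x ∈ Set.Icc (0:ℝ) 1, HasDerivWithinAt (w j) (w1 j x) (Set.Icc 0 1) x)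
    (hw2 : ∀ j, ∀ x ∈ Set.Icc (0:ℝ) 1, HasDerivWithinAt (w1 j) (w2 j x) (Set.Icc 0 1) x)
    (hw2cont : ∀ j, ContinuousOn (w2 j) (Set.Icc 0 1))
    -- z is continuous on [0,1]
    (hzcont : ∀ j, ContinuousOn (z j) (Set.Icc 0 1))
    -- the elliptic equation −w'' = z − α w
    (heq : ∀ j, ∀ x ∈ Set.Icc (0:ℝ) 1, -(w2 j x) = z j x - α * w j x)
    -- w is continuous at the vertices
    (b : Fin n → ℝ) (hwb : ∀ j, w j 0 = b (eI j) ∧ w j 1 = b (eT j))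
    -- Kirchhoff condition for w at every vertex
    (hKw : ∀ v : Fin n,
      ∑ j ∈ univ.filter (fun j => eT j = v), κ j * w1 j 1
        - ∑ j ∈ univ.filter (fun j => eI j = v), κ j * w1 j 0 = 0) :
    ∀ j, ∀ x ∈ Set.Icc (0:ℝ) 1,
      (⨅ i, ⨅ y : Set.Icc (0:ℝ) 1, z i (y : ℝ)) ≤ α * w j x ∧
      α * w j x ≤ ⨆ i, ⨆ y : Set.Icc (0:ℝ) 1, z i (y : ℝ) := by
  haveI : Nonempty (Fin m) := ⟨⟨0, hm⟩⟩
  have hbddA : ∀ i : Fin m, BddAbove (Set.range fun y : Set.Icc (0:ℝ) 1 => z i (y : ℝ)) := by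
    intro i
    have : Set.range (fun y : Set.Icc (0:ℝ) 1 => z i (y : ℝ)) = z i '' Set.Icc 0 1 := by
      rw [← Set.range_restrict]; rfl
    rw [this]
    exact (isCompact_Icc.image_of_continuousOn (hzcont i)).bddAbove
  have hbddB : ∀ i : Fin m, BddBelow (Set.range fun y : Set.Icc (0:ℝ) 1 => z i (y : ℝ)) := by
    intro i
    have : Set.range (fun y : Set.Icc (0:ℝ) 1 => z i (y : ℝ)) = z i '' Set.Icc 0 1 := by
      rw [← Set.range_restrict]; rfl
    rw [this]
    exact (isCompact_Icc.image_of_continuousOn (hzcont i)).bddBelow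
  intro j x hx
  constructor
  · -- lower bound: apply the key lemma to -w, -z
    obtain ⟨i, y, hy, hbound⟩ := network_key n m hm eI eT κ hκ α hα
      (fun j x => -(w j x)) (fun j x => -(z j x)) (fun j x => -(w1 j x)) (fun j x => -(w2 j x))
      (fun j x hx => (hw1 j x hx).neg) (fun j x hx => (hw2 j x hx).neg)
      (fun j x hx => by have := heq j x hx; ring_nf; ring_nf at this; linarith)
      (fun v => -(b v))
      (fun j => ⟨by rw [(hwb j).1], by rw [(hwb j).2]⟩)
      (fun v => by
        have := hKw v
        simp only [mul_neg, Finset.sum_neg_distrib]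
        linarith)
    have hz : z i y ≤ α * w j x := by
      have := hbound j x hx
      simp only [mul_neg] at this
      linarith
    refine le_trans ?_ hz
    refine le_trans (ciInf_le (f := fun i => ⨅ y : Set.Icc (0:ℝ) 1, z i (y : ℝ)) (Set.Finite.bddBelow (Set.finite_range _)) i) ?_
    exact ciInf_le (hbddB i) ⟨y, hy⟩
  · obtain ⟨i, y, hy, hbound⟩ := network_key n m hm eI eT κ hκ α hα
      w z w1 w2 hw1 hw2 heq b hwb hKw
    refine le_trans (hbound j x hx) ?_
    refine le_trans (le_ciSup (hbddA i) ⟨y, hy⟩) ?_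
    exact le_ciSup (f := fun i => ⨆ y : Set.Icc (0:ℝ) 1, z i (y : ℝ)) (Set.Finite.bddAbove (Set.finite_range _)) i
end

section
/- Let α > 0 and let w, z be functions on a finite weighted network such that each w j is twice continuously differentiable on [0,1], each z j is continuous on [0,1] with z j ≥ 0, −(w j)'' = z j − α·w j on [0,1] for every j, w is continuous at the vertices, and w satisfies the Kirchhoff condition at every vertex. Then max_j sup_{x∈[0,1]} |(w j)''(x)| ≤ sup_{i, y∈[0,1]} z i(y). -/
open Finset

/-- On `[c-ε, c]`, if `u'' ≥ δ > 0` and `u'(c) = 0`, then `u (c-ε) > u c`. -/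
private lemma no_max_left (u u1 u2 : ℝ → ℝ)
    (hu1 : ∀ x ∈ Set.Icc (0:ℝ) 1, HasDerivWithinAt u (u1 x) (Set.Icc 0 1) x)
    (hu2 : ∀ x ∈ Set.Icc (0:ℝ) 1, HasDerivWithinAt u1 (u2 x) (Set.Icc 0 1) x)
    (c ε δ : ℝ) (hc : c ∈ Set.Icc (0:ℝ) 1) (hd : u1 c = 0)
    (hδ : 0 < δ) (hε : 0 < ε) (hεc : ε ≤ c)
    (h2 : ∀ x ∈ Set.Icc (c - ε) c, δ ≤ u2 x) :
    u c < u (c - ε) := by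
  have hsub : Set.Icc (c - ε) c ⊆ Set.Icc (0:ℝ) 1 :=
    Set.Icc_subset_Icc (by linarith) hc.2
  have hint : interior (Set.Icc (c - ε) c) = Set.Ioo (c - ε) c := interior_Icc
  have hintsub : Set.Ioo (c - ε) c ⊆ Set.Icc (0:ℝ) 1 := fun x hx =>
    hsub ⟨le_of_lt hx.1, le_of_lt hx.2⟩
  have hcmem : c ∈ Set.Icc (c - ε) c := ⟨by linarith, le_refl c⟩
  -- Step 1: u1 x ≤ -(δ/2) * (c - x) on [c-ε, c]
  have step1 : ∀ x ∈ Set.Icc (c - ε) c, u1 x ≤ -(δ/2) * (c - x) := by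
    have hmono : MonotoneOn (fun t => u1 t - δ/2 * t) (Set.Icc (c - ε) c) := by
      apply monotoneOn_of_hasDerivWithinAt_nonneg (convex_Icc _ _)
        (f' := fun t => u2 t - δ/2)
      · exact fun x hx =>
          ((hu2 x (hsub hx)).continuousWithinAt.mono hsub).sub
            ((continuous_const.mul continuous_id).continuousWithinAt)
      · intro x hx
        rw [hint] at hx
        have h1 : HasDerivWithinAt u1 (u2 x) (Set.Ioo (c - ε) c) x :=
          (hu2 x (hintsub hx)).mono hintsub
        have h3 : HasDerivWithinAt (fun t => δ/2 * t) (δ/2) (Set.Ioo (c - ε) c) x := by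
          simpa using ((hasDerivAt_id x).const_mul (δ/2)).hasDerivWithinAt
        rw [hint]
        exact h1.sub h3
      · intro x hx
        rw [hint] at hx
        have := h2 x ⟨le_of_lt hx.1, le_of_lt hx.2⟩
        linarith
    intro x hx
    have := hmono hx hcmem hx.2
    simp only at this
    rw [hd] at this
    linarith
  -- Step 2: u t - δ/4 * (c - t)^2 is antitone on [c-ε, c]
  have step2 : AntitoneOn (fun t => u t - δ/4 * (c - t)^2) (Set.Icc (c - ε) c) := by
    apply antitoneOn_of_hasDerivWithinAt_nonpos (convex_Icc _ _)
      (f' := fun t => u1 t + δ/2 * (c - t))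
    · apply ContinuousOn.sub
      · exact fun x hx => (hu1 x (hsub hx)).continuousWithinAt.mono hsub
      · fun_prop
    · intro x hx
      rw [hint] at hx ⊢
      have h1 : HasDerivWithinAt u (u1 x) (Set.Ioo (c - ε) c) x :=
        (hu1 x (hintsub hx)).mono hintsub
      have h3 : HasDerivAt (fun t => δ/4 * (c - t)^2)
          (δ/4 * ((2:ℕ) * (c - x)^(2-1) * -1)) x :=
        (((hasDerivAt_id x).const_sub c).pow 2).const_mul (δ/4)
      have h3' : HasDerivWithinAt (fun t => δ/4 * (c - t)^2)
          (-(δ/2 * (c - x))) (Set.Ioo (c - ε) c) x := by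
        refine h3.hasDerivWithinAt.congr_deriv ?_
        push_cast
        ring
      have := h1.sub h3'
      refine this.congr_deriv ?_
      ring
    · intro x hx
      rw [hint] at hx
      have := step1 x ⟨le_of_lt hx.1, le_of_lt hx.2⟩
      linarith
  have hεmem : c - ε ∈ Set.Icc (c - ε) c := ⟨le_refl _, by linarith⟩
  have := step2 hεmem hcmem (by linarith)
  simp only at this
  nlinarith [mul_pos hδ (mul_pos hε hε)]

/-- On `[c, c+ε]`, if `u'' ≥ δ > 0` and `u'(c) = 0`, then `u (c+ε) > u c`. -/
private lemma no_max_right (u u1 u2 : ℝ → ℝ)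
    (hu1 : ∀ x ∈ Set.Icc (0:ℝ) 1, HasDerivWithinAt u (u1 x) (Set.Icc 0 1) x)
    (hu2 : ∀ x ∈ Set.Icc (0:ℝ) 1, HasDerivWithinAt u1 (u2 x) (Set.Icc 0 1) x)
    (c ε δ : ℝ) (hc : c ∈ Set.Icc (0:ℝ) 1) (hd : u1 c = 0)
    (hδ : 0 < δ) (hε : 0 < ε) (hεc : ε ≤ 1 - c)
    (h2 : ∀ x ∈ Set.Icc c (c + ε), δ ≤ u2 x) :
    u c < u (c + ε) := by
  have hsub : Set.Icc c (c + ε) ⊆ Set.Icc (0:ℝ) 1 :=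
    Set.Icc_subset_Icc hc.1 (by linarith)
  have hint : interior (Set.Icc c (c + ε)) = Set.Ioo c (c + ε) := interior_Icc
  have hintsub : Set.Ioo c (c + ε) ⊆ Set.Icc (0:ℝ) 1 := fun x hx =>
    hsub ⟨le_of_lt hx.1, le_of_lt hx.2⟩
  have hcmem : c ∈ Set.Icc c (c + ε) := ⟨le_refl c, by linarith⟩
  -- Step 1: u1 x ≥ (δ/2) * (x - c) on [c, c+ε]
  have step1 : ∀ x ∈ Set.Icc c (c + ε), (δ/2) * (x - c) ≤ u1 x := by
    have hmono : MonotoneOn (fun t => u1 t - δ/2 * t) (Set.Icc c (c + ε)) := by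
      apply monotoneOn_of_hasDerivWithinAt_nonneg (convex_Icc _ _)
        (f' := fun t => u2 t - δ/2)
      · exact fun x hx =>
          ((hu2 x (hsub hx)).continuousWithinAt.mono hsub).sub
            ((continuous_const.mul continuous_id).continuousWithinAt)
      · intro x hx
        rw [hint] at hx
        have h1 : HasDerivWithinAt u1 (u2 x) (Set.Ioo c (c + ε)) x :=
          (hu2 x (hintsub hx)).mono hintsub
        have h3 : HasDerivWithinAt (fun t => δ/2 * t) (δ/2) (Set.Ioo c (c + ε)) x := by
          simpa using ((hasDerivAt_id x).const_mul (δ/2)).hasDerivWithinAt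
        rw [hint]
        exact h1.sub h3
      · intro x hx
        rw [hint] at hx
        have := h2 x ⟨le_of_lt hx.1, le_of_lt hx.2⟩
        linarith
    intro x hx
    have := hmono hcmem hx hx.1
    simp only at this
    rw [hd] at this
    linarith
  -- Step 2: u t - δ/4 * (t - c)^2 is monotone on [c, c+ε]
  have step2 : MonotoneOn (fun t => u t - δ/4 * (t - c)^2) (Set.Icc c (c + ε)) := by
    apply monotoneOn_of_hasDerivWithinAt_nonneg (convex_Icc _ _)
      (f' := fun t => u1 t - δ/2 * (t - c))
    · apply ContinuousOn.sub
      · exact fun x hx => (hu1 x (hsub hx)).continuousWithinAt.mono hsub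
      · fun_prop
    · intro x hx
      rw [hint] at hx ⊢
      have h1 : HasDerivWithinAt u (u1 x) (Set.Ioo c (c + ε)) x :=
        (hu1 x (hintsub hx)).mono hintsub
      have h3 : HasDerivAt (fun t => δ/4 * (t - c)^2)
          (δ/4 * ((2:ℕ) * (x - c)^(2-1) * 1)) x :=
        (((hasDerivAt_id x).sub_const c).pow 2).const_mul (δ/4)
      have h3' : HasDerivWithinAt (fun t => δ/4 * (t - c)^2)
          (δ/2 * (x - c)) (Set.Ioo c (c + ε)) x := by
        refine h3.hasDerivWithinAt.congr_deriv ?_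
        push_cast
        ring
      exact h1.sub h3'
    · intro x hx
      rw [hint] at hx
      have := step1 x ⟨le_of_lt hx.1, le_of_lt hx.2⟩
      linarith
  have hεmem : c + ε ∈ Set.Icc c (c + ε) := ⟨by linarith, le_refl _⟩
  have := step2 hcmem hεmem (by linarith)
  simp only at this
  nlinarith [mul_pos hδ (mul_pos hε hε)]

/-- At a right-endpoint maximum, the within-derivative is nonnegative. -/
private lemma deriv_nonneg_at_one {f : ℝ → ℝ} {f' : ℝ}
    (hf : HasDerivWithinAt f f' (Set.Icc 0 1) 1)
    (hmax : ∀ y ∈ Set.Icc (0:ℝ) 1, f y ≤ f 1) : 0 ≤ f' := by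
  rw [hasDerivWithinAt_iff_tendsto_slope] at hf
  have hne : (nhdsWithin (1:ℝ) (Set.Icc (0:ℝ) 1 \ {1})).NeBot := by
    apply mem_closure_iff_nhdsWithin_neBot.mp
    have h1 : (1:ℝ) ∈ closure (Set.Ico (0:ℝ) 1) := by
      rw [closure_Ico (by norm_num : (0:ℝ) ≠ 1)]
      exact ⟨zero_le_one, le_refl 1⟩
    have hss : Set.Ico (0:ℝ) 1 ⊆ Set.Icc (0:ℝ) 1 \ {1} :=
      fun y hy => ⟨⟨hy.1, le_of_lt hy.2⟩, ne_of_lt hy.2⟩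
    exact closure_mono hss h1
  refine ge_of_tendsto hf ?_
  filter_upwards [self_mem_nhdsWithin] with y hy
  obtain ⟨hyI, hy1⟩ := hy
  have hylt : y < 1 := lt_of_le_of_ne hyI.2 (by simpa using hy1)
  rw [slope_def_field]
  rw [div_nonneg_iff]
  right
  exact ⟨by linarith [hmax y hyI], by linarith⟩

/-- At a left-endpoint maximum, the within-derivative is nonpositive. -/
private lemma deriv_nonpos_at_zero {f : ℝ → ℝ} {f' : ℝ}
    (hf : HasDerivWithinAt f f' (Set.Icc 0 1) 0)
    (hmax : ∀ y ∈ Set.Icc (0:ℝ) 1, f y ≤ f 0) : f' ≤ 0 := by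
  rw [hasDerivWithinAt_iff_tendsto_slope] at hf
  have hne : (nhdsWithin (0:ℝ) (Set.Icc (0:ℝ) 1 \ {0})).NeBot := by
    apply mem_closure_iff_nhdsWithin_neBot.mp
    have h1 : (0:ℝ) ∈ closure (Set.Ioc (0:ℝ) 1) := by
      rw [closure_Ioc (by norm_num : (0:ℝ) ≠ 1)]
      exact ⟨le_refl 0, zero_le_one⟩
    have hss : Set.Ioc (0:ℝ) 1 ⊆ Set.Icc (0:ℝ) 1 \ {0} :=
      fun y hy => ⟨⟨le_of_lt hy.1, hy.2⟩, ne_of_gt hy.1⟩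
    exact closure_mono hss h1
  refine le_of_tendsto hf ?_
  filter_upwards [self_mem_nhdsWithin] with y hy
  obtain ⟨hyI, hy0⟩ := hy
  have hygt : 0 < y := lt_of_le_of_ne hyI.1 (by simpa using (Ne.symm hy0))
  rw [slope_def_field, div_nonpos_iff]
  right
  exact ⟨by linarith [hmax y hyI], by linarith⟩

/-- **Network maximum principle core.** If `u'' ≥ δ > 0` wherever `u ≥ C`, `u` is
continuous at the vertices and satisfies the Kirchhoff condition, then `u ≤ C`. -/
private lemma network_max_principle (n m : ℕ) (hm : 1 ≤ m) (eI eT : Fin m → Fin n)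
    (κ : Fin m → ℝ) (hκ : ∀ j, 0 < κ j)
    (u u1 u2 : Fin m → ℝ → ℝ)
    (hu1 : ∀ j, ∀ x ∈ Set.Icc (0:ℝ) 1, HasDerivWithinAt (u j) (u1 j x) (Set.Icc 0 1) x)
    (hu2 : ∀ j, ∀ x ∈ Set.Icc (0:ℝ) 1, HasDerivWithinAt (u1 j) (u2 j x) (Set.Icc 0 1) x)
    (b : Fin n → ℝ) (hub : ∀ j, u j 0 = b (eI j) ∧ u j 1 = b (eT j))
    (hK : ∀ v : Fin n,
      ∑ j ∈ univ.filter (fun j => eT j = v), κ j * u1 j 1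
        - ∑ j ∈ univ.filter (fun j => eI j = v), κ j * u1 j 0 = 0)
    (C δ : ℝ) (hδ : 0 < δ)
    (hgrow : ∀ j, ∀ x ∈ Set.Icc (0:ℝ) 1, C ≤ u j x → δ ≤ u2 j x) :
    ∀ j, ∀ x ∈ Set.Icc (0:ℝ) 1, u j x ≤ C := by
  by_contra hcon
  push_neg at hcon
  obtain ⟨ja, xa, hxa, hCa⟩ := hcon
  have hucont : ∀ j, ContinuousOn (u j) (Set.Icc (0:ℝ) 1) :=
    fun j x hx => (hu1 j x hx).continuousWithinAt
  have hmaxj : ∀ j, ∃ x ∈ Set.Icc (0:ℝ) 1, ∀ y ∈ Set.Icc (0:ℝ) 1, u j y ≤ u j x := by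
    intro j
    obtain ⟨x, hx, hmax⟩ := isCompact_Icc.exists_isMaxOn
      (Set.nonempty_Icc.mpr zero_le_one) (hucont j)
    exact ⟨x, hx, fun y hy => hmax hy⟩
  choose xm hxm1 hxm2 using hmaxj
  obtain ⟨j0, -, hj0⟩ := Finset.exists_max_image univ (fun j => u j (xm j)) ⟨ja, mem_univ ja⟩
  set c := xm j0 with hcdef
  set M := u j0 c with hMdef
  have hc : c ∈ Set.Icc (0:ℝ) 1 := hxm1 j0
  have hM : ∀ j, ∀ y ∈ Set.Icc (0:ℝ) 1, u j y ≤ M :=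
    fun j y hy => (hxm2 j y hy).trans (hj0 j (mem_univ j))
  have hCM : C < M := lt_of_lt_of_le hCa (hM ja xa hxa)
  -- extraction of a neighborhood where u j0 > C
  have hextract : ∃ ρ > 0, ∀ x ∈ Set.Icc (0:ℝ) 1, |x - c| < ρ → C ≤ u j0 x := by
    have := (hucont j0 c hc)
    rw [Metric.continuousWithinAt_iff] at this
    obtain ⟨ρ, hρ, hball⟩ := this (M - C) (by linarith)
    refine ⟨ρ, hρ, fun x hx hd => ?_⟩
    have := hball hx (by rwa [Real.dist_eq])
    rw [Real.dist_eq] at this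
    have := abs_lt.mp this
    linarith [this.1]
  obtain ⟨ρ, hρ, hnear⟩ := hextract
  -- given zero derivative at c with room to the left, contradiction
  have keyL : 0 < c → u1 j0 c = 0 → False := by
    intro hc0 hd
    set ε := min (ρ/2) c with hεdef
    have hε : 0 < ε := lt_min (by linarith) hc0
    have hεc : ε ≤ c := min_le_right _ _
    have hin : ∀ x ∈ Set.Icc (c - ε) c, x ∈ Set.Icc (0:ℝ) 1 :=
      fun x hx => ⟨by linarith [hx.1], le_trans hx.2 hc.2⟩
    have h2 : ∀ x ∈ Set.Icc (c - ε) c, δ ≤ u2 j0 x := by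
      intro x hx
      refine hgrow j0 x (hin x hx) (hnear x (hin x hx) ?_)
      have h1 := hx.1; have h2' := hx.2
      rw [abs_lt]
      constructor <;> [skip; linarith]
      have : ε ≤ ρ/2 := min_le_left _ _
      linarith
    have := no_max_left (u j0) (u1 j0) (u2 j0) (hu1 j0) (hu2 j0) c ε δ hc hd hδ hε hεc h2
    have hmem : c - ε ∈ Set.Icc (0:ℝ) 1 := hin _ ⟨le_refl _, by linarith⟩
    exact absurd (hM j0 (c - ε) hmem) (not_le.mpr (by rw [hMdef]; exact this))
  have keyR : c < 1 → u1 j0 c = 0 → False := by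
    intro hc1 hd
    set ε := min (ρ/2) (1 - c) with hεdef
    have hε : 0 < ε := lt_min (by linarith) (by linarith)
    have hεc : ε ≤ 1 - c := min_le_right _ _
    have hin : ∀ x ∈ Set.Icc c (c + ε), x ∈ Set.Icc (0:ℝ) 1 :=
      fun x hx => ⟨le_trans hc.1 hx.1, by linarith [hx.2]⟩
    have h2 : ∀ x ∈ Set.Icc c (c + ε), δ ≤ u2 j0 x := by
      intro x hx
      refine hgrow j0 x (hin x hx) (hnear x (hin x hx) ?_)
      have h1 := hx.1; have h2' := hx.2
      rw [abs_lt]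
      constructor
      · have : ε ≤ ρ/2 := min_le_left _ _
        linarith
      · have : ε ≤ ρ/2 := min_le_left _ _
        linarith
    have := no_max_right (u j0) (u1 j0) (u2 j0) (hu1 j0) (hu2 j0) c ε δ hc hd hδ hε hεc h2
    have hmem : c + ε ∈ Set.Icc (0:ℝ) 1 := hin _ ⟨by linarith, le_refl _⟩
    exact absurd (hM j0 (c + ε) hmem) (not_le.mpr (by rw [hMdef]; exact this))
  -- Vertex analysis: if the max sits at a vertex v, all incident derivatives vanish
  have vertex : ∀ v : Fin n, b v = M →
      (∀ j, eT j = v → u1 j 1 = 0) ∧ (∀ j, eI j = v → u1 j 0 = 0) := by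
    intro v hbv
    have hT : ∀ j ∈ univ.filter (fun j => eT j = v), 0 ≤ κ j * u1 j 1 := by
      intro j hj
      rw [mem_filter] at hj
      have h1 : u j 1 = M := by rw [(hub j).2, hj.2, hbv]
      have : 0 ≤ u1 j 1 := deriv_nonneg_at_one (hu1 j 1 ⟨zero_le_one, le_refl 1⟩)
        (fun y hy => by rw [h1]; exact hM j y hy)
      exact mul_nonneg (le_of_lt (hκ j)) this
    have hI : ∀ j ∈ univ.filter (fun j => eI j = v), κ j * u1 j 0 ≤ 0 := by
      intro j hj
      rw [mem_filter] at hj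
      have h1 : u j 0 = M := by rw [(hub j).1, hj.2, hbv]
      have : u1 j 0 ≤ 0 := deriv_nonpos_at_zero (hu1 j 0 ⟨le_refl 0, zero_le_one⟩)
        (fun y hy => by rw [h1]; exact hM j y hy)
      exact mul_nonpos_of_nonneg_of_nonpos (le_of_lt (hκ j)) this
    have hKv := hK v
    have hA : 0 ≤ ∑ j ∈ univ.filter (fun j => eT j = v), κ j * u1 j 1 :=
      Finset.sum_nonneg hT
    have hB : ∑ j ∈ univ.filter (fun j => eI j = v), κ j * u1 j 0 ≤ 0 :=
      Finset.sum_nonpos hI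
    have hA0 : ∑ j ∈ univ.filter (fun j => eT j = v), κ j * u1 j 1 = 0 := by linarith
    have hB0 : ∑ j ∈ univ.filter (fun j => eI j = v), κ j * u1 j 0 = 0 := by linarith
    constructor
    · intro j hj
      have := (Finset.sum_eq_zero_iff_of_nonneg hT).mp hA0 j
        (mem_filter.mpr ⟨mem_univ j, hj⟩)
      rcases mul_eq_zero.mp this with h | h
      · exact absurd h (ne_of_gt (hκ j))
      · exact h
    · intro j hj
      have := (Finset.sum_eq_zero_iff_of_nonpos hI).mp hB0 j
        (mem_filter.mpr ⟨mem_univ j, hj⟩)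
      rcases mul_eq_zero.mp this with h | h
      · exact absurd h (ne_of_gt (hκ j))
      · exact h
  rcases eq_or_lt_of_le hc.1 with hc0 | hc0
  · -- c = 0 : vertex eI j0
    have hbv : b (eI j0) = M := by rw [← (hub j0).1, hMdef, ← hc0]
    have hd : u1 j0 0 = 0 := (vertex (eI j0) hbv).2 j0 rfl
    exact keyR (by rw [← hc0]; norm_num) (by rw [← hc0]; exact hd)
  · rcases eq_or_lt_of_le hc.2 with hc1 | hc1
    · -- c = 1 : vertex eT j0
      have hbv : b (eT j0) = M := by rw [← (hub j0).2, hMdef, hc1]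
      have hd : u1 j0 1 = 0 := (vertex (eT j0) hbv).1 j0 rfl
      exact keyL (by rw [hc1]; norm_num) (by rw [hc1]; exact hd)
    · -- interior
      have hda : HasDerivAt (u j0) (u1 j0 c) c :=
        (hu1 j0 c hc).hasDerivAt (Icc_mem_nhds hc0 hc1)
      have hloc : IsLocalMax (u j0) c := by
        filter_upwards [Icc_mem_nhds hc0 hc1] with y hy
        exact hM j0 y hy
      exact keyL hc0 (hloc.hasDerivAt_eq_zero hda)

/-- **Uniform bound on `w''` for the elliptic equation on a network.**
On a finite weighted network, if `−w_j'' = z_j − α w_j` on each edge (with `w1 = w'`,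
`w2 = w''`, `z` continuous and nonnegative edge by edge), `w` is continuous at the
vertices and satisfies the Kirchhoff condition at every vertex, then
`max_j sup_{x∈[0,1]} |w_j''(x)| ≤ sup_{i,y} z_i(y)`. -/
theorem stmt_15 (n m : ℕ) (hm : 1 ≤ m) (eI eT : Fin m → Fin n) (hIT : ∀ j, eI j ≠ eT j)
    (κ : Fin m → ℝ) (hκ : ∀ j, 0 < κ j) (α : ℝ) (hα : 0 < α)
    (w z w1 w2 : Fin m → ℝ → ℝ)
    -- w is twice continuously differentiable on [0,1], with w1 = w', w2 = w''
    (hw1 : ∀ j, ∀ x ∈ Set.Icc (0:ℝ) 1, HasDerivWithinAt (w j) (w1 j x) (Set.Icc 0 1) x)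
    (hw2 : ∀ j, ∀ x ∈ Set.Icc (0:ℝ) 1, HasDerivWithinAt (w1 j) (w2 j x) (Set.Icc 0 1) x)
    (hw2cont : ∀ j, ContinuousOn (w2 j) (Set.Icc 0 1))
    -- z is continuous and nonnegative on [0,1]
    (hzcont : ∀ j, ContinuousOn (z j) (Set.Icc 0 1))
    (hzpos : ∀ j, ∀ x ∈ Set.Icc (0:ℝ) 1, 0 ≤ z j x)
    -- the elliptic equation −w'' = z − α w
    (heq : ∀ j, ∀ x ∈ Set.Icc (0:ℝ) 1, -(w2 j x) = z j x - α * w j x)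
    -- w is continuous at the vertices
    (b : Fin n → ℝ) (hwb : ∀ j, w j 0 = b (eI j) ∧ w j 1 = b (eT j))
    -- Kirchhoff condition for w at every vertex
    (hKw : ∀ v : Fin n,
      ∑ j ∈ univ.filter (fun j => eT j = v), κ j * w1 j 1
        - ∑ j ∈ univ.filter (fun j => eI j = v), κ j * w1 j 0 = 0) :
    ∀ j, ∀ x ∈ Set.Icc (0:ℝ) 1,
      |w2 j x| ≤ ⨆ i, ⨆ y : Set.Icc (0:ℝ) 1, z i (y : ℝ) := by
  set S := ⨆ i, ⨆ y : Set.Icc (0:ℝ) 1, z i (y : ℝ) with hSdef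
  have hz_le : ∀ i, ∀ x ∈ Set.Icc (0:ℝ) 1, z i x ≤ S := by
    intro i x hx
    have hbdd1 : BddAbove (Set.range fun y : Set.Icc (0:ℝ) 1 => z i (y:ℝ)) := by
      have := (isCompact_Icc.image_of_continuousOn (hzcont i)).bddAbove
      rwa [Set.image_eq_range] at this
    have h1 : z i x ≤ ⨆ y : Set.Icc (0:ℝ) 1, z i (y:ℝ) :=
      le_ciSup hbdd1 (⟨x, hx⟩ : Set.Icc (0:ℝ) 1)
    have hbdd2 : BddAbove (Set.range fun i : Fin m =>
        ⨆ y : Set.Icc (0:ℝ) 1, z i (y:ℝ)) := (Set.finite_range _).bddAbove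
    exact h1.trans (le_ciSup hbdd2 i)
  have he : ∀ j, ∀ x ∈ Set.Icc (0:ℝ) 1, w2 j x = α * w j x - z j x :=
    fun j x hx => by linarith [heq j x hx]
  -- upper bound : α w ≤ S
  have Hmax : ∀ j, ∀ x ∈ Set.Icc (0:ℝ) 1, α * w j x ≤ S := by
    have key : ∀ ε > (0:ℝ), ∀ j, ∀ x ∈ Set.Icc (0:ℝ) 1, w j x ≤ S/α + ε := by
      intro ε hε
      apply network_max_principle n m hm eI eT κ hκ w w1 w2 hw1 hw2 b hwb hKw
        (S/α + ε) (α*ε) (mul_pos hα hε)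
      intro j x hx hge
      have h1 := he j x hx
      have h2 := hz_le j x hx
      have h3 : α * (S/α + ε) ≤ α * w j x := mul_le_mul_of_nonneg_left hge (le_of_lt hα)
      have h4 : α * (S/α + ε) = S + α * ε := by field_simp
      linarith
    intro j x hx
    have hw_le : w j x ≤ S/α :=
      le_of_forall_pos_le_add fun ε hε => key ε hε j x hx
    calc α * w j x ≤ α * (S/α) := mul_le_mul_of_nonneg_left hw_le (le_of_lt hα)
      _ = S := by field_simp
  -- lower bound : 0 ≤ w
  have Hmin : ∀ j, ∀ x ∈ Set.Icc (0:ℝ) 1, 0 ≤ w j x := by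
    have key : ∀ ε > (0:ℝ), ∀ j, ∀ x ∈ Set.Icc (0:ℝ) 1, -(w j x) ≤ ε := by
      intro ε hε
      apply network_max_principle n m hm eI eT κ hκ
        (fun j x => -(w j x)) (fun j x => -(w1 j x)) (fun j x => -(w2 j x))
        (fun j x hx => (hw1 j x hx).neg) (fun j x hx => (hw2 j x hx).neg)
        (fun v => -(b v))
        (fun j => ⟨by simp only [(hwb j).1], by simp only [(hwb j).2]⟩)
        ?_ ε (α*ε) (mul_pos hα hε) ?_
      · intro v
        have := hKw v
        simp only [mul_neg, Finset.sum_neg_distrib]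
        linarith
      · intro j x hx hge
        have h1 := he j x hx
        have h2 := hzpos j x hx
        have h3 : α * ε ≤ α * -(w j x) := mul_le_mul_of_nonneg_left hge (le_of_lt hα)
        have h4 : α * -(w j x) = -(α * w j x) := by ring
        linarith
    intro j x hx
    have : -(w j x) ≤ 0 := le_of_forall_pos_le_add fun ε hε => by
      simpa using key ε hε j x hx
    linarith
  intro j x hx
  have heq' := he j x hx
  have h1 := Hmax j x hx
  have h2 := Hmin j x hx
  have h3 := hz_le j x hx
  have h4 := hzpos j x hx
  rw [abs_le]
  constructor
  · have : 0 ≤ α * w j x := mul_nonneg (le_of_lt hα) h2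
    linarith
  · linarith
end

section
/- Let α > 0 and let z be a function on a finite weighted network such that each z j is continuous on [0,1] and z is continuous at the vertices. Then there exists exactly one function w on the network such that each w j is twice continuously differentiable on [0,1], w is continuous at the vertices, w satisfies the Kirchhoff condition at every vertex, and −(w j)'' = z j − α·w j on [0,1] for every edge j. -/
open Finset

/-- A function `w` on the network (with first and second spatial derivatives `w1`, `w2`
on each edge) is a solution of the elliptic problem `−w'' = z − α w` with continuity at
the vertices and Kirchhoff conditions. -/
def IsNetworkSolution (n m : ℕ) (eI eT : Fin m → Fin n) (κ : Fin m → ℝ) (α : ℝ)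
    (z w w1 w2 : Fin m → ℝ → ℝ) : Prop :=
  -- w is twice continuously differentiable on [0,1], with w1 = w', w2 = w''
  (∀ j, ∀ x ∈ Set.Icc (0:ℝ) 1, HasDerivWithinAt (w j) (w1 j x) (Set.Icc 0 1) x) ∧
  (∀ j, ∀ x ∈ Set.Icc (0:ℝ) 1, HasDerivWithinAt (w1 j) (w2 j x) (Set.Icc 0 1) x) ∧
  (∀ j, ContinuousOn (w2 j) (Set.Icc 0 1)) ∧
  -- w is continuous at the vertices
  (∃ b : Fin n → ℝ, ∀ j, w j 0 = b (eI j) ∧ w j 1 = b (eT j)) ∧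
  -- Kirchhoff condition at every vertex
  (∀ v : Fin n,
    ∑ j ∈ univ.filter (fun j => eT j = v), κ j * w1 j 1
      - ∑ j ∈ univ.filter (fun j => eI j = v), κ j * w1 j 0 = 0) ∧
  -- the elliptic equation −w'' = z − α w on every edge
  (∀ j, ∀ x ∈ Set.Icc (0:ℝ) 1, -(w2 j x) = z j x - α * w j x)


noncomputable def Pfun (β : ℝ) (f : ℝ → ℝ) (x : ℝ) : ℝ :=
  -(1/β) * (Real.sinh (β*x) * (∫ t in (0:ℝ)..x, Real.cosh (β*t) * f t)
          - Real.cosh (β*x) * (∫ t in (0:ℝ)..x, Real.sinh (β*t) * f t))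

noncomputable def Pfun' (β : ℝ) (f : ℝ → ℝ) (x : ℝ) : ℝ :=
  -(Real.cosh (β*x) * (∫ t in (0:ℝ)..x, Real.cosh (β*t) * f t)
   - Real.sinh (β*x) * (∫ t in (0:ℝ)..x, Real.sinh (β*t) * f t))

lemma hasDerivAt_primitive {g : ℝ → ℝ} (hg : Continuous g) (x : ℝ) :
    HasDerivAt (fun u => ∫ t in (0:ℝ)..u, g t) (g x) x :=
  intervalIntegral.integral_hasDerivAt_right (hg.intervalIntegrable 0 x)
    hg.stronglyMeasurable.stronglyMeasurableAtFilter hg.continuousAt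

lemma hasDerivAt_sinh_lin (β x : ℝ) :
    HasDerivAt (fun x => Real.sinh (β*x)) (β * Real.cosh (β*x)) x := by
  have h1 : HasDerivAt (fun x : ℝ => β * x) β x := by
    simpa using (hasDerivAt_id x).const_mul β
  have h2 := (Real.hasDerivAt_sinh (β*x)).comp x h1
  rw [mul_comm β (Real.cosh (β*x))]
  exact h2

lemma hasDerivAt_cosh_lin (β x : ℝ) :
    HasDerivAt (fun x => Real.cosh (β*x)) (β * Real.sinh (β*x)) x := by
  have h1 : HasDerivAt (fun x : ℝ => β * x) β x := by
    simpa using (hasDerivAt_id x).const_mul β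
  have h2 := (Real.hasDerivAt_cosh (β*x)).comp x h1
  rw [mul_comm β (Real.sinh (β*x))]
  exact h2

lemma hasDerivAt_Pfun {β : ℝ} (hβ : β ≠ 0) {f : ℝ → ℝ} (hf : Continuous f) (x : ℝ) :
    HasDerivAt (Pfun β f) (Pfun' β f x) x := by
  have hF := hasDerivAt_primitive (g := fun t => Real.cosh (β*t) * f t)
    ((Real.continuous_cosh.comp (continuous_const.mul continuous_id)).mul hf) x
  have hG := hasDerivAt_primitive (g := fun t => Real.sinh (β*t) * f t)
    ((Real.continuous_sinh.comp (continuous_const.mul continuous_id)).mul hf) x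
  have h := ((((hasDerivAt_sinh_lin β x).mul hF).sub
    ((hasDerivAt_cosh_lin β x).mul hG)).const_mul (-(1/β)))
  have hβ' : β * (1/β) = 1 := by field_simp
  refine h.congr_deriv (Eq.symm ?_)
  unfold Pfun'
  linear_combination ((Real.cosh (β*x) * (∫ t in (0:ℝ)..x, Real.cosh (β*t) * f t))
    - Real.sinh (β*x) * (∫ t in (0:ℝ)..x, Real.sinh (β*t) * f t)) * hβ'

lemma hasDerivAt_Pfun' {β : ℝ} (hβ : β ≠ 0) {f : ℝ → ℝ} (hf : Continuous f) (x : ℝ) :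
    HasDerivAt (Pfun' β f) (β^2 * Pfun β f x - f x) x := by
  have hF := hasDerivAt_primitive (g := fun t => Real.cosh (β*t) * f t)
    ((Real.continuous_cosh.comp (continuous_const.mul continuous_id)).mul hf) x
  have hG := hasDerivAt_primitive (g := fun t => Real.sinh (β*t) * f t)
    ((Real.continuous_sinh.comp (continuous_const.mul continuous_id)).mul hf) x
  have h := (((hasDerivAt_cosh_lin β x).mul hF).sub
    ((hasDerivAt_sinh_lin β x).mul hG)).neg
  have hβ' : β * (1/β) = 1 := by field_simp
  have key := Real.cosh_sq_sub_sinh_sq (β*x)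
  have e1 : β^2 * (1/β) = β := by field_simp [pow_two]
  refine h.congr_deriv (Eq.symm ?_)
  unfold Pfun
  linear_combination (-((Real.sinh (β*x) * (∫ t in (0:ℝ)..x, Real.cosh (β*t) * f t))
      - Real.cosh (β*x) * (∫ t in (0:ℝ)..x, Real.sinh (β*t) * f t))) * e1
    + (f x) * key

lemma Pfun_zero (β : ℝ) (f : ℝ → ℝ) : Pfun β f 0 = 0 := by
  simp [Pfun]

lemma Pfun'_zero (β : ℝ) (f : ℝ → ℝ) : Pfun' β f 0 = 0 := by
  simp [Pfun']

open Finset in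
/-- The vertex condition map for the homogeneous problem, with identity added at
isolated vertices. -/
noncomputable def netLf (n m : ℕ) (eI eT : Fin m → Fin n) (κ : Fin m → ℝ) (β : ℝ)
    (b : Fin n → ℝ) (v : Fin n) : ℝ :=
  (∑ j ∈ univ.filter (fun j => eT j = v),
      κ j * (β * Real.sinh β * b (eI j)
        + β * Real.cosh β * ((b (eT j) - b (eI j) * Real.cosh β) / Real.sinh β)))
  - (∑ j ∈ univ.filter (fun j => eI j = v),
      κ j * (β * ((b (eT j) - b (eI j) * Real.cosh β) / Real.sinh β)))
  + (if (univ.filter (fun j => eT j = v) = ∅ ∧ univ.filter (fun j => eI j = v) = ∅)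
      then b v else 0)

open Finset in
noncomputable def netL (n m : ℕ) (eI eT : Fin m → Fin n) (κ : Fin m → ℝ) (β : ℝ) :
    (Fin n → ℝ) →ₗ[ℝ] (Fin n → ℝ) where
  toFun := netLf n m eI eT κ β
  map_add' := by
    intro b c
    funext v
    simp only [netLf, Pi.add_apply]
    rw [show (∑ j ∈ univ.filter (fun j => eT j = v),
        κ j * (β * Real.sinh β * (b (eI j) + c (eI j))
          + β * Real.cosh β * (((b (eT j) + c (eT j)) - (b (eI j) + c (eI j)) * Real.cosh β) / Real.sinh β)))
      = (∑ j ∈ univ.filter (fun j => eT j = v),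
          (κ j * (β * Real.sinh β * b (eI j)
            + β * Real.cosh β * ((b (eT j) - b (eI j) * Real.cosh β) / Real.sinh β))
          + κ j * (β * Real.sinh β * c (eI j)
            + β * Real.cosh β * ((c (eT j) - c (eI j) * Real.cosh β) / Real.sinh β)))) from
      Finset.sum_congr rfl fun j _ => by ring]
    rw [show (∑ j ∈ univ.filter (fun j => eI j = v),
        κ j * (β * (((b (eT j) + c (eT j)) - (b (eI j) + c (eI j)) * Real.cosh β) / Real.sinh β)))
      = (∑ j ∈ univ.filter (fun j => eI j = v),
          (κ j * (β * ((b (eT j) - b (eI j) * Real.cosh β) / Real.sinh β))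
          + κ j * (β * ((c (eT j) - c (eI j) * Real.cosh β) / Real.sinh β)))) from
      Finset.sum_congr rfl fun j _ => by ring]
    rw [Finset.sum_add_distrib, Finset.sum_add_distrib]
    split_ifs <;> ring
  map_smul' := by
    intro a b
    funext v
    simp only [netLf, Pi.smul_apply, smul_eq_mul, RingHom.id_apply]
    rw [show (∑ j ∈ univ.filter (fun j => eT j = v),
        κ j * (β * Real.sinh β * (a * b (eI j))
          + β * Real.cosh β * ((a * b (eT j) - a * b (eI j) * Real.cosh β) / Real.sinh β)))
      = (∑ j ∈ univ.filter (fun j => eT j = v),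
          a * (κ j * (β * Real.sinh β * b (eI j)
            + β * Real.cosh β * ((b (eT j) - b (eI j) * Real.cosh β) / Real.sinh β)))) from
      Finset.sum_congr rfl fun j _ => by ring]
    rw [show (∑ j ∈ univ.filter (fun j => eI j = v),
        κ j * (β * ((a * b (eT j) - a * b (eI j) * Real.cosh β) / Real.sinh β)))
      = (∑ j ∈ univ.filter (fun j => eI j = v),
          a * (κ j * (β * ((b (eT j) - b (eI j) * Real.cosh β) / Real.sinh β)))) from
      Finset.sum_congr rfl fun j _ => by ring]
    rw [← Finset.mul_sum, ← Finset.mul_sum]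
    split_ifs <;> ring

open Finset in
lemma netLf_dot {n m : ℕ} (eI eT : Fin m → Fin n) (κ : Fin m → ℝ) {β : ℝ}
    (hsh : Real.sinh β ≠ 0) (b : Fin n → ℝ) :
    ∑ v, b v * netLf n m eI eT κ β b v
      = (∑ j, κ j * ((β / Real.sinh β)
          * ((Real.cosh β - 1) * (b (eI j)^2 + b (eT j)^2) + (b (eI j) - b (eT j))^2)))
        + ∑ v, (if (univ.filter (fun j => eT j = v) = ∅ ∧ univ.filter (fun j => eI j = v) = ∅)
            then b v ^ 2 else 0) := by
  have hT : ∑ v, b v * (∑ j ∈ univ.filter (fun j => eT j = v),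
      κ j * (β * Real.sinh β * b (eI j)
        + β * Real.cosh β * ((b (eT j) - b (eI j) * Real.cosh β) / Real.sinh β)))
      = ∑ j, b (eT j) * (κ j * (β * Real.sinh β * b (eI j)
        + β * Real.cosh β * ((b (eT j) - b (eI j) * Real.cosh β) / Real.sinh β))) := by
    rw [← Finset.sum_fiberwise_of_maps_to (fun j _ => mem_univ (eT j))
      (fun j => b (eT j) * (κ j * (β * Real.sinh β * b (eI j)
        + β * Real.cosh β * ((b (eT j) - b (eI j) * Real.cosh β) / Real.sinh β))))]
    refine Finset.sum_congr rfl fun v _ => ?_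
    rw [Finset.mul_sum]
    exact Finset.sum_congr rfl fun j hj => by rw [(Finset.mem_filter.mp hj).2]
  have hI : ∑ v, b v * (∑ j ∈ univ.filter (fun j => eI j = v),
      κ j * (β * ((b (eT j) - b (eI j) * Real.cosh β) / Real.sinh β)))
      = ∑ j, b (eI j) * (κ j * (β * ((b (eT j) - b (eI j) * Real.cosh β) / Real.sinh β))) := by
    rw [← Finset.sum_fiberwise_of_maps_to (fun j _ => mem_univ (eI j))
      (fun j => b (eI j) * (κ j * (β * ((b (eT j) - b (eI j) * Real.cosh β) / Real.sinh β))))]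
    refine Finset.sum_congr rfl fun v _ => ?_
    rw [Finset.mul_sum]
    exact Finset.sum_congr rfl fun j hj => by rw [(Finset.mem_filter.mp hj).2]
  calc ∑ v, b v * netLf n m eI eT κ β b v
      = (∑ v, b v * (∑ j ∈ univ.filter (fun j => eT j = v),
          κ j * (β * Real.sinh β * b (eI j)
            + β * Real.cosh β * ((b (eT j) - b (eI j) * Real.cosh β) / Real.sinh β))))
        - (∑ v, b v * (∑ j ∈ univ.filter (fun j => eI j = v),
            κ j * (β * ((b (eT j) - b (eI j) * Real.cosh β) / Real.sinh β))))
        + ∑ v, (if (univ.filter (fun j => eT j = v) = ∅ ∧ univ.filter (fun j => eI j = v) = ∅)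
            then b v ^ 2 else 0) := by
        rw [← Finset.sum_sub_distrib, ← Finset.sum_add_distrib]
        refine Finset.sum_congr rfl fun v _ => ?_
        simp only [netLf]
        split_ifs <;> ring
    _ = _ := by
        rw [hT, hI, ← Finset.sum_sub_distrib]
        congr 1
        refine Finset.sum_congr rfl fun j _ => ?_
        field_simp
        linear_combination (-(b (eT j) * κ j * β * b (eI j))) * (Real.cosh_sq_sub_sinh_sq β)

open Finset in
lemma netL_ker {n m : ℕ} (eI eT : Fin m → Fin n) {κ : Fin m → ℝ} (hκ : ∀ j, 0 < κ j)
    {β : ℝ} (hβ0 : 0 < β) (hch : 1 < Real.cosh β) (hsh : 0 < Real.sinh β)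
    (b : Fin n → ℝ) (hb : netL n m eI eT κ β b = 0) : b = 0 := by
  have hLf : ∀ v, netLf n m eI eT κ β b v = 0 := fun v => congrFun hb v
  have hdot : (∑ j, κ j * ((β / Real.sinh β)
          * ((Real.cosh β - 1) * (b (eI j)^2 + b (eT j)^2) + (b (eI j) - b (eT j))^2)))
        + ∑ v, (if (univ.filter (fun j => eT j = v) = ∅ ∧ univ.filter (fun j => eI j = v) = ∅)
            then b v ^ 2 else 0) = 0 := by
    rw [← netLf_dot eI eT κ hsh.ne' b]
    exact Finset.sum_eq_zero fun v _ => by rw [hLf v, mul_zero]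
  have hnn1 : ∀ j ∈ (univ : Finset (Fin m)), 0 ≤ κ j * ((β / Real.sinh β)
      * ((Real.cosh β - 1) * (b (eI j)^2 + b (eT j)^2) + (b (eI j) - b (eT j))^2)) := by
    intro j _
    have h1 : (0:ℝ) ≤ Real.cosh β - 1 := by linarith
    exact mul_nonneg (hκ j).le (mul_nonneg (div_nonneg hβ0.le hsh.le)
      (add_nonneg (mul_nonneg h1 (by positivity)) (sq_nonneg _)))
  have hnn2 : ∀ v ∈ (univ : Finset (Fin n)), 0 ≤ (if (univ.filter (fun j => eT j = v) = ∅
      ∧ univ.filter (fun j => eI j = v) = ∅) then b v ^ 2 else 0) := by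
    intro v _; split_ifs <;> positivity
  have hs1 : (∑ j, κ j * ((β / Real.sinh β)
      * ((Real.cosh β - 1) * (b (eI j)^2 + b (eT j)^2) + (b (eI j) - b (eT j))^2))) = 0 := by
    have := Finset.sum_nonneg hnn1
    have := Finset.sum_nonneg hnn2
    linarith
  have hs2 : (∑ v, (if (univ.filter (fun j => eT j = v) = ∅
      ∧ univ.filter (fun j => eI j = v) = ∅) then b v ^ 2 else 0)) = 0 := by
    have := Finset.sum_nonneg hnn1
    linarith
  have hedge : ∀ j, b (eI j) = 0 ∧ b (eT j) = 0 := by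
    intro j
    have h0 := (Finset.sum_eq_zero_iff_of_nonneg hnn1).mp hs1 j (mem_univ j)
    have hpos : 0 < κ j * (β / Real.sinh β) := mul_pos (hκ j) (div_pos hβ0 hsh)
    have hE : (Real.cosh β - 1) * (b (eI j)^2 + b (eT j)^2) + (b (eI j) - b (eT j))^2 = 0 := by
      by_contra hne
      have h2 : (0:ℝ) ≤ (Real.cosh β - 1) * (b (eI j)^2 + b (eT j)^2) + (b (eI j) - b (eT j))^2 := by
        have h1 : (0:ℝ) ≤ Real.cosh β - 1 := by linarith
        exact add_nonneg (mul_nonneg h1 (by positivity)) (sq_nonneg _)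
      have h3 : 0 < (Real.cosh β - 1) * (b (eI j)^2 + b (eT j)^2) + (b (eI j) - b (eT j))^2 :=
        lt_of_le_of_ne h2 (Ne.symm hne)
      nlinarith [mul_pos hpos h3, h0]
    have hsq : b (eI j)^2 + b (eT j)^2 = 0 := by nlinarith [sq_nonneg (b (eI j) - b (eT j))]
    constructor
    · have : b (eI j)^2 = 0 := by nlinarith [sq_nonneg (b (eI j)), sq_nonneg (b (eT j))]
      exact pow_eq_zero_iff (by norm_num) |>.mp this
    · have : b (eT j)^2 = 0 := by nlinarith [sq_nonneg (b (eI j)), sq_nonneg (b (eT j))]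
      exact pow_eq_zero_iff (by norm_num) |>.mp this
  funext v
  show b v = 0
  by_cases hTv : (univ.filter (fun j => eT j = v) : Finset (Fin m)) = ∅
  · by_cases hIv : (univ.filter (fun j => eI j = v) : Finset (Fin m)) = ∅
    · have h0 := (Finset.sum_eq_zero_iff_of_nonneg hnn2).mp hs2 v (mem_univ v)
      rw [if_pos ⟨hTv, hIv⟩] at h0
      exact pow_eq_zero_iff (by norm_num) |>.mp h0
    · obtain ⟨j, hj⟩ := Finset.nonempty_iff_ne_empty.mpr hIv
      rw [← (Finset.mem_filter.mp hj).2]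
      exact (hedge j).1
  · obtain ⟨j, hj⟩ := Finset.nonempty_iff_ne_empty.mpr hTv
    rw [← (Finset.mem_filter.mp hj).2]
    exact (hedge j).2


lemma network_unique {n m : ℕ} {eI eT : Fin m → Fin n} {κ : Fin m → ℝ} (hκ : ∀ j, 0 < κ j)
    {α : ℝ} (hα : 0 < α) {z w w1 w2 w' w1' w2' : Fin m → ℝ → ℝ}
    (h : IsNetworkSolution n m eI eT κ α z w w1 w2)
    (h' : IsNetworkSolution n m eI eT κ α z w' w1' w2') :
    ∀ j, ∀ x ∈ Set.Icc (0:ℝ) 1, w' j x = w j x := by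
  obtain ⟨hd1, hd2, _, ⟨b, hb⟩, hK, heq⟩ := h
  obtain ⟨hd1', hd2', _, ⟨b', hb'⟩, hK', heq'⟩ := h'
  set u : Fin m → ℝ → ℝ := fun j x => w' j x - w j x with hu_def
  set u1 : Fin m → ℝ → ℝ := fun j x => w1' j x - w1 j x with hu1_def
  have hu : ∀ j, ∀ x ∈ Set.Icc (0:ℝ) 1, HasDerivWithinAt (u j) (u1 j x) (Set.Icc 0 1) x :=
    fun j x hx => (hd1' j x hx).sub (hd1 j x hx)
  have hu1 : ∀ j, ∀ x ∈ Set.Icc (0:ℝ) 1,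
      HasDerivWithinAt (u1 j) (α * u j x) (Set.Icc 0 1) x := by
    intro j x hx
    have e : w2' j x - w2 j x = α * u j x := by
      have e1 := heq j x hx
      have e2 := heq' j x hx
      simp only [hu_def]
      linarith
    exact e ▸ (hd2' j x hx).sub (hd2 j x hx)
  set g : Fin m → ℝ → ℝ := fun j x => u j x * u1 j x with hg_def
  have hg : ∀ j, ∀ x ∈ Set.Icc (0:ℝ) 1,
      HasDerivWithinAt (g j) (u1 j x ^ 2 + α * u j x ^ 2) (Set.Icc 0 1) x := by
    intro j x hx
    have := (hu j x hx).mul (hu1 j x hx)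
    refine this.congr_deriv ?_
    ring
  have hmono : ∀ j, MonotoneOn (g j) (Set.Icc (0:ℝ) 1) := by
    intro j
    apply monotoneOn_of_deriv_nonneg (convex_Icc 0 1)
      (fun x hx => (hg j x hx).continuousWithinAt)
    · intro x hx
      rw [interior_Icc] at hx
      exact ((hg j x (Set.mem_Icc_of_Ioo hx)).hasDerivAt
        (Icc_mem_nhds hx.1 hx.2)).differentiableAt.differentiableWithinAt
    · intro x hx
      rw [interior_Icc] at hx
      rw [((hg j x (Set.mem_Icc_of_Ioo hx)).hasDerivAt (Icc_mem_nhds hx.1 hx.2)).deriv]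
      positivity
  have hKu : ∀ v : Fin n,
      ∑ j ∈ univ.filter (fun j => eT j = v), κ j * u1 j 1
        - ∑ j ∈ univ.filter (fun j => eI j = v), κ j * u1 j 0 = 0 := by
    intro v
    have h1 := hK v
    have h2 := hK' v
    simp only [hu1_def, mul_sub, Finset.sum_sub_distrib]
    linarith
  have hsum : ∑ j, κ j * (g j 1 - g j 0) = 0 := by
    have hTe : ∑ j, ((b' (eT j) - b (eT j)) * (κ j * u1 j 1))
        = ∑ v, (b' v - b v) * ∑ j ∈ univ.filter (fun j => eT j = v), κ j * u1 j 1 := by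
      rw [← Finset.sum_fiberwise_of_maps_to (fun j _ => mem_univ (eT j))
        (fun j => (b' (eT j) - b (eT j)) * (κ j * u1 j 1))]
      refine Finset.sum_congr rfl fun v _ => ?_
      rw [Finset.mul_sum]
      exact Finset.sum_congr rfl fun j hj => by rw [(Finset.mem_filter.mp hj).2]
    have hIe : ∑ j, ((b' (eI j) - b (eI j)) * (κ j * u1 j 0))
        = ∑ v, (b' v - b v) * ∑ j ∈ univ.filter (fun j => eI j = v), κ j * u1 j 0 := by
      rw [← Finset.sum_fiberwise_of_maps_to (fun j _ => mem_univ (eI j))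
        (fun j => (b' (eI j) - b (eI j)) * (κ j * u1 j 0))]
      refine Finset.sum_congr rfl fun v _ => ?_
      rw [Finset.mul_sum]
      exact Finset.sum_congr rfl fun j hj => by rw [(Finset.mem_filter.mp hj).2]
    calc ∑ j, κ j * (g j 1 - g j 0)
        = ∑ j, (((b' (eT j) - b (eT j)) * (κ j * u1 j 1))
            - ((b' (eI j) - b (eI j)) * (κ j * u1 j 0))) := by
          refine Finset.sum_congr rfl fun j _ => ?_
          simp only [hg_def, hu_def]
          rw [(hb j).1, (hb j).2, (hb' j).1, (hb' j).2]
          ring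
      _ = (∑ j, ((b' (eT j) - b (eT j)) * (κ j * u1 j 1)))
            - ∑ j, ((b' (eI j) - b (eI j)) * (κ j * u1 j 0)) := Finset.sum_sub_distrib _ _
      _ = ∑ v, (b' v - b v) * (∑ j ∈ univ.filter (fun j => eT j = v), κ j * u1 j 1
            - ∑ j ∈ univ.filter (fun j => eI j = v), κ j * u1 j 0) := by
          rw [hTe, hIe, ← Finset.sum_sub_distrib]
          exact Finset.sum_congr rfl fun v _ => by ring
      _ = 0 := Finset.sum_eq_zero fun v _ => by rw [hKu v, mul_zero]
  have hnn : ∀ j ∈ (univ : Finset (Fin m)), 0 ≤ κ j * (g j 1 - g j 0) := fun j _ =>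
    mul_nonneg (hκ j).le (sub_nonneg.mpr (hmono j (Set.left_mem_Icc.mpr zero_le_one)
      (Set.right_mem_Icc.mpr zero_le_one) zero_le_one))
  have hg10 : ∀ j, g j 1 = g j 0 := by
    intro j
    have h0 := (Finset.sum_eq_zero_iff_of_nonneg hnn).mp hsum j (mem_univ j)
    have := (hκ j).ne'
    rcases mul_eq_zero.mp h0 with h | h
    · exact absurd h this
    · linarith
  have hgconst : ∀ j, ∀ y ∈ Set.Icc (0:ℝ) 1, g j y = g j 0 := by
    intro j y hy
    refine le_antisymm ?_ (hmono j (Set.left_mem_Icc.mpr zero_le_one) hy hy.1)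
    calc g j y ≤ g j 1 := hmono j hy (Set.right_mem_Icc.mpr zero_le_one) hy.2
      _ = g j 0 := hg10 j
  intro j x hx
  have hc : HasDerivWithinAt (g j) 0 (Set.Icc (0:ℝ) 1) x :=
    (hasDerivWithinAt_const x _ (g j 0)).congr (fun y hy => hgconst j y hy) (hgconst j x hx)
  have h0 : u1 j x ^ 2 + α * u j x ^ 2 = 0 :=
    UniqueDiffWithinAt.eq_deriv _ (uniqueDiffOn_Icc zero_lt_one x hx) (hg j x hx) hc
  have hu2 : u j x ^ 2 = 0 := by
    nlinarith [sq_nonneg (u1 j x), sq_nonneg (u j x), mul_nonneg hα.le (sq_nonneg (u j x))]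
  have : u j x = 0 := pow_eq_zero_iff two_ne_zero |>.mp hu2
  simp only [hu_def] at this
  linarith


noncomputable def netd (n m : ℕ) (eI eT : Fin m → Fin n) (κ : Fin m → ℝ) (β : ℝ)
    (p q : Fin m → ℝ) (v : Fin n) : ℝ :=
  (∑ j ∈ univ.filter (fun j => eT j = v), κ j * (q j - β * Real.cosh β * p j / Real.sinh β))
  + ∑ j ∈ univ.filter (fun j => eI j = v), κ j * (β * p j / Real.sinh β)

/-- **Existence and uniqueness for the elliptic problem on a network.**
Let `α > 0` and let `z` be a function on a finite weighted network, continuous on each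
edge and continuous at the vertices. Then there is exactly one function `w` on the
network, twice continuously differentiable on each edge, continuous at the vertices,
satisfying the Kirchhoff condition at every vertex and `−w_j'' = z_j − α w_j` on every
edge. -/
theorem stmt_16 (n m : ℕ) (hm : 1 ≤ m) (eI eT : Fin m → Fin n) (hIT : ∀ j, eI j ≠ eT j)
    (κ : Fin m → ℝ) (hκ : ∀ j, 0 < κ j) (α : ℝ) (hα : 0 < α)
    (z : Fin m → ℝ → ℝ)
    (hzcont : ∀ j, ContinuousOn (z j) (Set.Icc 0 1))
    (bz : Fin n → ℝ) (hzb : ∀ j, z j 0 = bz (eI j) ∧ z j 1 = bz (eT j)) :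
    ∃ w w1 w2 : Fin m → ℝ → ℝ,
      IsNetworkSolution n m eI eT κ α z w w1 w2 ∧
      ∀ w' w1' w2' : Fin m → ℝ → ℝ,
        IsNetworkSolution n m eI eT κ α z w' w1' w2' →
        ∀ j, ∀ x ∈ Set.Icc (0:ℝ) 1, w' j x = w j x := by
  have hβ0 : 0 < Real.sqrt α := Real.sqrt_pos.mpr hα
  set β := Real.sqrt α with hβdef
  have hβ : β ≠ 0 := hβ0.ne'
  have hβ2 : β ^ 2 = α := Real.sq_sqrt hα.le
  have hsh : 0 < Real.sinh β := Real.sinh_pos_iff.mpr hβ0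
  have hsh' : Real.sinh β ≠ 0 := hsh.ne'
  have hch : 1 < Real.cosh β := Real.one_lt_cosh.mpr hβ
  set zc : Fin m → ℝ → ℝ :=
    fun j => Set.IccExtend zero_le_one ((Set.Icc (0:ℝ) 1).restrict (z j)) with hzcdef
  have hzcC : ∀ j, Continuous (zc j) :=
    fun j => Continuous.Icc_extend' (continuousOn_iff_continuous_restrict.mp (hzcont j))
  have hzceq : ∀ j, ∀ x ∈ Set.Icc (0:ℝ) 1, zc j x = z j x := by
    intro j x hx
    simp only [hzcdef]
    rw [Set.IccExtend_of_mem _ _ hx]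
    rfl
  set p : Fin m → ℝ := fun j => Pfun β (zc j) 1 with hpdef
  set q : Fin m → ℝ := fun j => Pfun' β (zc j) 1 with hqdef
  have hinj : Function.Injective (netL n m eI eT κ β) := by
    intro b1 b2 hb12
    have := netL_ker eI eT hκ hβ0 hch hsh (b1 - b2) (by rw [map_sub, hb12, sub_self])
    exact sub_eq_zero.mp this
  obtain ⟨b, hbdef⟩ := LinearMap.injective_iff_surjective.mp hinj
    (fun v => -(netd n m eI eT κ β p q v))
  have hLb : ∀ v, netLf n m eI eT κ β b v = -(netd n m eI eT κ β p q v) :=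
    fun v => congrFun hbdef v
  set c1 : Fin m → ℝ := fun j => b (eI j) with hc1def
  set c2 : Fin m → ℝ := fun j => (b (eT j) - b (eI j) * Real.cosh β - p j) / Real.sinh β
    with hc2def
  set W : Fin m → ℝ → ℝ :=
    fun j x => c1 j * Real.cosh (β*x) + c2 j * Real.sinh (β*x) + Pfun β (zc j) x with hWdef
  set W1 : Fin m → ℝ → ℝ :=
    fun j x => c1 j * (β * Real.sinh (β*x)) + c2 j * (β * Real.cosh (β*x)) + Pfun' β (zc j) x
    with hW1def
  set W2 : Fin m → ℝ → ℝ := fun j x => α * W j x - zc j x with hW2def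
  have hsol0 : IsNetworkSolution n m eI eT κ α z W W1 W2 := by
    refine ⟨?_, ?_, ?_, ?_, ?_, ?_⟩
    · intro j x hx
      exact ((((hasDerivAt_cosh_lin β x).const_mul (c1 j)).add
        ((hasDerivAt_sinh_lin β x).const_mul (c2 j))).add
        (hasDerivAt_Pfun hβ (hzcC j) x)).hasDerivWithinAt
    · intro j x hx
      have h1 : HasDerivAt (fun x => c1 j * (β * Real.sinh (β*x)))
          (c1 j * (β * (β * Real.cosh (β*x)))) x :=
        (((hasDerivAt_sinh_lin β x).const_mul β).const_mul (c1 j))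
      have h2 : HasDerivAt (fun x => c2 j * (β * Real.cosh (β*x)))
          (c2 j * (β * (β * Real.sinh (β*x)))) x :=
        (((hasDerivAt_cosh_lin β x).const_mul β).const_mul (c2 j))
      have h3 := hasDerivAt_Pfun' hβ (hzcC j) x
      refine ((h1.add h2).add h3).hasDerivWithinAt.congr_deriv (Eq.symm ?_)
      simp only [hW2def, hWdef]
      rw [← hβ2]
      ring
    · intro j
      have hpc : Continuous (Pfun β (zc j)) := by
        rw [continuous_iff_continuousAt]
        exact fun x => (hasDerivAt_Pfun hβ (hzcC j) x).continuousAt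
      have hwcont : Continuous (W j) := by
        simp only [hWdef]
        exact ((continuous_const.mul
          (Real.continuous_cosh.comp (continuous_const.mul continuous_id))).add
          (continuous_const.mul
            (Real.continuous_sinh.comp (continuous_const.mul continuous_id)))).add hpc
      exact (((continuous_const.mul hwcont).sub (hzcC j)).continuousOn)
    · refine ⟨b, fun j => ⟨?_, ?_⟩⟩
      · simp [hWdef, hc1def, Pfun_zero]
      · show c1 j * Real.cosh (β*1) + c2 j * Real.sinh (β*1) + Pfun β (zc j) 1 = b (eT j)
        rw [mul_one]
        simp only [hc1def, hc2def, ← hpdef]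
        field_simp
        rw [show Pfun β (zc j) 1 = p j from rfl]
        ring
    · intro v
      have hTsum : ∑ j ∈ univ.filter (fun j => eT j = v), κ j * W1 j 1
          = (∑ j ∈ univ.filter (fun j => eT j = v),
              κ j * (β * Real.sinh β * b (eI j)
                + β * Real.cosh β * ((b (eT j) - b (eI j) * Real.cosh β) / Real.sinh β)))
            + ∑ j ∈ univ.filter (fun j => eT j = v),
                κ j * (q j - β * Real.cosh β * p j / Real.sinh β) := by
        rw [← Finset.sum_add_distrib]
        refine Finset.sum_congr rfl fun j _ => ?_
        simp only [hW1def, mul_one, hc1def, hc2def, hqdef]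
        field_simp
        ring
      have hIsum : ∑ j ∈ univ.filter (fun j => eI j = v), κ j * W1 j 0
          = (∑ j ∈ univ.filter (fun j => eI j = v),
              κ j * (β * ((b (eT j) - b (eI j) * Real.cosh β) / Real.sinh β)))
            - ∑ j ∈ univ.filter (fun j => eI j = v),
                κ j * (β * p j / Real.sinh β) := by
        rw [← Finset.sum_sub_distrib]
        refine Finset.sum_congr rfl fun j _ => ?_
        simp only [hW1def, mul_zero, Real.sinh_zero, Real.cosh_zero, Pfun'_zero,
          mul_one, hc2def]
        field_simp
        ring
      have hLv := hLb v
      simp only [netLf, netd] at hLv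
      have hind : (if (univ.filter (fun j => eT j = v) = ∅
          ∧ univ.filter (fun j => eI j = v) = ∅) then b v else 0) = 0 := by
        by_cases hc : (univ.filter (fun j => eT j = v) = ∅
            ∧ univ.filter (fun j => eI j = v) = ∅)
        · rw [if_pos hc]
          rw [hc.1, hc.2] at hLv
          simpa using hLv
        · rw [if_neg hc]
      rw [hind] at hLv
      rw [hTsum, hIsum]
      linarith
    · intro j x hx
      simp only [hW2def]
      rw [hzceq j x hx]
      ring
  exact ⟨W, W1, W2, hsol0, fun w' w1' w2' h' => network_unique hκ hα hsol0 h'⟩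
end
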